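/- arXiv:2507.11596 — 10 statements merged into one kernel-verified Lean document; each statement's English description precedes it below -/
import Mathlib

section
/- Let k ≥ 2 and n ≥ 3 be integers, and set q = q_{n,k} and r = r_{n,k}. Then the coefficient of x^j in 𝓕_{n,k}(x) is zero for every j < r, and the coefficient of x^r in 𝓕_{n,k}(x) equals the binomial coefficient C(q + r, r). In other words, the lowest term of 𝓕_{n,k}(x) is C(q+r, r)·x^r. -/
open Polynomial

private lemma fib_hockey (a : ℕ) : ∀ r : ℕ,
    ∑ j ∈ Finset.range (r+1), (a+j).choose j = (a+r+1).choose r := by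
  intro r
  induction r with
  | zero => simp
  | succ r ih =>
    rw [Finset.sum_range_succ, ih, show a+(r+1)+1 = (a+r+1)+1 from by ring,
      show a+(r+1) = a+r+1 from by ring, Nat.choose_succ_succ (a+r+1) r, Nat.add_comm]

private lemma fib_modlemma (k t : ℕ) (hk : 2 ≤ k) : (k-1)*(t+1) % k = k - 1 - t % k := by
  obtain ⟨k', rfl⟩ : ∃ k', k = k' + 2 := ⟨k - 2, by omega⟩
  obtain ⟨s, q, hsq, hslt⟩ : ∃ s q, t = (k'+2)*q + s ∧ s < k'+2 :=
    ⟨t % (k'+2), t / (k'+2), (Nat.div_add_mod t (k'+2)).symm, Nat.mod_lt _ (by omega)⟩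
  have hmod : t % (k'+2) = s := by rw [hsq, Nat.mul_add_mod, Nat.mod_eq_of_lt hslt]
  rw [show k'+2-1 = k'+1 from by omega, hmod, hsq]
  have h1 : (k'+1)*((k'+2)*q + s+1) = (k'+2)*((k'+1)*q) + (k'+1)*(s+1) := by ring
  rw [h1, Nat.mul_add_mod]
  have h2 : (k'+1)*(s+1) = (k'+2)*s + (k'+1 - s) := by
    zify [show s ≤ k'+1 from by omega]; ring
  rw [h2, Nat.mul_add_mod, Nat.mod_eq_of_lt (by omega)]

/-- For `n ≥ 3`, with `q = ⌊(n-2)/k⌋` and `r = ((k-1)(n-1)) mod k`,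
the lowest term of the `k`-generalized Fibonacci polynomial `F n` is `C(q+r, r) · x^r`. -/
theorem fib_poly_lowest_term_pos (k : ℕ) (hk : 2 ≤ k)
    (F : ℤ → Polynomial ℤ)
    (hrec : ∀ n : ℤ, F n = ∑ i ∈ Finset.range k, X ^ (k - 1 - i) * F (n - 1 - (i : ℤ)))
    (hF1 : F 1 = 1)
    (hF0 : ∀ m : ℕ, m ≤ k - 2 → F (-(m : ℤ)) = 0)
    (n : ℤ) (hn : 3 ≤ n) (q r : ℕ)
    (hq : q = (n - 2).toNat / k)
    (hr : r = ((k - 1) * (n - 1).toNat) % k) :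
    (∀ j : ℕ, j < r → (F n).coeff j = 0) ∧
    (F n).coeff r = ((q + r).choose r : ℤ) := by
  have main : ∀ M : ℕ,
      (∀ j : ℕ, j < ((k-1)*M) % k → (F ((M:ℤ)+1)).coeff j = 0) ∧
      (F ((M:ℤ)+1)).coeff (((k-1)*M) % k)
        = (((M-1)/k + ((k-1)*M) % k).choose (((k-1)*M) % k) : ℤ) := by
    intro M
    induction M using Nat.strong_induction_on with
    | _ M IH =>
      obtain _ | N := M
      · -- M = 0 : F 1 = 1
        constructor
        · intro j hj; simp at hj
        · norm_num [hF1]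
      · -- M = N + 1 : about F (N+2)
        have harg : ((N+1:ℕ):ℤ) + 1 = (N:ℤ)+1+1 := by push_cast; ring
        rw [harg]
        obtain ⟨s, q', hsk, hNqs⟩ : ∃ s q', s < k ∧ N = k * q' + s :=
          ⟨N % k, N / k, Nat.mod_lt _ (by omega), (Nat.div_add_mod N k).symm⟩
        obtain ⟨r', hrdef⟩ : ∃ r', r' = k - 1 - s := ⟨_, rfl⟩
        have hkq : 1 ≤ q' → k ≤ k * q' := by
          intro h
          calc k = k * 1 := by ring
          _ ≤ k * q' := Nat.mul_le_mul_left k h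
        have hmod : N % k = s := by rw [hNqs, Nat.mul_add_mod, Nat.mod_eq_of_lt hsk]
        have hdiv : N / k = q' := by
          rw [hNqs, Nat.mul_add_div (by omega : 0 < k), Nat.div_eq_of_lt hsk, Nat.add_zero]
        have hR : ((k-1)*(N+1)) % k = r' := by rw [fib_modlemma k N hk, hmod, hrdef]
        have hQ : (N+1-1)/k = q' := by rw [Nat.add_sub_cancel, hdiv]
        rw [hR, hQ]
        -- the coefficient formula
        have hcoeff : ∀ j : ℕ, (F ((N:ℤ)+1+1)).coeff j =
            ∑ i ∈ Finset.range k,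
              (if k-1-i ≤ j then (F ((N:ℤ)+1-i)).coeff (j - (k-1-i)) else 0) := by
          intro j
          rw [hrec ((N:ℤ)+1+1), Polynomial.finset_sum_coeff]
          refine Finset.sum_congr rfl fun i _ => ?_
          rw [show (N:ℤ)+1+1-1-(i:ℤ) = (N:ℤ)+1-i from by ring, mul_comm,
            Polynomial.coeff_mul_X_pow']
        have hFz : ∀ i : ℕ, i < k → N < i → F ((N:ℤ)+1-i) = 0 := by
          intro i hik hNi
          have h : ((N:ℤ)+1-i) = -(((i-N-1:ℕ)):ℤ) := by omega
          rw [h]; exact hF0 _ (by omega)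
        have hFcast : ∀ i : ℕ, i ≤ N → ((N:ℤ)+1-i) = ((N-i:ℕ):ℤ)+1 := by
          intro i h; omega
        -- key index computations, for s ≤ i < k with q' ≥ 1
        have hkey : ∀ i : ℕ, i < k → s ≤ i → 1 ≤ q' →
            ((k-1)*(N-i)) % k = i - s ∧ (N-i-1)/k = q'-1 := by
          intro i hik hsi hq1
          have hkk := hkq hq1
          have hiN : i < N := by omega
          have key : N - 1 - i = k*(q'-1) + (k-1-(i-s)) := by
            rw [Nat.mul_sub k q' 1, Nat.mul_one]
            omega
          constructor
          · rw [show N - i = (N-1-i) + 1 from by omega, fib_modlemma k _ hk, key,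
              Nat.mul_add_mod, Nat.mod_eq_of_lt (by omega)]
            omega
          · rw [show N-i-1 = N-1-i from by omega, key,
              Nat.mul_add_div (by omega : 0 < k), Nat.div_eq_of_lt (by omega)]
            omega
        constructor
        · -- vanishing below r'
          intro j hj
          rw [hcoeff j]
          apply Finset.sum_eq_zero
          intro i hi
          simp only [Finset.mem_range] at hi
          split_ifs with hle
          · have hsi : s < i := by omega
            by_cases hiN : i ≤ N
            · have hiN' : i < N := by
                rcases eq_or_lt_of_le hiN with h | h
                · exfalso
                  rcases Nat.eq_zero_or_pos q' with h0 | h1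
                  · rw [h0, Nat.mul_zero, Nat.zero_add] at hNqs; omega
                  · have := hkq h1; omega
                · exact h
              have hq1 : 1 ≤ q' := by
                rcases Nat.eq_zero_or_pos q' with h0 | h1
                · rw [h0, Nat.mul_zero, Nat.zero_add] at hNqs; omega
                · exact h1
              obtain ⟨hRi, -⟩ := hkey i hi hsi.le hq1
              rw [hFcast i hiN]
              exact (IH (N-i) (by omega)).1 (j - (k-1-i)) (by rw [hRi]; omega)
            · rw [hFz i hi (by omega)]; simp
          · rfl
        · -- value at r'
          rw [hcoeff r']
          have hsub : Finset.Ico s k ⊆ Finset.range k := by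
            intro x hx; simp only [Finset.mem_Ico, Finset.mem_range] at *; omega
          have hzero : ∀ x ∈ Finset.range k, x ∉ Finset.Ico s k →
              (if k-1-x ≤ r' then (F ((N:ℤ)+1-x)).coeff (r' - (k-1-x)) else 0) = 0 := by
            intro x hx hx'
            simp only [Finset.mem_range] at hx
            simp only [Finset.mem_Ico, not_and, not_lt] at hx'
            have hxs : x < s := by
              rcases Nat.lt_or_ge x s with h | h
              · exact h
              · exact absurd (hx' h) (by omega)
            rw [if_neg]; omega
          rw [← Finset.sum_subset hsub hzero, Finset.sum_Ico_eq_sum_range,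
            show k - s = r' + 1 from by omega]
          rcases Nat.eq_zero_or_pos q' with hq0 | hq1
          · -- q' = 0 : N = s, only the i = s term survives, giving 1
            have hNs : N = s := by rw [hq0, Nat.mul_zero, Nat.zero_add] at hNqs; exact hNqs
            have hzero2 : ∀ j ∈ Finset.range (r'+1), j ≠ 0 →
                (if k-1-(s+j) ≤ r' then
                  (F ((N:ℤ)+1-((s+j:ℕ):ℤ))).coeff (r' - (k-1-(s+j))) else 0) = 0 := by
              intro j hj hj0
              simp only [Finset.mem_range] at hj
              rw [hFz (s+j) (by omega) (by omega)]
              simp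
            rw [Finset.sum_eq_single_of_mem 0 (Finset.mem_range.mpr (by omega)) hzero2,
              if_pos (by omega), show ((N:ℤ)+1-((s+0:ℕ):ℤ)) = 1 from by omega, hF1,
              show r' - (k-1-(s+0)) = 0 from by omega]
            simp [hq0]
          · -- q' ≥ 1 : hockey stick
            have heach : ∀ j ∈ Finset.range (r'+1),
                (if k-1-(s+j) ≤ r' then
                  (F ((N:ℤ)+1-((s+j:ℕ):ℤ))).coeff (r' - (k-1-(s+j))) else 0)
                  = ((q'-1+j).choose j : ℤ) := by
              intro j hj
              simp only [Finset.mem_range] at hj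
              have hik : s + j < k := by omega
              have hkk := hkq hq1
              have hiN : s + j ≤ N := by omega
              obtain ⟨hRi, hQi⟩ := hkey (s+j) hik (by omega) hq1
              rw [if_pos (by omega), hFcast (s+j) hiN,
                show r' - (k-1-(s+j)) = j from by omega]
              have h2 := (IH (N-(s+j)) (by omega)).2
              rw [hRi, hQi, show s + j - s = j from by omega] at h2
              exact h2
            refine (Finset.sum_congr rfl heach).trans ?_
            rw [← Nat.cast_sum]
            congr 1
            rw [fib_hockey (q'-1) r']
            congr 1
            omega
  -- deduce the theorem from `main`
  obtain ⟨m, hm⟩ : ∃ m : ℕ, n = (m:ℤ) + 1 := ⟨(n-1).toNat, by omega⟩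
  have hm2 : 2 ≤ m := by omega
  have hr' : r = ((k-1)*m) % k := by rw [hr]; congr 2; omega
  have hq' : q = (m-1)/k := by rw [hq]; congr 1; omega
  rw [hm, hr', hq']
  exact main m
end

section
/- Let k ≥ 2 be an integer and let n ≤ 0 be an integer. The k-generalized Fibonacci polynomial 𝓕_{n,k} is the zero polynomial if and only if q_{n,k} < r_{n,k}. -/
open Polynomial

noncomputable def Uu (k : ℕ) : PowerSeries (Polynomial ℤ) :=
  PowerSeries.C ((1 + X ^ k) : Polynomial ℤ) - PowerSeries.C (X : Polynomial ℤ) * PowerSeries.X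

lemma coeff_Uu_pow (k i e : ℕ) :
    PowerSeries.coeff e (Uu k ^ i)
      = (i.choose e : Polynomial ℤ) * ((1 + X ^ k) ^ (i - e) * (-X) ^ e) := by
  have hU : Uu k = PowerSeries.C ((-X) : Polynomial ℤ) * PowerSeries.X
      + PowerSeries.C ((1 + X ^ k) : Polynomial ℤ) := by
    rw [Uu, map_neg]; ring
  have hexp : Uu k ^ i = ∑ s ∈ Finset.range (i + 1),
      PowerSeries.C ((-X) ^ s * (1 + X ^ k) ^ (i - s) * (i.choose s : Polynomial ℤ))
        * PowerSeries.X ^ s := by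
    rw [hU, add_pow]
    refine Finset.sum_congr rfl fun s _ => ?_
    rw [mul_pow, ← map_pow, ← map_pow, map_mul, map_mul]
    rw [map_natCast]
    ring
  rw [hexp, map_sum]
  simp only [PowerSeries.coeff_C_mul_X_pow]
  rw [Finset.sum_ite_eq (Finset.range (i + 1)) e]
  by_cases h : e ∈ Finset.range (i + 1)
  · rw [if_pos h]; ring
  · rw [if_neg h]
    have : i < e := by simpa using Nat.lt_of_succ_le (by simpa using h)
    rw [Nat.choose_eq_zero_of_lt this]
    simp

lemma coeff_term (k i e : ℕ) :
    PowerSeries.coeff e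
        ((1 - PowerSeries.C (X : Polynomial ℤ) * PowerSeries.X) * Uu k ^ i)
      = (i.choose e : Polynomial ℤ) * ((1 + X ^ k) ^ (i - e) * (-X) ^ e)
        - (if e = 0 then 0 else
            X * ((i.choose (e-1) : Polynomial ℤ) * ((1 + X ^ k) ^ (i - (e-1)) * (-X) ^ (e-1)))) := by
  have : (1 - PowerSeries.C (X : Polynomial ℤ) * PowerSeries.X) * Uu k ^ i
      = Uu k ^ i - PowerSeries.C (X : Polynomial ℤ) * (PowerSeries.X * Uu k ^ i) := by ring
  rw [this, map_sub, coeff_Uu_pow, PowerSeries.coeff_C_mul]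
  cases e with
  | zero => simp [PowerSeries.coeff_zero_X_mul]
  | succ e' =>
    rw [PowerSeries.coeff_succ_X_mul, coeff_Uu_pow]
    simp only [Nat.succ_ne_zero, if_false, Nat.succ_sub_one]

lemma coeff_zero_one_add_pow (s t : ℕ) (hs : s ≠ 0) :
    ((1 + (X : Polynomial ℤ) ^ s) ^ t).coeff 0 = 1 := by
  rw [Polynomial.coeff_zero_eq_eval_zero]
  simp [zero_pow hs]


set_option maxRecDepth 8000 in
set_option maxHeartbeats 1000000 in
/-- For `n ≤ 0`, with `q = ⌊(|n|+1)/k⌋` and `r = (|n|+1) mod k`,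
the `k`-generalized Fibonacci polynomial `F n` is the zero polynomial iff `q < r`. -/
theorem fib_poly_vanishes_iff (k : ℕ) (hk : 2 ≤ k)
    (F : ℤ → Polynomial ℤ)
    (hrec : ∀ n : ℤ, F n = ∑ i ∈ Finset.range k, X ^ (k - 1 - i) * F (n - 1 - (i : ℤ)))
    (hF1 : F 1 = 1)
    (hF0 : ∀ m : ℕ, m ≤ k - 2 → F (-(m : ℤ)) = 0)
    (n : ℤ) (hn : n ≤ 0) (q r : ℕ)
    (hq : q = ((-n).toNat + 1) / k)
    (hr : r = ((-n).toNat + 1) % k) :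
    F n = 0 ↔ q < r := by
  obtain ⟨K, rfl⟩ : ∃ K, k = K + 1 := ⟨k - 1, by omega⟩
  have hK1 : 1 ≤ K := by omega
  simp only [Nat.add_sub_cancel] at hrec
  set m : ℕ := (-n).toNat with hm
  have hnm : n = -(m : ℤ) := by
    have := Int.toNat_of_nonneg (neg_nonneg.mpr hn)
    omega
  set H : ℕ → Polynomial ℤ := fun j => F (-(j : ℤ)) with hH
  have hFn : F n = H m := by rw [hnm]
  have hmqr : m + 1 = (K+1) * q + r := by
    rw [hq, hr]; exact (Nat.div_add_mod (m+1) (K+1)).symm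
  have hrk : r < K + 1 := by rw [hr]; exact Nat.mod_lt _ (by omega)
  clear_value m
  -- basic values of H
  have hH0 : ∀ j, j < K → H j = 0 := fun j hj => hF0 j (by omega)
  have hHk1 : H K = 1 := by
    have h := hrec 1
    rw [hF1, Finset.sum_range_succ] at h
    have h1 : ∀ i : ℕ, (1:ℤ) - 1 - (i:ℤ) = -((i : ℕ) : ℤ) := by intro i; push_cast; ring
    simp only [h1] at h
    rw [Nat.sub_self, pow_zero, one_mul] at h
    have hz : ∑ i ∈ Finset.range K, X ^ (K - i) * F (-(i:ℤ)) = 0 := by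
      refine Finset.sum_eq_zero fun i hi => ?_
      rw [hF0 i (by simp at hi; omega), mul_zero]
    rw [hz, zero_add] at h
    exact h.symm
  -- recurrence for H
  have hHrec : ∀ j : ℕ, H (j + (K+1))
      = H j - ∑ i ∈ Finset.range K, X ^ (K-i) * H (j+1+i) := by
    intro j
    have h := hrec (-(j:ℤ))
    rw [Finset.sum_range_succ] at h
    have h1 : ∀ i : ℕ, -(j:ℤ) - 1 - (i:ℤ) = -(((j+1+i : ℕ)) : ℤ) := by intro i; push_cast; ring
    simp only [h1] at h
    rw [Nat.sub_self, pow_zero, one_mul] at h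
    have h2 : j + 1 + K = j + (K+1) := by omega
    rw [h2] at h
    simp only [hH]
    rw [h]; ring
  have hHk : H (K+1) = -X := by
    have h := hHrec 0
    rw [hH0 0 (by omega)] at h
    obtain ⟨K', rfl⟩ : ∃ K', K = K' + 1 := ⟨K - 1, by omega⟩
    rw [Finset.sum_range_succ] at h
    have hz : ∑ i ∈ Finset.range K', X ^ (K'+1-i) * H (0+1+i) = 0 := by
      refine Finset.sum_eq_zero fun i hi => ?_
      rw [hH0 (0+1+i) (by simp at hi; omega), mul_zero]
    rw [hz, zero_add] at h
    rw [show K'+1-K' = 1 from by omega, show 0+1+K' = K'+1 from by omega,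
      hHk1, pow_one, mul_one, zero_sub] at h
    simpa using h
  -- combined recurrence
  have hH2 : ∀ j : ℕ, H (j + (K+2)) = (1 + X ^ (K+1)) * H (j+1) - X * H j := by
    intro j
    have A := hHrec (j+1)
    have B := hHrec j
    have hA1 : j + 1 + (K+1) = j + (K+2) := by omega
    rw [hA1] at A
    have h1 : ∀ i : ℕ, j + 1 + 1 + i = j + 2 + i := by omega
    simp only [h1] at A
    -- eq1 : X * S₁ = X^(K+1) * H (j+1) + T
    have eq1 : X * (∑ i ∈ Finset.range K, X ^ (K-i) * H (j+1+i))
        = X ^ (K+1) * H (j+1) + ∑ i ∈ Finset.range (K-1), X ^ (K-i) * H (j+2+i) := by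
      rw [Finset.mul_sum]
      have hc : ∀ i ∈ Finset.range K, X * (X ^ (K-i) * H (j+1+i))
          = X ^ (K+1-i) * H (j+1+i) := by
        intro i hi
        simp only [Finset.mem_range] at hi
        rw [← mul_assoc, ← pow_succ']
        congr 2
        omega
      rw [Finset.sum_congr rfl hc]
      have hKr : ∑ i ∈ Finset.range K, X ^ (K+1-i) * H (j+1+i)
          = ∑ i ∈ Finset.range ((K-1)+1), X ^ (K+1-i) * H (j+1+i) :=
        Finset.sum_congr (by rw [Nat.sub_add_cancel hK1]) (fun i _ => rfl)
      rw [hKr, Finset.sum_range_succ' (fun i => X ^ (K+1-i) * H (j+1+i)) (K-1)]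
      rw [add_comm]
      congr 1
      · refine Finset.sum_congr rfl fun i hi => ?_
        simp only [Finset.mem_range] at hi
        rw [show K+1-(i+1) = K-i from by omega, show j+1+(i+1) = j+2+i from by omega]
    -- eq2 : S₂ = T + X * H (j + (K+1))
    have eq2 : (∑ i ∈ Finset.range K, X ^ (K-i) * H (j+2+i))
        = (∑ i ∈ Finset.range (K-1), X ^ (K-i) * H (j+2+i)) + X * H (j+(K+1)) := by
      have hKr : ∑ i ∈ Finset.range K, X ^ (K-i) * H (j+2+i)
          = ∑ i ∈ Finset.range ((K-1)+1), X ^ (K-i) * H (j+2+i) :=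
        Finset.sum_congr (by rw [Nat.sub_add_cancel hK1]) (fun i _ => rfl)
      rw [hKr, Finset.sum_range_succ]
      congr 1
      rw [show K-(K-1) = 1 from by omega, show j+2+(K-1) = j+(K+1) from by omega, pow_one]
    rw [eq2] at A
    linear_combination A - X * B + eq1
  -- power series
  set G : PowerSeries (Polynomial ℤ) := PowerSeries.mk H with hG
  have hUuG : ∀ e : ℕ, PowerSeries.coeff e (Uu (K+1) * G)
      = (1 + X ^ (K+1)) * H e - X * (if e = 0 then 0 else H (e-1)) := by
    intro e
    rw [Uu, sub_mul, map_sub, PowerSeries.coeff_C_mul, hG, PowerSeries.coeff_mk]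
    rw [mul_assoc, PowerSeries.coeff_C_mul]
    cases e with
    | zero => simp [PowerSeries.coeff_zero_X_mul]
    | succ e' => rw [PowerSeries.coeff_succ_X_mul, PowerSeries.coeff_mk]; simp
  have key : G = PowerSeries.X ^ K * (1 - PowerSeries.C (X : Polynomial ℤ) * PowerSeries.X)
      + PowerSeries.X ^ (K+1) * (Uu (K+1) * G) := by
    ext N
    rw [map_add, PowerSeries.coeff_X_pow_mul', PowerSeries.coeff_X_pow_mul']
    rw [hG, PowerSeries.coeff_mk]
    have hcoeff1 : ∀ e : ℕ, PowerSeries.coeff e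
        (1 - PowerSeries.C (X : Polynomial ℤ) * PowerSeries.X)
        = (if e = 0 then 1 else 0) - (if e = 1 then X else 0) := by
      intro e
      rw [map_sub, PowerSeries.coeff_one, PowerSeries.coeff_C_mul, PowerSeries.coeff_X]
      split_ifs <;> simp
    by_cases h1 : N < K
    · rw [if_neg (by omega), if_neg (by omega), hH0 N h1, add_zero]
    · by_cases h2 : N = K
      · subst h2
        rw [if_pos le_rfl, if_neg (by omega), Nat.sub_self, hcoeff1, hHk1]
        simp
      · by_cases h3 : N = K + 1
        · subst h3
          rw [if_pos (by omega), if_pos le_rfl, Nat.sub_self, hcoeff1, hUuG, hHk]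
          rw [hH0 0 (by omega)]
          have : K + 1 - K = 1 := by omega
          rw [this]
          simp
        · -- N ≥ K + 2
          obtain ⟨j, rfl⟩ : ∃ j, N = j + (K + 2) := ⟨N - (K+2), by omega⟩
          rw [if_pos (by omega), if_pos (by omega), hcoeff1, hUuG]
          have e1 : j + (K+2) - K = j + 2 := by omega
          have e2 : j + (K+2) - (K+1) = j + 1 := by omega
          rw [e1, e2]
          rw [if_neg (by omega)]
          have e3 : j + 1 - 1 = j := by omega
          rw [e3, hH2 j]
          simp
  have iter : ∀ j : ℕ, G = (∑ i ∈ Finset.range j,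
        PowerSeries.X ^ (i*(K+1) + K) *
          ((1 - PowerSeries.C (X : Polynomial ℤ) * PowerSeries.X) * Uu (K+1) ^ i))
      + PowerSeries.X ^ (j*(K+1)) * (Uu (K+1) ^ j * G) := by
    intro j
    induction j with
    | zero => simp
    | succ j ih =>
      calc G = _ + PowerSeries.X ^ (j*(K+1)) * (Uu (K+1) ^ j * G) := ih
        _ = _ := by
          conv_lhs => rw [key]
          rw [Finset.sum_range_succ]
          rw [show (j+1)*(K+1) = j*(K+1) + (K+1) from by ring, pow_add,
            show j*(K+1) + K = j*(K+1) + K from rfl, pow_add]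
          ring
  have hHm : ∀ M : ℕ, H M = ∑ i ∈ Finset.range (M+1),
      (if i*(K+1) + K ≤ M then
        PowerSeries.coeff (M - (i*(K+1) + K))
          ((1 - PowerSeries.C (X : Polynomial ℤ) * PowerSeries.X) * Uu (K+1) ^ i)
       else 0) := by
    intro M
    have h1 : H M = PowerSeries.coeff M G := by rw [hG, PowerSeries.coeff_mk]
    rw [h1]
    conv_lhs => rw [iter (M+1)]
    rw [map_add, map_sum]
    have htail : PowerSeries.coeff M
        (PowerSeries.X ^ ((M+1)*(K+1)) * (Uu (K+1) ^ (M+1) * G)) = 0 := by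
      rw [PowerSeries.coeff_X_pow_mul']
      have h2 : M + 1 ≤ (M+1)*(K+1) := Nat.le_mul_of_pos_right _ (by omega)
      rw [if_neg (by omega)]
    rw [htail, add_zero]
    exact Finset.sum_congr rfl fun i _ => PowerSeries.coeff_X_pow_mul' _ _ _
  -- the x^r coefficient of H m when r ≤ q
  have hq1 : ¬ q < r → (H m).coeff r = (-1:ℤ) ^ r * (q.choose r : ℤ) := by
    intro hge
    push_neg at hge
    rcases Nat.eq_zero_or_pos q with h0 | hq0
    · exfalso; subst h0; simp at hmqr; omega
    obtain ⟨q', rfl⟩ : ∃ q', q = q' + 1 := ⟨q - 1, by omega⟩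
    have hexp1 : (K+1) * (q'+1) = (K+1)*q' + K + 1 := by ring
    have hexp2 : q' * (K+1) = (K+1) * q' := by ring
    rw [hHm m, Polynomial.finset_sum_coeff]
    rw [Finset.sum_eq_single q']
    · rw [if_pos (by omega)]
      have he : m - (q'*(K+1) + K) = r := by omega
      rw [he, coeff_term]
      rcases Nat.eq_zero_or_pos r with hr0 | hrpos
      · subst hr0
        rw [if_pos rfl, sub_zero]
        simp only [Nat.choose_zero_right, Nat.cast_one, one_mul, pow_zero, mul_one]
        rw [coeff_zero_one_add_pow _ _ (by omega)]
      · obtain ⟨r'', rfl⟩ : ∃ r'', r = r'' + 1 := ⟨r - 1, by omega⟩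
        rw [if_neg (by omega)]
        have hsub : r'' + 1 - 1 = r'' := by omega
        rw [hsub]
        have htrans : (q'.choose (r''+1) : Polynomial ℤ) * ((1 + X ^ (K+1)) ^ (q' - (r''+1)) * (-X) ^ (r''+1))
            - X * ((q'.choose r'' : Polynomial ℤ) * ((1 + X ^ (K+1)) ^ (q' - r'') * (-X) ^ r''))
            = (((-1:Polynomial ℤ))^(r''+1) * ((q'.choose (r''+1) : Polynomial ℤ) * (1 + X ^ (K+1)) ^ (q' - (r''+1))
                + (q'.choose r'' : Polynomial ℤ) * (1 + X ^ (K+1)) ^ (q' - r''))) * X ^ (r''+1) := by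
          ring
        rw [htrans, Polynomial.coeff_mul_X_pow', if_pos le_rfl, Nat.sub_self]
        rw [Polynomial.coeff_zero_eq_eval_zero]
        simp only [eval_mul, eval_add, eval_pow, eval_neg, eval_one, eval_natCast, eval_X]
        rw [zero_pow (show K+1 ≠ 0 by omega)]
        rw [Nat.choose_succ_succ (q') (r'')]
        push_cast
        ring
    · intro i hi hne
      by_cases hiq : q' + 1 ≤ i
      · have h1 : (q'+1)*(K+1) ≤ i*(K+1) := Nat.mul_le_mul_right _ hiq
        have h2 : (q'+1)*(K+1) = (K+1)*q' + K + 1 := by ring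
        rw [if_neg (by omega)]
        simp
      · have hiq' : i < q' := by omega
        set d : ℕ := q' - i with hd
        have hdq : q' = i + d := by omega
        have hexp3 : (K+1)*q' = (K+1)*i + (K+1)*d := by rw [hdq]; ring
        have hexp4 : i*(K+1) = (K+1)*i := by ring
        have hexp5 : d*(K+1) = (K+1)*d := by ring
        have hd1 : 1 ≤ d := by omega
        have hdK : K + 1 ≤ (K+1)*d := Nat.le_mul_of_pos_right _ (by omega)
        rw [if_pos (by omega)]
        have he : m - (i*(K+1) + K) = d*(K+1) + r := by omega
        rw [he, coeff_term]
        obtain ⟨e'', hee⟩ : ∃ t, d*(K+1) + r = t + 1 := ⟨d*(K+1) + r - 1, by omega⟩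
        have hre : r < e'' + 1 := by omega
        rw [hee]
        rw [if_neg (by omega)]
        have hsub : e'' + 1 - 1 = e'' := by omega
        rw [hsub]
        have htrans : (i.choose (e''+1) : Polynomial ℤ) * ((1 + X ^ (K+1)) ^ (i - (e''+1)) * (-X) ^ (e''+1))
            - X * ((i.choose e'' : Polynomial ℤ) * ((1 + X ^ (K+1)) ^ (i - e'') * (-X) ^ e''))
            = (((-1:Polynomial ℤ))^(e''+1) * ((i.choose (e''+1) : Polynomial ℤ) * (1 + X ^ (K+1)) ^ (i - (e''+1))
                + (i.choose e'' : Polynomial ℤ) * (1 + X ^ (K+1)) ^ (i - e''))) * X ^ (e''+1) := by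
          ring
        rw [htrans, Polynomial.coeff_mul_X_pow', if_neg (by omega)]
    · intro hmem
      exfalso
      apply hmem
      simp only [Finset.mem_range]
      have h5 : q' ≤ q' * (K+1) := Nat.le_mul_of_pos_right _ (by omega)
      omega
  by_cases hqr : q < r
  · refine iff_of_true ?_ hqr
    rw [hFn, hHm m]
    refine Finset.sum_eq_zero fun i _ => ?_
    by_cases hiq : q ≤ i
    · have h1 : q * (K+1) ≤ i * (K+1) := Nat.mul_le_mul_right _ hiq
      have h2 : q * (K+1) = (K+1) * q := by ring
      rw [if_neg (by omega)]
    · push_neg at hiq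
      set d : ℕ := q - 1 - i with hd
      have hqi : q = i + 1 + d := by omega
      have hkq : (K+1) * q = (K+1) * i + (K+1) + (K+1) * d := by rw [hqi]; ring
      have hik : i*(K+1) = (K+1)*i := by ring
      have hdk : d*(K+1) = (K+1)*d := by ring
      have hle : i*(K+1) + K ≤ m := by omega
      have he : m - (i*(K+1) + K) = d*(K+1) + r := by omega
      rw [if_pos hle, he, coeff_term]
      have h1 : i < d*(K+1) + r := by omega
      have h2 : i < d*(K+1) + r - 1 := by omega
      rw [Nat.choose_eq_zero_of_lt h1, Nat.choose_eq_zero_of_lt h2]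
      rw [if_neg (by omega)]
      push_cast
      ring
  · refine iff_of_false ?_ hqr
    intro hzero
    have hc := hq1 hqr
    rw [hFn] at hzero
    rw [hzero, Polynomial.coeff_zero] at hc
    have hch : 0 < q.choose r := Nat.choose_pos (by omega)
    have : ((-1:ℤ) ^ r * (q.choose r : ℤ)) ≠ 0 := by
      apply mul_ne_zero
      · exact pow_ne_zero _ (by norm_num)
      · exact_mod_cast hch.ne'
    exact this hc.symm
end

section
/- Let k ≥ 2 be an integer. The set of integers n ≤ 0 for which the k-generalized Fibonacci polynomial 𝓕_{n,k} is the zero polynomial is finite and has exactly k(k−1)/2 elements. Moreover, every such n satisfies |n| < k² − k − 1, i.e. 𝓕_{n,k} ≠ 0 whenever n ≤ 0 and |n| ≥ k² − k − 1. -/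
open Polynomial

namespace FibVanishAux

noncomputable section

abbrev PZ := Polynomial ℤ

def Useries (k : ℕ) : PowerSeries PZ :=
  PowerSeries.C (-Polynomial.X) * PowerSeries.X + PowerSeries.C (1 + Polynomial.X ^ k)

def Aseries (k : ℕ) : PowerSeries PZ := 1 - PowerSeries.X ^ k * Useries k

def Vseries (k : ℕ) : PowerSeries PZ := PowerSeries.invOfUnit (Aseries k) 1

def W (k N : ℕ) : PZ :=
  PowerSeries.coeff N (Vseries k * (1 - PowerSeries.C Polynomial.X * PowerSeries.X))

lemma VA (k : ℕ) (hk : 1 ≤ k) : Vseries k * (1 - PowerSeries.X ^ k * Useries k) = 1 := by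
  have hA : PowerSeries.constantCoeff (Aseries k) = 1 := by
    have : (PowerSeries.constantCoeff) (PowerSeries.X ^ k) = 0 := by
      rw [map_pow, PowerSeries.constantCoeff_X, zero_pow (by omega)]
    simp [Aseries, this, show k ≠ 0 by omega]
  have := PowerSeries.mul_invOfUnit (Aseries k) 1 (by rw [hA]; rfl)
  rw [mul_comm] at this
  simpa [Aseries, Vseries] using this

lemma coeff_U_pow (k r d : ℕ) :
    PowerSeries.coeff d (Useries k ^ r)
      = (r.choose d : PZ) * ((-Polynomial.X) ^ d * (1 + Polynomial.X ^ k) ^ (r - d)) := by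
  rw [Useries, add_pow, map_sum]
  have hterm : ∀ m ∈ Finset.range (r+1),
      PowerSeries.coeff d
        ((PowerSeries.C (-Polynomial.X) * PowerSeries.X) ^ m *
          PowerSeries.C (1 + Polynomial.X ^ k) ^ (r - m) * (r.choose m : PowerSeries PZ))
      = if m = d then (r.choose m : PZ) * ((-Polynomial.X) ^ m * (1 + Polynomial.X ^ k) ^ (r - m)) else 0 := by
    intro m _
    have h1 : (PowerSeries.C (-Polynomial.X) * PowerSeries.X) ^ m *
          PowerSeries.C (1 + Polynomial.X ^ k) ^ (r - m) * (r.choose m : PowerSeries PZ)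
        = PowerSeries.C ((r.choose m : PZ) * ((-Polynomial.X) ^ m * (1 + Polynomial.X ^ k) ^ (r - m)))
            * PowerSeries.X ^ m := by
      rw [← map_natCast (PowerSeries.C (R := PZ)) (r.choose m), mul_pow, ← map_pow, ← map_pow,
        map_mul, map_mul]
      ring
    rw [h1, PowerSeries.coeff_C_mul, PowerSeries.coeff_X_pow]
    by_cases hmd : m = d
    · subst hmd; simp
    · rw [if_neg (fun h => hmd h.symm), if_neg hmd, mul_zero]
  rw [Finset.sum_congr rfl hterm, Finset.sum_ite_eq' (Finset.range (r+1)) d]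
  split_ifs with h
  · rfl
  · have : r < d := by simp [Finset.mem_range] at h; omega
    rw [Nat.choose_eq_zero_of_lt this]
    simp

lemma coeff_V (k : ℕ) (hk : 1 ≤ k) (N : ℕ) :
    PowerSeries.coeff N (Vseries k)
      = ∑ r ∈ Finset.range (N+1), if k * r ≤ N then
          (r.choose (N - k*r) : PZ) *
            ((-Polynomial.X) ^ (N - k*r) * (1 + Polynomial.X ^ k) ^ (r - (N - k*r)))
        else 0 := by
  set Z : PowerSeries PZ := PowerSeries.X ^ k * Useries k with hZ
  have hVA : Vseries k * (1 - Z) = 1 := VA k hk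
  have hgeo := geom_sum_mul Z (N+1)
  have hexp : Vseries k = (∑ i ∈ Finset.range (N+1), Z ^ i) + Vseries k * Z ^ (N+1) := by
    linear_combination (Vseries k) * hgeo + (∑ i ∈ Finset.range (N+1), Z ^ i) * hVA
  rw [hexp, map_add, map_sum]
  have htail : PowerSeries.coeff N (Vseries k * Z ^ (N+1)) = 0 := by
    have h2 : Vseries k * Z ^ (N+1) = (Vseries k * Useries k ^ (N+1)) * PowerSeries.X ^ (k*(N+1)) := by
      rw [hZ, mul_pow, ← pow_mul]; ring
    rw [h2, PowerSeries.coeff_mul_X_pow']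
    rw [if_neg]
    have : 1 * (N+1) ≤ k * (N+1) := Nat.mul_le_mul_right _ hk
    omega
  rw [htail, add_zero]
  refine Finset.sum_congr rfl fun r hr => ?_
  have h3 : Z ^ r = Useries k ^ r * PowerSeries.X ^ (k*r) := by
    rw [hZ, mul_pow, ← pow_mul]; ring
  rw [h3, PowerSeries.coeff_mul_X_pow']
  split_ifs with h
  · rw [coeff_U_pow]
  · rfl

lemma W_eq (k N : ℕ) :
    W k N = PowerSeries.coeff N (Vseries k)
      - (if 1 ≤ N then Polynomial.X * PowerSeries.coeff (N-1) (Vseries k) else 0) := by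
  rw [W, mul_sub, mul_one, map_sub]
  congr 1
  have h1 : Vseries k * (PowerSeries.C Polynomial.X * PowerSeries.X)
      = (PowerSeries.C Polynomial.X * Vseries k) * PowerSeries.X ^ 1 := by ring
  rw [h1, PowerSeries.coeff_mul_X_pow']
  split_ifs with h
  · rw [PowerSeries.coeff_C_mul]
  · rfl

lemma coeffV_vanish (k j t : ℕ) (hk : 2 ≤ k) (htk : t < k) (hjt : j + 1 ≤ t) :
    PowerSeries.coeff (k*j + t) (Vseries k) = 0 := by
  rw [coeff_V k (by omega)]
  refine Finset.sum_eq_zero fun r hr => ?_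
  split_ifs with h
  · have hrj : r ≤ j := by
      by_contra hc
      have h2 : k * (j+1) ≤ k * r := Nat.mul_le_mul_left k (by omega)
      have h3 : k * (j+1) = k * j + k := by ring
      omega
    have hlt : r < k*j + t - k*r := by
      rcases Nat.eq_or_lt_of_le hrj with h4 | h4
      · subst h4; omega
      · have h5 : k * (r+1) ≤ k * j := Nat.mul_le_mul_left k h4
        have h6 : k * (r+1) = k * r + k := by ring
        omega
    rw [Nat.choose_eq_zero_of_lt hlt]
    simp
  · rfl

lemma W_vanish (k j t : ℕ) (hk : 2 ≤ k) (htk : t < k) (hjt : j + 2 ≤ t) :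
    W k (k*j + t) = 0 := by
  rw [W_eq, coeffV_vanish k j t hk htk (by omega)]
  rw [if_pos (by omega)]
  have h1 : k*j + t - 1 = k*j + (t-1) := by omega
  rw [h1, coeffV_vanish k j (t-1) hk (by omega) (by omega)]
  simp

lemma coeffV_coeff (k j t : ℕ) (hk : 2 ≤ k) (htk : t < k) :
    (PowerSeries.coeff (k*j + t) (Vseries k)).coeff t = (-1)^t * (j.choose t : ℤ) := by
  rw [coeff_V k (by omega)]
  rw [Polynomial.finset_sum_coeff]
  have hmem : j ∈ Finset.range (k*j + t + 1) := by
    have : 1 * j ≤ k * j := Nat.mul_le_mul_right _ (by omega)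
    simp [Finset.mem_range]; omega
  rw [Finset.sum_eq_single_of_mem j hmem]
  · rw [if_pos (by omega)]
    have hd : k*j + t - k*j = t := by omega
    rw [hd]
    have h1 : ((j.choose t : PZ) * ((-Polynomial.X) ^ t * (1 + Polynomial.X ^ k) ^ (j - t)))
        = Polynomial.C ((-1)^t * (j.choose t : ℤ)) * ((1 + Polynomial.X ^ k) ^ (j - t) * Polynomial.X ^ t) := by
      rw [neg_pow, map_mul, map_pow, Polynomial.C_eq_natCast]
      simp only [map_neg, map_one]
      ring
    rw [h1, Polynomial.coeff_C_mul, Polynomial.coeff_mul_X_pow']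
    rw [if_pos le_rfl, Nat.sub_self]
    rw [Polynomial.coeff_zero_eq_eval_zero]
    simp [zero_pow (show k ≠ 0 by omega)]
  · intro r hr hrj
    split_ifs with h
    · have hrle : r ≤ j := by
        by_contra hc
        have h2 : k * (j+1) ≤ k * r := Nat.mul_le_mul_left k (by omega)
        have h3 : k * (j+1) = k * j + k := by ring
        omega
      have hrlt : r < j := lt_of_le_of_ne hrle hrj
      have h5 : k * (r+1) ≤ k * j := Nat.mul_le_mul_left k hrlt
      have h6 : k * (r+1) = k * r + k := by ring
      -- the X-power exponent d = k*j + t - k*r ≥ k + t > t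
      have hd : t < k*j + t - k*r := by omega
      have h7 : ((r.choose (k*j + t - k*r) : PZ) *
            ((-Polynomial.X) ^ (k*j + t - k*r) * (1 + Polynomial.X ^ k) ^ (r - (k*j + t - k*r))))
          = Polynomial.C ((-1)^(k*j + t - k*r) * (r.choose (k*j + t - k*r) : ℤ)) *
              ((1 + Polynomial.X ^ k) ^ (r - (k*j + t - k*r)) * Polynomial.X ^ (k*j + t - k*r)) := by
        rw [neg_pow, map_mul, map_pow, Polynomial.C_eq_natCast]
        simp only [map_neg, map_one]
        ring
      rw [h7, Polynomial.coeff_C_mul, Polynomial.coeff_mul_X_pow']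
      rw [if_neg (by omega), mul_zero]
    · simp

lemma W_coeff (k j t : ℕ) (hk : 2 ≤ k) (htk : t < k) :
    (W k (k*j + t)).coeff t = (-1)^t * ((j+1).choose t : ℤ) := by
  rw [W_eq]
  rcases Nat.eq_zero_or_pos t with ht0 | ht0
  · subst ht0
    rw [Polynomial.coeff_sub, coeffV_coeff k j 0 hk htk]
    have hz : ((if 1 ≤ k*j + 0 then Polynomial.X * PowerSeries.coeff (k*j + 0 - 1) (Vseries k) else (0:PZ))).coeff 0 = 0 := by
      split_ifs
      · rw [Polynomial.mul_coeff_zero]; simp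
      · simp
    rw [hz]
    simp
  · rw [if_pos (by omega), Polynomial.coeff_sub]
    rw [coeffV_coeff k j t hk htk]
    obtain ⟨s, rfl⟩ : ∃ s, t = s + 1 := ⟨t - 1, by omega⟩
    have hidx : k*j + (s+1) - 1 = k*j + s := by omega
    rw [hidx]
    have hXc : (Polynomial.X * PowerSeries.coeff (k*j + s) (Vseries k)).coeff (s+1)
        = (PowerSeries.coeff (k*j + s) (Vseries k)).coeff s := by
      rw [Polynomial.coeff_X_mul]
    rw [hXc, coeffV_coeff k j s hk (by omega)]
    rw [Nat.choose_succ_succ j s]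
    push_cast
    ring

lemma W_ne_zero (k j t : ℕ) (hk : 2 ≤ k) (htk : t < k) (hjt : t ≤ j + 1) :
    W k (k*j + t) ≠ 0 := by
  intro h
  have h1 := W_coeff k j t hk htk
  rw [h, Polynomial.coeff_zero] at h1
  have h2 : 0 < (j+1).choose t := Nat.choose_pos (by omega)
  have h3 : ((-1:ℤ))^t * ((j+1).choose t : ℤ) ≠ 0 :=
    mul_ne_zero (pow_ne_zero t (by norm_num)) (by exact_mod_cast h2.ne')
  exact h3 h1.symm

lemma VV_D (k : ℕ) (hk : 1 ≤ k) :
    (Vseries k * (1 - PowerSeries.C Polynomial.X * PowerSeries.X)) *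
      ((∑ i ∈ Finset.range k, (PowerSeries.C Polynomial.X * PowerSeries.X)^i) - PowerSeries.X^k) = 1 := by
  have hg := geom_sum_mul (PowerSeries.C (R := PZ) Polynomial.X * PowerSeries.X) k
  have hDA : (1 - PowerSeries.C Polynomial.X * PowerSeries.X) *
      ((∑ i ∈ Finset.range k, (PowerSeries.C Polynomial.X * PowerSeries.X)^i) - PowerSeries.X^k)
      = 1 - PowerSeries.X^k * Useries k := by
    rw [Useries]
    have hC : PowerSeries.C (R := PZ) (1 + Polynomial.X ^ k) = 1 + (PowerSeries.C Polynomial.X)^k := by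
      rw [map_add, map_one, map_pow]
    rw [hC, map_neg]
    linear_combination (-1 : PowerSeries PZ) * hg
  rw [mul_assoc, hDA]
  exact VA k hk

lemma W_rec (k : ℕ) (hk : 1 ≤ k) (M : ℕ) :
    (∑ i ∈ Finset.range k, (if i ≤ M then (Polynomial.X:PZ)^i * W k (M-i) else 0))
      - (if k ≤ M then W k (M-k) else 0) = if M = 0 then 1 else 0 := by
  have h := congrArg (PowerSeries.coeff M) (VV_D k hk)
  rw [PowerSeries.coeff_one] at h
  rw [mul_sub, Finset.mul_sum, map_sub, map_sum] at h
  have h1 : ∀ i ∈ Finset.range k,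
      PowerSeries.coeff M ((Vseries k * (1 - PowerSeries.C Polynomial.X * PowerSeries.X)) *
        (PowerSeries.C Polynomial.X * PowerSeries.X)^i)
      = if i ≤ M then (Polynomial.X:PZ)^i * W k (M-i) else 0 := by
    intro i _
    have e : (Vseries k * (1 - PowerSeries.C Polynomial.X * PowerSeries.X)) *
        (PowerSeries.C Polynomial.X * PowerSeries.X)^i
        = (PowerSeries.C (Polynomial.X^i) *
            (Vseries k * (1 - PowerSeries.C Polynomial.X * PowerSeries.X))) * PowerSeries.X ^ i := by
      rw [map_pow]
      ring
    rw [e, PowerSeries.coeff_mul_X_pow']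
    split_ifs with hi
    · rw [PowerSeries.coeff_C_mul]; rfl
    · rfl
  rw [Finset.sum_congr rfl h1] at h
  have h2 : PowerSeries.coeff M ((Vseries k * (1 - PowerSeries.C Polynomial.X * PowerSeries.X)) *
      PowerSeries.X^k) = if k ≤ M then W k (M-k) else 0 := by
    rw [PowerSeries.coeff_mul_X_pow']
    split_ifs <;> rfl
  rw [h2] at h
  exact h

lemma W_rec' (k N : ℕ) (hk : 2 ≤ k) :
    W k N = ((if N = 0 then (1:PZ) else 0) + (if k ≤ N then W k (N-k) else 0))
      - ∑ i ∈ Finset.range (k-1), Polynomial.X^(k-1-i) * (if k-1 ≤ N+i then W k (N+i-(k-1)) else 0) := by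
  have h := W_rec k (by omega) N
  have hrange : Finset.range k = Finset.range ((k-1)+1) := by congr 1; omega
  rw [hrange, Finset.sum_range_succ'] at h
  have hf0 : (if 0 ≤ N then (Polynomial.X:PZ)^0 * W k (N-0) else 0) = W k N := by simp
  rw [hf0] at h
  have hsum : ∑ i ∈ Finset.range (k-1), Polynomial.X^(k-1-i) * (if k-1 ≤ N+i then W k (N+i-(k-1)) else 0)
      = ∑ i ∈ Finset.range (k-1), (if i+1 ≤ N then (Polynomial.X:PZ)^(i+1) * W k (N-(i+1)) else 0) := by
    rw [← Finset.sum_range_reflect (fun i => if i+1 ≤ N then (Polynomial.X:PZ)^(i+1) * W k (N-(i+1)) else 0) (k-1)]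
    refine Finset.sum_congr rfl fun i hi => ?_
    simp only [Finset.mem_range] at hi
    by_cases hc : k-1 ≤ N+i
    · rw [if_pos hc, if_pos (by omega)]
      rw [show k-1-1-i+1 = k-1-i from by omega, show N-(k-1-i) = N+i-(k-1) from by omega]
    · rw [if_neg hc, if_neg (by omega), mul_zero]
  rw [hsum]
  linear_combination h

lemma F_eq_W (k : ℕ) (hk : 2 ≤ k) (F : ℤ → PZ)
    (hrec : ∀ n : ℤ, F n = ∑ i ∈ Finset.range k, Polynomial.X ^ (k - 1 - i) * F (n - 1 - (i : ℤ)))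
    (hF1 : F 1 = 1) (hF0 : ∀ m : ℕ, m ≤ k - 2 → F (-(m : ℤ)) = 0) :
    ∀ N : ℕ, F (1 - k - N) = W k N := by
  intro N
  induction N using Nat.strong_induction_on with
  | _ N IH =>
  have h0 := hrec (1 - N)
  have hrange : Finset.range k = Finset.range ((k-1)+1) := by congr 1; omega
  rw [hrange, Finset.sum_range_succ] at h0
  have hlast : (Polynomial.X:PZ) ^ (k-1-(k-1)) * F (1 - (N:ℤ) - 1 - ((k-1 : ℕ) : ℤ))
      = F (1 - k - N) := by
    rw [Nat.sub_self, pow_zero, one_mul]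
    congr 1
    push_cast [Nat.cast_sub (by omega : 1 ≤ k)]
    ring
  rw [hlast] at h0
  have hmid : ∀ i ∈ Finset.range (k-1),
      (Polynomial.X:PZ)^(k-1-i) * F (1 - (N:ℤ) - 1 - i)
      = Polynomial.X^(k-1-i) * (if k-1 ≤ N+i then W k (N+i-(k-1)) else 0) := by
    intro i hi
    simp only [Finset.mem_range] at hi
    congr 1
    by_cases hc : k-1 ≤ N+i
    · rw [if_pos hc]
      have harg : (1 - (N:ℤ) - 1 - i) = 1 - k - ((N+i-(k-1) : ℕ) : ℤ) := by
        push_cast [Nat.cast_sub hc, Nat.cast_sub (by omega : 1 ≤ k)]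
        ring
      rw [harg]
      exact IH _ (by omega)
    · rw [if_neg hc]
      have harg : (1 - (N:ℤ) - 1 - i) = -(((N+i) : ℕ) : ℤ) := by push_cast; ring
      rw [harg]
      exact hF0 (N+i) (by omega)
  rw [Finset.sum_congr rfl hmid] at h0
  have htop : F (1 - (N:ℤ)) = (if N = 0 then (1:PZ) else 0) + (if k ≤ N then W k (N-k) else 0) := by
    rcases Nat.eq_zero_or_pos N with h | h
    · subst h
      rw [if_pos rfl, if_neg (by omega)]
      simpa using hF1
    · by_cases hc : k ≤ N
      · rw [if_neg (by omega), if_pos hc, zero_add]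
        have harg : (1 - (N:ℤ)) = 1 - k - ((N-k : ℕ) : ℤ) := by
          push_cast [Nat.cast_sub hc]; ring
        rw [harg]
        exact IH _ (by omega)
      · rw [if_neg (by omega), if_neg hc, zero_add]
        have harg : (1 - (N:ℤ)) = -(((N-1) : ℕ) : ℤ) := by
          push_cast [Nat.cast_sub (by omega : 1 ≤ N)]; ring
        rw [harg]
        exact hF0 (N-1) (by omega)
  rw [htop] at h0
  rw [W_rec' k N hk]
  linear_combination -h0

end

end FibVanishAux


open FibVanishAux in
/-- The set of nonpositive indices at which the `k`-generalized Fibonacci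
polynomial vanishes identically is finite with exactly `k(k-1)/2` elements, and every
such index `n` satisfies `|n| < k² - k - 1`. -/
theorem fib_poly_vanishing_set_card (k : ℕ) (hk : 2 ≤ k)
    (F : ℤ → Polynomial ℤ)
    (hrec : ∀ n : ℤ, F n = ∑ i ∈ Finset.range k, X ^ (k - 1 - i) * F (n - 1 - (i : ℤ)))
    (hF1 : F 1 = 1)
    (hF0 : ∀ m : ℕ, m ≤ k - 2 → F (-(m : ℤ)) = 0) :
    {n : ℤ | n ≤ 0 ∧ F n = 0}.Finite ∧
    {n : ℤ | n ≤ 0 ∧ F n = 0}.ncard = k * (k - 1) / 2 ∧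
    ∀ n : ℤ, n ≤ 0 → (k : ℤ) ^ 2 - k - 1 ≤ |n| → F n ≠ 0 := by
  classical
  obtain ⟨K, rfl⟩ : ∃ K, k = K + 2 := ⟨k - 2, by omega⟩
  have hFW := F_eq_W (K+2) (by omega) F hrec hF1 hF0
  -- evaluate F at far indices
  have hFn : ∀ n : ℤ, n ≤ -((K:ℤ)+1) → F n = W (K+2) (-n - (K+1)).toNat := by
    intro n hn
    have h1 : ((-n - (K+1)).toNat : ℤ) = -n - (K+1) := Int.toNat_of_nonneg (by omega)
    have h2 := hFW (-n - (K+1)).toNat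
    rw [show (1 : ℤ) - ((K+2 : ℕ) : ℤ) - ((-n - (K+1)).toNat : ℤ) = n by
      rw [h1]; push_cast; ring] at h2
    exact h2
  -- the two parts of the zero set
  set E1 : Finset ℤ := (Finset.range (K+1)).image (fun m : ℕ => -(m:ℤ)) with hE1
  set E2 : Finset ℤ := (Finset.range (K+2)).biUnion (fun j =>
      (Finset.Ico (j+2) (K+2)).image (fun t : ℕ => -(((K+1) + (K+2)*j + t : ℕ) : ℤ))) with hE2
  have hmemE1 : ∀ v : ℤ, v ∈ E1 ↔ ∃ m : ℕ, m ≤ K ∧ v = -(m:ℤ) := by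
    intro v
    rw [hE1, Finset.mem_image]
    constructor
    · rintro ⟨m, hm, h⟩
      rw [Finset.mem_range] at hm
      exact ⟨m, by omega, h.symm⟩
    · rintro ⟨m, hm, h⟩
      exact ⟨m, Finset.mem_range.mpr (by omega), h.symm⟩
  have hmemE2 : ∀ v : ℤ, v ∈ E2 ↔ ∃ j t : ℕ, j + 2 ≤ t ∧ t < K + 2 ∧
      v = -(((K+1) + (K+2)*j + t : ℕ) : ℤ) := by
    intro v
    rw [hE2, Finset.mem_biUnion]
    constructor
    · rintro ⟨j, hj, hmim⟩
      rw [Finset.mem_image] at hmim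
      obtain ⟨t, htm, h⟩ := hmim
      rw [Finset.mem_Ico] at htm
      exact ⟨j, t, htm.1, htm.2, h.symm⟩
    · rintro ⟨j, t, ht1, ht2, h⟩
      refine ⟨j, Finset.mem_range.mpr (by omega), ?_⟩
      rw [Finset.mem_image]
      exact ⟨t, Finset.mem_Ico.mpr ⟨ht1, ht2⟩, h.symm⟩
  -- characterization of the zero set
  have hzero : ∀ n : ℤ, n ≤ 0 → (F n = 0 ↔ n ∈ E1 ∪ E2) := by
    intro n hn
    by_cases hcase : -((K:ℤ)+1) < n
    · -- -K ≤ n ≤ 0 : F n = 0 and n ∈ E1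
      have hFz : F n = 0 := by
        have h3 := hF0 (-n).toNat (by omega)
        rw [show -(((-n).toNat : ℕ) : ℤ) = n by omega] at h3
        exact h3
      have hmem : n ∈ E1 ∪ E2 := by
        refine Finset.mem_union_left _ ?_
        rw [hmemE1]
        exact ⟨(-n).toNat, by omega, by omega⟩
      exact ⟨fun _ => hmem, fun _ => hFz⟩
    · push_neg at hcase
      set N : ℕ := (-n - (K+1)).toNat with hN
      have hNval : (N : ℤ) = -n - (K+1) := Int.toNat_of_nonneg (by omega)
      set j : ℕ := N / (K+2) with hj
      set t : ℕ := N % (K+2) with ht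
      have hNdecomp : N = (K+2)*j + t := by
        rw [hj, ht]; exact (Nat.div_add_mod N (K+2)).symm
      have htlt : t < K+2 := Nat.mod_lt _ (by omega)
      have hFW2 : F n = W (K+2) ((K+2)*j + t) := by
        rw [hFn n hcase, ← hN, hNdecomp]
      constructor
      · intro hF0'
        refine Finset.mem_union_right _ ?_
        rw [hmemE2]
        refine ⟨j, t, ?_, htlt, ?_⟩
        · by_contra hcon
          exact W_ne_zero (K+2) j t (by omega) htlt (by omega) (hFW2 ▸ hF0')
        · have h9 : (K+1) + (K+2)*j + t = (K+1) + N := by omega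
          rw [h9]
          push_cast
          omega
      · intro hmem
        rcases Finset.mem_union.mp hmem with hm | hm
        · rw [hmemE1] at hm
          obtain ⟨m, hmK, rfl⟩ := hm
          exfalso; omega
        · rw [hmemE2] at hm
          obtain ⟨j', t', hjt', htK', hval⟩ := hm
          have hNN : N = (K+2)*j' + t' := by
            have h10 : (N : ℤ) = (((K+1) + (K+2)*j' + t' : ℕ) : ℤ) - ((K:ℤ)+1) := by
              rw [hNval, hval]; ring
            omega
          have hjj : j = j' ∧ t = t' := by
            rcases Nat.lt_trichotomy j j' with h | h | h
            · have := Nat.mul_le_mul_left (K+2) (show j+1 ≤ j' by omega)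
              have he : (K+2)*(j+1) = (K+2)*j + (K+2) := by ring
              omega
            · refine ⟨h, ?_⟩
              have he2 : (K+2)*j = (K+2)*j' := by rw [h]
              omega
            · have := Nat.mul_le_mul_left (K+2) (show j'+1 ≤ j by omega)
              have he : (K+2)*(j'+1) = (K+2)*j' + (K+2) := by ring
              omega
          rw [hFW2, hjj.1, hjj.2]
          exact W_vanish (K+2) j' t' (by omega) htK' hjt'
  -- set equality
  have hsetE : {n : ℤ | n ≤ 0 ∧ F n = 0} = ↑(E1 ∪ E2) := by
    ext n
    simp only [Set.mem_setOf_eq, Finset.coe_union, Set.mem_union, Finset.mem_coe]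
    constructor
    · rintro ⟨hn, hFz⟩
      exact Finset.mem_union.mp ((hzero n hn).mp hFz)
    · intro hmem
      have hn : n ≤ 0 := by
        rcases hmem with hm | hm
        · rw [hmemE1] at hm; obtain ⟨m, _, rfl⟩ := hm; omega
        · rw [hmemE2] at hm; obtain ⟨j', t', _, _, rfl⟩ := hm; omega
      exact ⟨hn, (hzero n hn).mpr (Finset.mem_union.mpr hmem)⟩
  -- cardinality computation
  have hcardE1 : E1.card = K + 1 := by
    rw [hE1, Finset.card_image_of_injective _ (fun a b hab => by omega), Finset.card_range]
  have hdisjb : ∀ j1 ∈ Finset.range (K+2), ∀ j2 ∈ Finset.range (K+2), j1 ≠ j2 →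
      Disjoint ((Finset.Ico (j1+2) (K+2)).image (fun t => -(((K+1) + (K+2)*j1 + t : ℕ) : ℤ)))
        ((Finset.Ico (j2+2) (K+2)).image (fun t => -(((K+1) + (K+2)*j2 + t : ℕ) : ℤ))) := by
    intro j1 _ j2 _ hne
    rw [Finset.disjoint_left]
    rintro v hv1 hv2
    simp only [Finset.mem_image, Finset.mem_Ico] at hv1 hv2
    obtain ⟨t1, ⟨ht1a, ht1b⟩, hval1⟩ := hv1
    obtain ⟨t2, ⟨ht2a, ht2b⟩, hval2⟩ := hv2
    have heq : (K+1) + (K+2)*j1 + t1 = (K+1) + (K+2)*j2 + t2 := by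
      have : ((((K+1) + (K+2)*j1 + t1 : ℕ)) : ℤ) = (((K+1) + (K+2)*j2 + t2 : ℕ) : ℤ) := by
        omega
      exact_mod_cast this
    rcases Nat.lt_trichotomy j1 j2 with h | h | h
    · have := Nat.mul_le_mul_left (K+2) (show j1+1 ≤ j2 by omega)
      have he : (K+2)*(j1+1) = (K+2)*j1 + (K+2) := by ring
      omega
    · exact hne h
    · have := Nat.mul_le_mul_left (K+2) (show j2+1 ≤ j1 by omega)
      have he : (K+2)*(j2+1) = (K+2)*j2 + (K+2) := by ring
      omega
  have hcardE2 : E2.card = ∑ j ∈ Finset.range (K+2), (K - j) := by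
    rw [hE2, Finset.card_biUnion hdisjb]
    refine Finset.sum_congr rfl fun j _ => ?_
    rw [Finset.card_image_of_injective _ (fun a b hab => by omega), Nat.card_Ico]
    omega
  have hsumval : ∑ j ∈ Finset.range (K+2), (K - j) = ∑ i ∈ Finset.range (K+1), i := by
    have h1 : ∑ j ∈ Finset.range (K+2), (K - j) = ∑ j ∈ Finset.range (K+2), (K + 2 - 1 - j - 1) :=
      Finset.sum_congr rfl fun j _ => by omega
    rw [h1, Finset.sum_range_reflect (fun i => i - 1) (K+2),
      Finset.sum_range_succ' (fun i => i - 1) (K+1)]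
    simp
  have hgauss : (∑ i ∈ Finset.range (K+1), i) * 2 = (K+1) * K := by
    have := Finset.sum_range_id_mul_two (K+1)
    simpa using this
  have hdisj12 : Disjoint E1 E2 := by
    rw [Finset.disjoint_left]
    intro v hv1 hv2
    rw [hmemE1] at hv1
    rw [hmemE2] at hv2
    obtain ⟨m, hm, rfl⟩ := hv1
    obtain ⟨j', t', hjt', htK', hval⟩ := hv2
    have : (m : ℤ) = (((K+1) + (K+2)*j' + t' : ℕ) : ℤ) := by omega
    have hmn : m = (K+1) + (K+2)*j' + t' := by exact_mod_cast this
    omega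
  have hcardtot : (E1 ∪ E2).card = (K+2) * (K+2-1) / 2 := by
    rw [Finset.card_union_of_disjoint hdisj12, hcardE1, hcardE2, hsumval]
    have h2 : (K+2) * (K+2-1) = (K + 1 + ∑ i ∈ Finset.range (K+1), i) * 2 := by
      have h3 : (K + 1 + ∑ i ∈ Finset.range (K+1), i) * 2
          = (K+1)*2 + (∑ i ∈ Finset.range (K+1), i)*2 := by ring
      rw [h3, hgauss]
      have h4 : K + 2 - 1 = K + 1 := rfl
      rw [h4]; ring
    omega
  refine ⟨?_, ?_, ?_⟩
  · rw [hsetE]; exact (E1 ∪ E2).finite_toSet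
  · rw [hsetE, Set.ncard_coe_finset, hcardtot]
  · intro n hn hb hFz
    have habs : |n| = -n := abs_of_nonpos hn
    rw [habs] at hb
    have hb2 : (K:ℤ)*K + 3*K + 1 ≤ -n := by
      have : ((K:ℤ)+2)^2 - ((K:ℤ)+2) - 1 = (K:ℤ)*K + 3*K + 1 := by ring
      push_cast at hb
      omega
    have hmem := (hzero n hn).mp hFz
    rcases Finset.mem_union.mp hmem with hm | hm
    · rw [hmemE1] at hm; obtain ⟨m, hmK, rfl⟩ := hm
      have : (K:ℤ)*K ≥ 0 := by positivity
      omega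
    · rw [hmemE2] at hm
      obtain ⟨j', t', hjt', htK', hval⟩ := hm
      have hjK : j' + 1 ≤ K := by omega
      have h4 := Nat.mul_le_mul_left (K+2) hjK
      have h5 : (K+2)*(j'+1) = (K+2)*j' + (K+2) := by ring
      have h6 : (K+2)*K = K*K + 2*K := by ring
      have h7 : -n = (((K+1) + (K+2)*j' + t' : ℕ) : ℤ) := by omega
      push_cast at h7
      have h8 : ((K:ℤ)+2)*j' = (((K+2)*j' : ℕ) : ℤ) := by push_cast; ring
      omega
end

section
/- Let k ≥ 2 be an integer and let n ≤ 0 be such that there exists an integer s with 0 ≤ s ≤ k−2 and s(k+1) ≤ |n| ≤ (s+1)k − 2. Then the k-generalized Fibonacci polynomial 𝓕_{n,k} is the zero polynomial; and conversely, if 𝓕_{n,k} = 0 for some n ≤ 0, then |n| lies in one of these intervals. -/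
open Polynomial

open Finset

noncomputable def aP (k : ℕ) : ℕ → Polynomial ℤ
  | 0 => 1
  | N + 1 =>
    (if 2 ≤ k ∧ k ≤ N + 1 then (1 + X ^ k) * aP k (N + 1 - k) else 0) -
    (if 2 ≤ k ∧ k ≤ N then X * aP k (N - k) else 0)
decreasing_by
  · omega
  · omega

lemma aP_zero' (k : ℕ) : aP k 0 = 1 := by simp [aP]

lemma aP_succ (k N : ℕ) : aP k (N + 1) =
    (if 2 ≤ k ∧ k ≤ N + 1 then (1 + X ^ k) * aP k (N + 1 - k) else 0) -
    (if 2 ≤ k ∧ k ≤ N then X * aP k (N - k) else 0) := by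
  rw [aP]

lemma aP_eq_zero (k : ℕ) (hk : 2 ≤ k) :
    ∀ q r : ℕ, r < k → q < r → aP k (k * q + r) = 0 := by
  intro q
  induction q with
  | zero =>
    intro r hrk hqr
    obtain ⟨r', rfl⟩ : ∃ r', r = r' + 1 := ⟨r - 1, by omega⟩
    have h1 : k * 0 + (r' + 1) = r' + 1 := by omega
    rw [h1, aP_succ, if_neg (by omega), if_neg (by omega), sub_zero]
  | succ q ih =>
    intro r hrk hqr
    have h1 : k * (q + 1) + r = (k * q + r + k - 1) + 1 := by
      rw [Nat.mul_succ]; omega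
    rw [h1, aP_succ, if_pos (by omega), if_pos (by omega)]
    have e1 : k * q + r + k - 1 + 1 - k = k * q + r := by omega
    have e2 : k * q + r + k - 1 - k = k * q + (r - 1) := by omega
    rw [e1, e2, ih r hrk (by omega), ih (r - 1) (by omega) (by omega)]
    simp

lemma aP_coeff (k : ℕ) (hk : 2 ≤ k) :
    ∀ q r : ℕ, r < k → r ≤ q →
      (aP k (k * q + r)).coeff r = (-1) ^ r * (q.choose r : ℤ) := by
  intro q
  induction q with
  | zero =>
    intro r hrk hrq
    have : r = 0 := by omega
    subst this
    simp [aP_zero']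
  | succ q ih =>
    intro r hrk hrq
    have h1 : k * (q + 1) + r = (k * q + r + k - 1) + 1 := by
      rw [Nat.mul_succ]; omega
    rw [h1, aP_succ, if_pos (by omega)]
    have e1 : k * q + r + k - 1 + 1 - k = k * q + r := by omega
    rw [e1]
    -- first term coefficient
    have hfst : ((1 + X ^ k) * aP k (k * q + r)).coeff r
        = (-1) ^ r * (q.choose r : ℤ) := by
      rw [add_mul, one_mul, Polynomial.coeff_add]
      have hx : (X ^ k * aP k (k * q + r)).coeff r = 0 := by
        rw [mul_comm, Polynomial.coeff_mul_X_pow']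
        simp [Nat.not_le.mpr hrk]
      rw [hx, add_zero]
      rcases Nat.lt_or_ge q r with h | h
      · rw [aP_eq_zero k hk q r hrk h, Nat.choose_eq_zero_of_lt h]
        simp
      · exact ih r hrk h
    rcases Nat.eq_zero_or_pos r with rfl | hrpos
    · -- r = 0
      rw [Polynomial.coeff_sub, hfst]
      have hsnd : ((if 2 ≤ k ∧ k ≤ k * q + 0 + k - 1 then
          X * aP k (k * q + 0 + k - 1 - k) else 0)).coeff 0 = 0 := by
        split
        · rw [Polynomial.mul_coeff_zero, Polynomial.coeff_X_zero, zero_mul]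
        · simp
      rw [hsnd, sub_zero]
      simp
    · obtain ⟨r', rfl⟩ : ∃ r', r = r' + 1 := ⟨r - 1, by omega⟩
      rw [if_pos (by omega)]
      have e2 : k * q + (r' + 1) + k - 1 - k = k * q + r' := by omega
      rw [e2, Polynomial.coeff_sub, hfst, Polynomial.coeff_X_mul,
        ih r' (by omega) (by omega), Nat.choose_succ_succ]
      push_cast
      ring

noncomputable def AP (k : ℕ) (n : ℤ) : Polynomial ℤ :=
  if 0 ≤ n then aP k n.toNat else 0

lemma AP_coe (k : ℕ) (N : ℕ) : AP k (N : ℤ) = aP k N := by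
  simp [AP]

lemma AP_neg (k : ℕ) (n : ℤ) (h : n < 0) : AP k n = 0 := by
  simp [AP, not_le.mpr h]

lemma aP_small (k : ℕ) (hk : 2 ≤ k) (N : ℕ) (h1 : 0 < N) (h2 : N < k) :
    aP k N = 0 := by
  have := aP_eq_zero k hk 0 N h2 h1
  simpa using this

lemma AP_rec (k : ℕ) (hk : 2 ≤ k) (n : ℤ) :
    AP k n = (if n = 0 then 1 else 0) + (1 + X ^ k) * AP k (n - k) -
      X * AP k (n - k - 1) := by
  rcases lt_trichotomy n 0 with h | rfl | h
  · rw [AP_neg k n h, AP_neg k _ (by omega), AP_neg k _ (by omega),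
      if_neg (by omega)]
    ring
  · rw [if_pos rfl, AP_neg k _ (by omega : (0:ℤ) - k < 0),
      AP_neg k _ (by omega : (0:ℤ) - k - 1 < 0)]
    show AP k 0 = _
    rw [show ((0:ℤ)) = ((0:ℕ) : ℤ) by norm_num, AP_coe, aP_zero']
    ring
  · obtain ⟨N, rfl⟩ : ∃ N : ℕ, n = (N : ℤ) := ⟨n.toNat, by omega⟩
    have hN : 0 < N := by exact_mod_cast h
    rw [if_neg (by omega)]
    obtain ⟨N', rfl⟩ : ∃ N', N = N' + 1 := ⟨N - 1, by omega⟩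
    rcases Nat.lt_or_ge N' (k - 1) with hsm | hbig
    · -- N = N'+1 < k : everything is zero
      rw [AP_coe, aP_succ, if_neg (by omega), if_neg (by omega),
        AP_neg k _ (by push_cast; omega), AP_neg k _ (by push_cast; omega)]
      ring
    · rw [AP_coe, aP_succ, if_pos (by omega)]
      have c1 : ((N' : ℤ) + 1 - k) = ((N' + 1 - k : ℕ) : ℤ) := by push_cast; omega
      rw [show ((N' + 1 : ℕ) : ℤ) - k = ((N' + 1 - k : ℕ) : ℤ) by push_cast; omega,
        AP_coe]
      rcases Nat.lt_or_ge N' k with heq | hge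
      · -- N' + 1 = k exactly: second branch off, and n - k - 1 < 0
        have : N' + 1 = k := by omega
        rw [if_neg (by omega), AP_neg k _ (by push_cast; omega)]
        ring
      · rw [if_pos (by omega),
          show ((N' + 1 - k : ℕ) : ℤ) - 1 = ((N' - k : ℕ) : ℤ) by push_cast; omega,
          AP_coe]
        ring

lemma sumB (k : ℕ) (hk : 2 ≤ k) (n : ℤ) (hn : (k : ℤ) ≤ n) :
    ∑ j ∈ range k, X ^ j * AP k (n - j) =
      X ^ k * (∑ j ∈ range k, X ^ j * AP k (n - k - j)) +
        AP k (n - k) - X ^ k * AP k (n - 2 * k) := by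
  have expand : ∀ j ∈ range k,
      X ^ j * AP k (n - j) =
        (X ^ j * AP k (n - k - j) + X ^ k * (X ^ j * AP k (n - k - j)))
          - X ^ (j + 1) * AP k (n - k - (j + 1)) := by
    intro j hj
    have hj' : (j : ℤ) < k := by exact_mod_cast mem_range.mp hj
    rw [AP_rec k hk (n - j), if_neg (by omega)]
    rw [show n - j - k - 1 = n - k - (j + 1) by push_cast; ring,
      show n - j - k = n - k - j by ring]
    ring
  rw [Finset.sum_congr rfl expand, Finset.sum_sub_distrib, Finset.sum_add_distrib]
  have hT1 : ∑ j ∈ range k, X ^ k * (X ^ j * AP k (n - k - j)) =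
      X ^ k * ∑ j ∈ range k, X ^ j * AP k (n - k - j) := by
    rw [Finset.mul_sum]
  -- the shifted sum
  have hT2 : ∑ j ∈ range k, X ^ (j + 1) * AP k (n - k - (j + 1)) =
      (∑ j ∈ range k, X ^ j * AP k (n - k - j)) + X ^ k * AP k (n - 2 * k)
        - AP k (n - k) := by
    have h1 : ∑ j ∈ range (k + 1), X ^ j * AP k (n - k - j) =
        (∑ j ∈ range k, X ^ j * AP k (n - k - j)) + X ^ k * AP k (n - k - k) :=
      Finset.sum_range_succ _ k
    have h2 : ∑ j ∈ range (k + 1), X ^ j * AP k (n - k - j) =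
        (∑ j ∈ range k, X ^ (j + 1) * AP k (n - k - (j + 1))) +
          X ^ 0 * AP k (n - k - 0) := by
      exact Finset.sum_range_succ' (fun j => X ^ j * AP k (n - k - j)) k
    rw [h1] at h2
    rw [show n - 2 * k = n - k - k by ring]
    simp only [pow_zero, one_mul, sub_zero] at h2 ⊢
    linear_combination -h2
  rw [hT1, hT2]
  push_cast
  ring

lemma keyAP (k : ℕ) (hk : 2 ≤ k) (n : ℤ) (hn : (k : ℤ) ≤ n) :
    ∑ j ∈ range k, X ^ j * (AP k (n - j) - X ^ k * AP k (n - k - j)) =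
      AP k (n - k) - X ^ k * AP k (n - 2 * k) := by
  have h : ∀ j ∈ range k,
      X ^ j * (AP k (n - j) - X ^ k * AP k (n - k - j)) =
        X ^ j * AP k (n - j) - X ^ k * (X ^ j * AP k (n - k - j)) := by
    intro j _; ring
  rw [Finset.sum_congr rfl h, Finset.sum_sub_distrib, ← Finset.mul_sum,
    sumB k hk n hn]
  ring

lemma master (k : ℕ) (hk : 2 ≤ k) (F : ℤ → Polynomial ℤ)
    (hrec : ∀ n : ℤ, F n = ∑ i ∈ Finset.range k, X ^ (k - 1 - i) * F (n - 1 - (i : ℤ)))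
    (hF1 : F 1 = 1)
    (hF0 : ∀ m : ℕ, m ≤ k - 2 → F (-(m : ℤ)) = 0) :
    ∀ N : ℕ, F (1 - (N : ℤ)) = AP k (N : ℤ) - X ^ k * AP k ((N : ℤ) - k) := by
  have hk1 : k = (k - 1) + 1 := by omega
  have hsplit : ∀ g : ℕ → Polynomial ℤ,
      ∑ i ∈ range k, g i = (∑ i ∈ range (k - 1), g i) + g (k - 1) := by
    intro g
    conv_lhs => rw [hk1]
    exact Finset.sum_range_succ g (k - 1)
  have hsplit' : ∀ g : ℕ → Polynomial ℤ,
      ∑ i ∈ range k, g i = (∑ i ∈ range (k - 1), g (i + 1)) + g 0 := by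
    intro g
    conv_lhs => rw [hk1]
    exact Finset.sum_range_succ' g (k - 1)
  intro N
  induction N using Nat.strong_induction_on with
  | _ N ih =>
  rcases Nat.lt_or_ge N 1 with h0 | h1
  · have hN0 : N = 0 := by omega
    subst hN0
    rw [AP_coe k 0, aP_zero', AP_neg k _ (by push_cast; omega)]
    simp [hF1]
  rcases Nat.lt_or_ge N k with hsm | hbig
  · -- 1 ≤ N < k : both sides zero
    rw [show (1 - (N : ℤ)) = -(((N - 1 : ℕ)) : ℤ) by push_cast; omega,
      hF0 (N - 1) (by omega), AP_coe, aP_small k hk N h1 hsm,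
      AP_neg k _ (by push_cast; omega)]
    ring
  · -- main case k ≤ N
    have hr := hrec (1 - (N : ℤ) + k)
    have hpeel := hsplit (fun i => X ^ (k - 1 - i) * F (1 - (N : ℤ) + k - 1 - i))
    have hlast : X ^ (k - 1 - (k - 1)) * F (1 - (N : ℤ) + k - 1 - ((k - 1 : ℕ) : ℤ)) =
        F (1 - (N : ℤ)) := by
      rw [Nat.sub_self, pow_zero, one_mul,
        show (1 - (N : ℤ) + k - 1 - ((k - 1 : ℕ) : ℤ)) = 1 - (N : ℤ) by omega]
    rw [hpeel, hlast] at hr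
    have hstep : F (1 - (N : ℤ)) = F (1 - (N : ℤ) + k) -
        ∑ i ∈ range (k - 1), X ^ (k - 1 - i) * F (1 - (N : ℤ) + k - 1 - i) := by
      linear_combination -hr
    have hFk : F (1 - (N : ℤ) + k) =
        AP k ((N : ℤ) - k) - X ^ k * AP k ((N : ℤ) - 2 * k) := by
      rw [show (1 - (N : ℤ) + k) = 1 - ((N - k : ℕ) : ℤ) by omega,
        ih (N - k) (by omega),
        show ((N - k : ℕ) : ℤ) = (N : ℤ) - k by omega,
        show (N : ℤ) - k - k = (N : ℤ) - 2 * k by ring]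
    have hsum : ∑ i ∈ range (k - 1), X ^ (k - 1 - i) * F (1 - (N : ℤ) + k - 1 - i) =
        ∑ i ∈ range (k - 1), X ^ (k - 1 - i) *
          (AP k ((N : ℤ) - ((k - 1 - i : ℕ) : ℤ)) -
            X ^ k * AP k ((N : ℤ) - k - ((k - 1 - i : ℕ) : ℤ))) := by
      refine Finset.sum_congr rfl fun i hi => ?_
      have hik : i < k - 1 := mem_range.mp hi
      rw [show (1 - (N : ℤ) + k - 1 - i) = 1 - ((N - (k - 1 - i) : ℕ) : ℤ) by omega,
        ih (N - (k - 1 - i)) (by omega),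
        show ((N - (k - 1 - i) : ℕ) : ℤ) = (N : ℤ) - ((k - 1 - i : ℕ) : ℤ) by omega,
        show (N : ℤ) - ((k - 1 - i : ℕ) : ℤ) - k
          = (N : ℤ) - k - ((k - 1 - i : ℕ) : ℤ) by ring]
    rw [hstep, hFk, hsum]
    -- now pure AP algebra
    have hkey := keyAP k hk (N : ℤ) (by exact_mod_cast hbig)
    rw [hsplit' (fun j => X ^ j *
      (AP k ((N : ℤ) - j) - X ^ k * AP k ((N : ℤ) - k - j)))] at hkey
    simp only [pow_zero, one_mul, Nat.cast_zero, sub_zero] at hkey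
    have hrefl : ∑ i ∈ range (k - 1), X ^ (k - 1 - i) *
          (AP k ((N : ℤ) - ((k - 1 - i : ℕ) : ℤ)) -
            X ^ k * AP k ((N : ℤ) - k - ((k - 1 - i : ℕ) : ℤ))) =
        ∑ j ∈ range (k - 1), X ^ (j + 1) *
          (AP k ((N : ℤ) - ((j + 1 : ℕ) : ℤ)) -
            X ^ k * AP k ((N : ℤ) - k - ((j + 1 : ℕ) : ℤ))) := by
      rw [← Finset.sum_range_reflect
        (fun j => X ^ (j + 1) * (AP k ((N : ℤ) - ((j + 1 : ℕ) : ℤ)) -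
          X ^ k * AP k ((N : ℤ) - k - ((j + 1 : ℕ) : ℤ)))) (k - 1)]
      refine Finset.sum_congr rfl fun i hi => ?_
      have hik : i < k - 1 := mem_range.mp hi
      have e1 : k - 1 - 1 - i + 1 = k - 1 - i := by omega
      simp only [e1]
    linear_combination -hkey - hrefl

/-- For `n ≤ 0`, the `k`-generalized Fibonacci polynomial `F n` is the zero
polynomial iff `|n|` lies in one of the intervals `[s(k+1), (s+1)k - 2]` with `0 ≤ s ≤ k-2`. -/
theorem fib_poly_vanishing_intervals (k : ℕ) (hk : 2 ≤ k)
    (F : ℤ → Polynomial ℤ)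
    (hrec : ∀ n : ℤ, F n = ∑ i ∈ Finset.range k, X ^ (k - 1 - i) * F (n - 1 - (i : ℤ)))
    (hF1 : F 1 = 1)
    (hF0 : ∀ m : ℕ, m ≤ k - 2 → F (-(m : ℤ)) = 0)
    (n : ℤ) (hn : n ≤ 0) :
    F n = 0 ↔ ∃ s : ℕ, s ≤ k - 2 ∧
      ((s : ℤ) * (k + 1) ≤ |n| ∧ |n| ≤ ((s : ℤ) + 1) * k - 2) := by
  set M := n.natAbs with hMdef
  have hnM : n = -(M : ℤ) := by omega
  have habs : |n| = (M : ℤ) := by rw [Int.abs_eq_natAbs]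
  have hmaster := master k hk F hrec hF1 hF0 (M + 1)
  have hFn : F n = aP k (M + 1) - X ^ k * AP k ((M : ℤ) + 1 - k) := by
    rw [hnM, show (-(M : ℤ)) = 1 - ((M + 1 : ℕ) : ℤ) by push_cast; ring, hmaster,
      AP_coe, show ((M + 1 : ℕ) : ℤ) - k = (M : ℤ) + 1 - k by push_cast; ring]
  have hqr : k * ((M + 1) / k) + (M + 1) % k = M + 1 := Nat.div_add_mod (M + 1) k
  set q := (M + 1) / k with hqdef
  set r := (M + 1) % k with hrdef
  have hrk : r < k := Nat.mod_lt _ (by omega)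
  have hq' : (k : ℤ) * q + r = (M : ℤ) + 1 := by exact_mod_cast hqr
  constructor
  · intro hF
    rcases Nat.lt_or_ge q r with hlt | hge
    · refine ⟨q, by omega, ?_, ?_⟩
      · rw [habs]
        have hlt' : (q : ℤ) + 1 ≤ r := by exact_mod_cast hlt
        nlinarith [hq']
      · rw [habs]
        have hrk' : (r : ℤ) < k := by exact_mod_cast hrk
        nlinarith [hq']
    · exfalso
      have hco : (F n).coeff r = (-1) ^ r * ((q.choose r : ℕ) : ℤ) := by
        rw [hFn, Polynomial.coeff_sub,
          show M + 1 = k * q + r from hqr.symm, aP_coeff k hk q r hrk hge]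
        have hx : (X ^ k * AP k ((M : ℤ) + 1 - k)).coeff r = 0 := by
          rw [mul_comm, Polynomial.coeff_mul_X_pow']
          simp [Nat.not_le.mpr hrk]
        rw [hx, sub_zero]
      rw [hF, Polynomial.coeff_zero] at hco
      have hpos := Nat.choose_pos hge
      rcases mul_eq_zero.mp hco.symm with h | h
      · exact pow_ne_zero _ (by norm_num : (-1 : ℤ) ≠ 0) h
      · have : q.choose r = 0 := by exact_mod_cast h
        omega
  · rintro ⟨s, hs, h1, h2⟩
    rw [habs] at h1 h2
    have hks : k * s + (s + 1) ≤ M + 1 := by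
      have e : (k : ℤ) * s + (s + 1) ≤ (M : ℤ) + 1 := by nlinarith [h1]
      exact_mod_cast e
    have hks2 : M + 1 ≤ k * s + (k - 1) := by
      have e : (M : ℤ) + 1 ≤ (k : ℤ) * s + (k - 1) := by nlinarith [h2]
      have e2 : (M : ℤ) + 1 ≤ ((k * s + (k - 1) : ℕ) : ℤ) := by push_cast; omega
      exact_mod_cast e2
    have hr'' : M + 1 = k * s + (M + 1 - k * s) := by omega
    have haP : aP k (M + 1) = 0 := by
      rw [hr'']
      exact aP_eq_zero k hk s _ (by omega) (by omega)
    rcases lt_or_ge ((M : ℤ) + 1 - k) 0 with hneg | hpos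
    · rw [hFn, haP, AP_neg k _ hneg]
      simp
    · have hk_le : k ≤ M + 1 := by omega
      obtain ⟨s', rfl⟩ : ∃ s', s = s' + 1 := by
        refine ⟨s - 1, ?_⟩
        rcases Nat.eq_zero_or_pos s with rfl | hs1
        · simp at hks2; omega
        · omega
      have hmul : k * (s' + 1) = k * s' + k := Nat.mul_succ k s'
      have hcoe : AP k ((M : ℤ) + 1 - k) = aP k (M + 1 - k) := by
        rw [show (M : ℤ) + 1 - k = ((M + 1 - k : ℕ) : ℤ) by omega, AP_coe]
      have haP2 : aP k (M + 1 - k) = 0 := by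
        rw [show M + 1 - k = k * s' + (M + 1 - k * (s' + 1)) by omega]
        exact aP_eq_zero k hk s' _ (by omega) (by omega)
      rw [hFn, haP, hcoe, haP2]
      simp
end

section
/- Let k ≥ 2 be an integer. In the ring of formal power series in w with coefficients in ℤ[x], the generating function of the k-generalized Fibonacci polynomials at nonpositive indices satisfies (1 − (1 + x^k)·w^k + x·w^{k+1}) · Σ_{m=0}^∞ 𝓕_{−m,k}(x)·w^m = w^{k−1} − x·w^k. -/
open Polynomial

/-- In `(ℤ[x])⟦w⟧`, the generating function of the `k`-generalized Fibonacci
polynomials at nonpositive indices satisfies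
`(1 - (1 + x^k) w^k + x w^(k+1)) · Σ_m F(-m) w^m = w^(k-1) - x w^k`. -/
theorem fib_poly_neg_genfun (k : ℕ) (hk : 2 ≤ k)
    (F : ℤ → Polynomial ℤ)
    (hrec : ∀ n : ℤ, F n = ∑ i ∈ Finset.range k, X ^ (k - 1 - i) * F (n - 1 - (i : ℤ)))
    (hF1 : F 1 = 1)
    (hF0 : ∀ m : ℕ, m ≤ k - 2 → F (-(m : ℤ)) = 0) :
    (1 - PowerSeries.C (R := Polynomial ℤ) (1 + X ^ k) * PowerSeries.X ^ k
        + PowerSeries.C (R := Polynomial ℤ) X * PowerSeries.X ^ (k + 1)) *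
      PowerSeries.mk (fun m : ℕ => F (-(m : ℤ))) =
    PowerSeries.X ^ (k - 1) - PowerSeries.C (R := Polynomial ℤ) X * PowerSeries.X ^ k := by
  obtain ⟨j, rfl⟩ : ∃ j, k = j + 1 := ⟨k - 1, by omega⟩
  have hj : 1 ≤ j := by omega
  -- key recurrence
  have key : ∀ n : ℤ, F (n - (j + 1)) = (1 + X ^ (j + 1)) * F n - X * F (n + 1) := by
    intro n
    have h1 := hrec n
    have h2 := hrec (n + 1)
    rw [Finset.sum_range_succ] at h1
    rw [Finset.sum_range_succ'] at h2
    simp only [Nat.add_sub_cancel] at h1 h2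
    have hterm : ∀ i ∈ Finset.range j,
        X * (X ^ (j - (i + 1)) * F (n + 1 - 1 - ((i + 1 : ℕ) : ℤ)))
        = X ^ (j - i) * F (n - 1 - (i : ℤ)) := by
      intro i hi
      simp only [Finset.mem_range] at hi
      have e : n + 1 - 1 - ((i + 1 : ℕ) : ℤ) = n - 1 - (i : ℤ) := by push_cast; ring
      rw [e, ← mul_assoc, ← pow_succ']
      congr 2
      omega
    have h2' : X * F (n + 1) = (∑ i ∈ Finset.range j, X ^ (j - i) * F (n - 1 - (i:ℤ)))
        + X ^ (j + 1) * F n := by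
      rw [h2, mul_add, Finset.mul_sum, Finset.sum_congr rfl hterm]
      congr 1
      rw [← mul_assoc, ← pow_succ']
      have e : n + 1 - 1 - ((0 : ℕ) : ℤ) = n := by push_cast; ring
      rw [e]
      norm_num
    have h1' : F n = (∑ i ∈ Finset.range j, X ^ (j - i) * F (n - 1 - (i:ℤ)))
        + F (n - (j + 1)) := by
      have e1 : j - j = 0 := by omega
      have e2 : n - 1 - (j : ℤ) = n - (j + 1) := by ring
      rw [h1, e1, pow_zero, one_mul, e2]
    linear_combination h2' - h1'
  have hF0' : F 0 = 0 := by
    have := hF0 0 (by omega)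
    simpa using this
  have hFk1 : F (-(j : ℤ)) = 1 := by
    have h := hrec 1
    rw [Finset.sum_range_succ] at h
    simp only [Nat.add_sub_cancel] at h
    have hz : ∀ i ∈ Finset.range j, X ^ (j - i) * F (1 - 1 - (i:ℤ)) = 0 := by
      intro i hi
      simp only [Finset.mem_range] at hi
      have : F (1 - 1 - (i:ℤ)) = 0 := by
        have := hF0 i (by omega)
        rw [← this]; congr 1; ring
      rw [this, mul_zero]
    rw [Finset.sum_eq_zero hz, zero_add] at h
    have e1 : j - j = 0 := by omega
    have e2 : (1:ℤ) - 1 - (j:ℤ) = -(j:ℤ) := by ring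
    rw [e1, pow_zero, one_mul, hF1, e2] at h
    exact h.symm
  have hFk : F (-((j:ℤ) + 1)) = -X := by
    have h := key 0
    simp only [zero_add, zero_sub] at h
    rw [hF0', hF1, mul_zero, mul_one, zero_sub] at h
    exact h
  -- expand the product
  have expand : (1 - PowerSeries.C (R := Polynomial ℤ) (1 + X ^ (j+1)) * PowerSeries.X ^ (j+1)
        + PowerSeries.C (R := Polynomial ℤ) X * PowerSeries.X ^ ((j+1) + 1)) *
      PowerSeries.mk (fun m : ℕ => F (-(m : ℤ))) =
      PowerSeries.mk (fun m : ℕ => F (-(m : ℤ)))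
      - (PowerSeries.C (R := Polynomial ℤ) (1 + X ^ (j+1)) * PowerSeries.mk (fun m : ℕ => F (-(m : ℤ)))) * PowerSeries.X ^ (j+1)
      + (PowerSeries.C (R := Polynomial ℤ) X * PowerSeries.mk (fun m : ℕ => F (-(m : ℤ)))) * PowerSeries.X ^ ((j+1)+1) := by
    ring
  set a : Polynomial ℤ := 1 + X ^ (j + 1) with ha
  rw [expand]
  refine PowerSeries.ext fun m => ?_
  simp only [map_add, map_sub, PowerSeries.coeff_mul_X_pow', PowerSeries.coeff_C_mul,
    PowerSeries.coeff_mk, PowerSeries.coeff_X_pow, Nat.add_sub_cancel]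
  rcases lt_trichotomy m j with hm | rfl | hm
  · rw [if_neg (by omega), if_neg (by omega), if_neg (by omega), if_neg (by omega)]
    have := hF0 m (by omega)
    rw [this]; ring
  · rw [if_neg (by omega), if_neg (by omega), if_pos rfl, if_neg (by omega)]
    rw [hFk1]; ring
  · rcases Nat.eq_or_lt_of_le hm with hm1 | hm2
    · -- m = j + 1
      rw [if_pos (by omega), if_neg (by omega), if_neg (by omega), if_pos (by omega)]
      have e : (-(↑(m - (j+1)) : ℤ)) = 0 := by
        have : m = j + 1 := by omega
        subst this; simp
      rw [e, hF0']
      have e2 : (-(m : ℤ)) = -((j:ℤ)+1) := by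
        have : m = j + 1 := by omega
        subst this; push_cast; ring
      rw [e2, hFk, PowerSeries.coeff_C, if_pos (by omega : m - (j + 1) = 0)]; ring
    · rw [if_pos (by omega), if_pos (by omega), if_neg (by omega), if_pos (by omega),
        PowerSeries.coeff_C, if_neg (by omega : ¬ m - (j + 1) = 0)]
      have h := key ((j:ℤ) + 1 - m)
      have e3 : ((j:ℤ) + 1 - m - (j + 1)) = -m := by ring
      have e4 : (-(↑(m - (j+1)) : ℤ)) = (j:ℤ) + 1 - m := by
        push_cast [Nat.cast_sub (by omega : j + 1 ≤ m)]; ring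
      have e5 : (-(↑(m - (j+1+1)) : ℤ)) = (j:ℤ) + 1 - m + 1 := by
        push_cast [Nat.cast_sub (by omega : j + 1 + 1 ≤ m)]; ring
      rw [e3] at h
      rw [e4, e5, h, ha]
      ring
end

section
/- Let k ≥ 2 be an integer and let n ≤ 0 be an integer, and set q = q_{n,k} and r = r_{n,k}. Then the coefficient of x^j in 𝓕_{n,k}(x) is zero for every j < r, and the coefficient of x^r in 𝓕_{n,k}(x) equals (−1)^r · C(q, r) (which is zero when q < r). In particular, if q ≥ r then 𝓕_{n,k} is not the zero polynomial. -/
open Polynomial Finset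

private lemma alt_sum (q r : ℕ) (hq : 1 ≤ q) :
    ∑ s ∈ Finset.range (r + 1), (-1 : ℤ) ^ s * (q.choose s : ℤ)
      = (-1) ^ r * ((q - 1).choose r : ℤ) := by
  obtain ⟨q', rfl⟩ : ∃ q', q = q' + 1 := ⟨q - 1, by omega⟩
  induction r with
  | zero => simp
  | succ r ih =>
    rw [Finset.sum_range_succ, ih]
    simp only [Nat.add_sub_cancel, Nat.choose_succ_succ]
    push_cast
    ring

private lemma key (k : ℕ) (hk : 2 ≤ k) (F : ℤ → Polynomial ℤ)
    (hrec : ∀ n : ℤ, F n = ∑ i ∈ Finset.range k, X ^ (k - 1 - i) * F (n - 1 - (i : ℤ)))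
    (hF1 : F 1 = 1)
    (hF0 : ∀ m : ℕ, m ≤ k - 2 → F (-(m : ℤ)) = 0) (m : ℕ) :
    (∀ j, j < (m + 1) % k → (F (-(m : ℤ))).coeff j = 0) ∧
      (F (-(m : ℤ))).coeff ((m + 1) % k)
        = (-1) ^ ((m + 1) % k) * (((m + 1) / k).choose ((m + 1) % k) : ℤ) := by
  have hk0 : 0 < k := by omega
  induction m using Nat.strong_induction_on with
  | _ m IH =>
  rcases lt_trichotomy m (k - 1) with hm | hm | hm
  · -- small case: F vanishes
    have h0 : F (-(m : ℤ)) = 0 := hF0 m (by omega)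
    have hmod : (m + 1) % k = m + 1 := Nat.mod_eq_of_lt (by omega)
    have hdiv : (m + 1) / k = 0 := Nat.div_eq_of_lt (by omega)
    rw [h0, hmod, hdiv]
    exact ⟨fun j _ => coeff_zero j, by
      simp [Nat.choose_eq_zero_of_lt (by omega : 0 < m + 1)]⟩
  · -- m = k - 1 : F (-(k-1)) = 1
    have hFm : F (-(m : ℤ)) = 1 := by
      have h := hrec 1
      obtain ⟨k', hk'⟩ : ∃ k', k = k' + 1 := ⟨k - 1, by omega⟩
      rw [hk', Finset.sum_range_succ] at h
      have hz : ∀ i ∈ Finset.range k', X ^ (k' + 1 - 1 - i) * F (1 - 1 - (i : ℤ)) = 0 := by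
        intro i hi
        simp only [Finset.mem_range] at hi
        have : (1 : ℤ) - 1 - (i : ℤ) = -(i : ℤ) := by ring
        rw [this, hF0 i (by omega), mul_zero]
      rw [Finset.sum_eq_zero hz, zero_add] at h
      have e : (1 : ℤ) - 1 - (k' : ℤ) = -((m : ℕ) : ℤ) := by
        have : m = k' := by omega
        subst this; push_cast; ring
      rw [e] at h
      have e2 : k' + 1 - 1 - k' = 0 := by omega
      rw [e2, pow_zero, one_mul] at h
      rw [← h, hF1]
    have hmod : (m + 1) % k = 0 := by
      have : m + 1 = k := by omega
      simp [this]
    have hdiv : (m + 1) / k = 1 := by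
      have : m + 1 = k := by omega
      simp [this, Nat.div_self hk0]
    rw [hFm, hmod, hdiv]
    exact ⟨fun j hj => by omega, by simp⟩
  · -- main case : m ≥ k
    obtain ⟨m', rfl⟩ : ∃ m', m = m' + k := ⟨m - k, by omega⟩
    -- quotient/remainder facts
    have hq1 : 1 ≤ (m' + k + 1) / k := (Nat.one_le_div_iff hk0).mpr (by omega)
    obtain ⟨q', hq'⟩ : ∃ q', (m' + k + 1) / k = q' + 1 :=
      ⟨(m' + k + 1) / k - 1, by omega⟩
    set r := (m' + k + 1) % k with hrdef
    have hrk : r < k := Nat.mod_lt _ hk0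
    have hqr : k * (q' + 1) + r = m' + k + 1 := by
      rw [← hq']; exact Nat.div_add_mod _ _
    have e1 : m' + 1 = k * q' + r := by
      rw [Nat.mul_succ] at hqr; omega
    have hm'mod : (m' + 1) % k = r := by
      rw [e1, Nat.mul_add_mod, Nat.mod_eq_of_lt hrk]
    have hm'div : (m' + 1) / k = q' := by
      rw [e1, Nat.mul_add_div hk0, Nat.div_eq_of_lt hrk, add_zero]
    -- rearranged recurrence
    have hrec' : F (-((m' + k : ℕ) : ℤ)) = F (-((m' : ℕ) : ℤ))
        - ∑ i ∈ Finset.range (k - 1),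
            X ^ (k - 1 - i) * F (-((m' + 1 + i : ℕ) : ℤ)) := by
      have h := hrec (-((m' : ℕ) : ℤ))
      obtain ⟨k'', hk''⟩ : ∃ k'', k = k'' + 1 := ⟨k - 1, by omega⟩
      rw [hk'', Finset.sum_range_succ] at h
      have e2 : k'' + 1 - 1 - k'' = 0 := by omega
      have e3 : -((m' : ℕ) : ℤ) - 1 - (k'' : ℤ) = -((m' + k : ℕ) : ℤ) := by
        push_cast [hk'']; ring
      rw [e2, pow_zero, one_mul, e3] at h
      have e4 : ∀ i ∈ Finset.range k'',
          X ^ (k'' + 1 - 1 - i) * F (-((m' : ℕ) : ℤ) - 1 - (i : ℤ))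
            = X ^ (k - 1 - i) * F (-((m' + 1 + i : ℕ) : ℤ)) := by
        intro i hi
        have : -((m' : ℕ) : ℤ) - 1 - (i : ℤ) = -((m' + 1 + i : ℕ) : ℤ) := by
          push_cast; ring
        rw [this, hk'']
      rw [Finset.sum_congr rfl e4] at h
      have hkk : k - 1 = k'' := by omega
      rw [← hkk] at h
      rw [h]; ring
    -- coefficient formula
    have hcoeff : ∀ t : ℕ, (F (-((m' + k : ℕ) : ℤ))).coeff t
        = (F (-((m' : ℕ) : ℤ))).coeff t
          - ∑ i ∈ Finset.range (k - 1),
              (if k - 1 - i ≤ t then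
                (F (-((m' + 1 + i : ℕ) : ℤ))).coeff (t - (k - 1 - i)) else 0) := by
      intro t
      rw [hrec', coeff_sub, finset_sum_coeff]
      congr 1
      refine Finset.sum_congr rfl fun i hi => ?_
      rw [mul_comm, coeff_mul_X_pow']
    -- facts about intermediate indices, for i < k-1 with k-1-i ≤ r
    have hmodi : ∀ i < k - 1, k - 1 - i ≤ r →
        (m' + 1 + i + 1) % k = r - (k - 1 - i) ∧ (m' + 1 + i + 1) / k = q' + 1 := by
      intro i hi ha
      have e2 : m' + 1 + i + 1 = k * (q' + 1) + (r - (k - 1 - i)) := by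
        rw [Nat.mul_succ]; omega
      constructor
      · rw [e2, Nat.mul_add_mod, Nat.mod_eq_of_lt (by omega)]
      · rw [e2, Nat.mul_add_div hk0, Nat.div_eq_of_lt (by omega), add_zero]
    rw [hq']
    constructor
    · -- part 1
      intro j hj
      rw [hcoeff j]
      have h1 : (F (-((m' : ℕ) : ℤ))).coeff j = 0 :=
        (IH m' (by omega)).1 j (by rw [hm'mod]; exact hj)
      rw [h1, zero_sub, neg_eq_zero]
      refine Finset.sum_eq_zero fun i hi => ?_
      simp only [Finset.mem_range] at hi
      split_ifs with ha
      · have h2 := hmodi i hi (by omega)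
        exact (IH (m' + 1 + i) (by omega)).1 _ (by rw [h2.1]; omega)
      · rfl
    · -- part 2
      rw [hcoeff r]
      have h1 : (F (-((m' : ℕ) : ℤ))).coeff r = (-1) ^ r * (q'.choose r : ℤ) := by
        have := (IH m' (by omega)).2
        rwa [hm'mod, hm'div] at this
      have h2 : ∑ i ∈ Finset.range (k - 1),
          (if k - 1 - i ≤ r then
            (F (-((m' + 1 + i : ℕ) : ℤ))).coeff (r - (k - 1 - i)) else 0)
          = ∑ s ∈ Finset.range r, (-1 : ℤ) ^ s * ((q' + 1).choose s : ℤ) := by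
        calc ∑ i ∈ Finset.range (k - 1),
            (if k - 1 - i ≤ r then
              (F (-((m' + 1 + i : ℕ) : ℤ))).coeff (r - (k - 1 - i)) else 0)
            = ∑ i ∈ Finset.range (k - 1),
              (if k - 1 - i ≤ r then
                (-1 : ℤ) ^ (r - (k - 1 - i)) *
                  ((q' + 1).choose (r - (k - 1 - i)) : ℤ) else 0) := by
              refine Finset.sum_congr rfl fun i hi => ?_
              simp only [Finset.mem_range] at hi
              split_ifs with ha
              · have hmi := hmodi i hi ha
                have hIH := (IH (m' + 1 + i) (by omega)).2
                rwa [hmi.1, hmi.2] at hIH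
              · rfl
          _ = ∑ j ∈ Finset.range (k - 1),
              (if j + 1 ≤ r then
                (-1 : ℤ) ^ (r - (j + 1)) * ((q' + 1).choose (r - (j + 1)) : ℤ)
              else 0) := by
              rw [← Finset.sum_range_reflect]
              refine Finset.sum_congr rfl fun i hi => ?_
              simp only [Finset.mem_range] at hi
              rw [show k - 1 - (k - 1 - 1 - i) = i + 1 from by omega]
          _ = ∑ j ∈ Finset.range r,
              (if j + 1 ≤ r then
                (-1 : ℤ) ^ (r - (j + 1)) * ((q' + 1).choose (r - (j + 1)) : ℤ)
              else 0) :=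
              (Finset.sum_subset (Finset.range_subset_range.mpr (by omega))
                (fun x _ hx => by
                  simp only [Finset.mem_range, not_lt] at hx
                  rw [if_neg (by omega)])).symm
          _ = ∑ j ∈ Finset.range r,
              (-1 : ℤ) ^ (r - 1 - j) * ((q' + 1).choose (r - 1 - j) : ℤ) := by
              refine Finset.sum_congr rfl fun j hj => ?_
              simp only [Finset.mem_range] at hj
              rw [if_pos (by omega), show r - (j + 1) = r - 1 - j from by omega]
          _ = ∑ s ∈ Finset.range r, (-1 : ℤ) ^ s * ((q' + 1).choose s : ℤ) := by
              exact Finset.sum_range_reflect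
                (fun s => (-1 : ℤ) ^ s * ((q' + 1).choose s : ℤ)) r
      rw [h1, h2]
      have h3 := alt_sum (q' + 1) r (by omega)
      rw [Finset.sum_range_succ, Nat.add_sub_cancel] at h3
      linarith

/-- For `n ≤ 0`, with `q = ⌊(|n|+1)/k⌋` and `r = (|n|+1) mod k`, the lowest
term of the `k`-generalized Fibonacci polynomial `F n` is `(-1)^r C(q,r) x^r`; in particular
if `q ≥ r` then `F n` is not the zero polynomial. -/
theorem fib_poly_lowest_term_neg (k : ℕ) (hk : 2 ≤ k)
    (F : ℤ → Polynomial ℤ)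
    (hrec : ∀ n : ℤ, F n = ∑ i ∈ Finset.range k, X ^ (k - 1 - i) * F (n - 1 - (i : ℤ)))
    (hF1 : F 1 = 1)
    (hF0 : ∀ m : ℕ, m ≤ k - 2 → F (-(m : ℤ)) = 0)
    (n : ℤ) (hn : n ≤ 0) (q r : ℕ)
    (hq : q = ((-n).toNat + 1) / k)
    (hr : r = ((-n).toNat + 1) % k) :
    (∀ j : ℕ, j < r → (F n).coeff j = 0) ∧
    (F n).coeff r = (-1) ^ r * (q.choose r : ℤ) ∧
    (r ≤ q → F n ≠ 0) := by
  have h := key k hk F hrec hF1 hF0 (-n).toNat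
  rw [show -(((-n).toNat : ℕ) : ℤ) = n from by omega, ← hq, ← hr] at h
  refine ⟨h.1, h.2, fun hle hFz => ?_⟩
  have hc : (0 : ℤ) = (-1) ^ r * (q.choose r : ℤ) := by
    have := h.2
    rwa [hFz, coeff_zero] at this
  have hne : (q.choose r : ℤ) ≠ 0 := by
    exact_mod_cast (Nat.choose_pos hle).ne'
  exact mul_ne_zero (pow_ne_zero r (by norm_num : (-1 : ℤ) ≠ 0)) hne hc.symm
end

section
/- Let k ≥ 2 be an integer and n ≤ 0 an integer with q_{n,k} ≥ r_{n,k} (so 𝓕_{n,k} ≠ 0), and write q = q_{n,k}, r = r_{n,k}. If r = 0, then 𝓕_{n,k} has degree |n| + 1 − k and leading coefficient 1. If 1 ≤ r ≤ k−1, then 𝓕_{n,k} has degree |n| + 1 − k·r and leading coefficient (−1)^r · C(q−1, r−1). -/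
open Polynomial

noncomputable def AA (k : ℕ) (M : ℕ) : Polynomial ℤ :=
  if M = 0 then 1
  else if h : M ≤ k ∨ k ≤ 1 then (if M = k then 1 + X ^ k else 0)
  else (1 + X ^ k) * AA k (M - k) - X * AA k (M - k - 1)
termination_by M
decreasing_by all_goals omega

noncomputable def Az (k : ℕ) (i : ℤ) : Polynomial ℤ := if 0 ≤ i then AA k i.toNat else 0

noncomputable def Gz (k : ℕ) (i : ℤ) : Polynomial ℤ := Az k i - X ^ k * Az k (i - k)

lemma AA_zero (k : ℕ) : AA k 0 = 1 := by rw [AA]; simp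

lemma Az_coe (k : ℕ) (m : ℕ) : Az k (m : ℤ) = AA k m := by simp [Az]

lemma Az_neg (k : ℕ) {i : ℤ} (h : i < 0) : Az k i = 0 := by simp [Az, not_le.mpr h]

lemma AA_small (k : ℕ) {M : ℕ} (h0 : M ≠ 0) (h1 : M < k) : AA k M = 0 := by
  rw [AA, if_neg h0, dif_pos (Or.inl h1.le), if_neg (by omega)]

lemma AA_diag (k : ℕ) (hk : 2 ≤ k) : AA k k = 1 + X ^ k := by
  rw [AA, if_neg (by omega), dif_pos (Or.inl le_rfl), if_pos rfl]

lemma AA_big (k : ℕ) (hk : 2 ≤ k) {M : ℕ} (h : k < M) :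
    AA k M = (1 + X ^ k) * AA k (M - k) - X * AA k (M - k - 1) := by
  rw [AA, if_neg (by omega), dif_neg (by omega)]

lemma Az_rec (k : ℕ) (hk : 2 ≤ k) (i : ℤ) (hi : 1 ≤ i) :
    Az k i = (1 + X ^ k) * Az k (i - k) - X * Az k (i - k - 1) := by
  lift i to ℕ using (by omega)
  have hM : 1 ≤ i := by exact_mod_cast hi
  rcases lt_trichotomy i k with h | h | h
  · rw [Az_coe, AA_small k (by omega) h, Az_neg k (by push_cast; omega),
      Az_neg k (by push_cast; omega)]
    ring
  · rw [h]
    rw [Az_coe, AA_diag k hk, show (k : ℤ) - k = ((0 : ℕ) : ℤ) by push_cast; ring,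
      Az_coe, AA_zero, show ((0:ℕ) : ℤ) - 1 = (-1 : ℤ) by norm_num, Az_neg k (by norm_num)]
    ring
  · rw [Az_coe, AA_big k hk h,
      show (i : ℤ) - k = ((i - k : ℕ) : ℤ) by push_cast [Nat.cast_sub h.le]; ring,
      Az_coe,
      show ((i - k : ℕ) : ℤ) - 1 = ((i - k - 1 : ℕ) : ℤ) by push_cast [Nat.cast_sub, h.le]; omega,
      Az_coe]

lemma divmod_div (k a b : ℕ) (hk : 0 < k) (hb : b < k) : (k * a + b) / k = a := by
  rw [Nat.mul_add_div hk, Nat.div_eq_of_lt hb, add_zero]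

lemma divmod_mod (k a b : ℕ) (hb : b < k) : (k * a + b) % k = b := by
  rw [Nat.mul_add_mod, Nat.mod_eq_of_lt hb]

lemma deg_coeff_eq {p : Polynomial ℤ} {d : ℕ} {c : ℤ} (h1 : p.natDegree ≤ d)
    (h2 : p.coeff d = c) (hc : c ≠ 0) : p.natDegree = d ∧ p.leadingCoeff = c := by
  have hd : p.natDegree = d := le_antisymm h1 (le_natDegree_of_ne_zero (h2 ▸ hc))
  exact ⟨hd, by rw [leadingCoeff, hd, h2]⟩

lemma coeff_one_add_X_pow_mul (k : ℕ) (p : Polynomial ℤ) (d : ℕ) (hd : p.natDegree < d + k) :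
    ((1 + X ^ k) * p).coeff (d + k) = p.coeff d := by
  rw [add_mul, one_mul, coeff_add, coeff_X_pow_mul, coeff_eq_zero_of_natDegree_lt hd, zero_add]

lemma natDegree_one_add_X_pow_mul_le (k : ℕ) (p : Polynomial ℤ) :
    ((1 + X ^ k) * p).natDegree ≤ k + p.natDegree := by
  refine natDegree_mul_le.trans ?_
  have : (1 + X ^ k : Polynomial ℤ).natDegree ≤ k := by
    apply (natDegree_add_le _ _).trans; simp [natDegree_X_pow]
  omega

lemma natDegree_X_mul_le (p : Polynomial ℤ) : (X * p).natDegree ≤ 1 + p.natDegree :=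
  natDegree_mul_le.trans (by rw [natDegree_X])

lemma AA_struct (k : ℕ) (hk : 2 ≤ k) : ∀ M : ℕ,
    (M % k ≤ M / k →
      (AA k M).natDegree ≤ M - k * (M % k) ∧
      (AA k M).coeff (M - k * (M % k)) = (-1) ^ (M % k) * ((M / k).choose (M % k) : ℤ)) ∧
    (M / k < M % k → AA k M = 0) := by
  intro M
  induction M using Nat.strong_induction_on with
  | _ M IH =>
  rcases Nat.eq_zero_or_pos M with rfl | hM0
  · constructor
    · intro _; simp [AA_zero]
    · intro h; simp at h
  rcases lt_trichotomy M k with hMk | rfl | hMk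
  · have hz := AA_small k (by omega) hMk
    have hmod : M % k = M := Nat.mod_eq_of_lt hMk
    have hdiv : M / k = 0 := Nat.div_eq_of_lt hMk
    constructor
    · intro h; rw [hmod, hdiv] at h; omega
    · intro _; exact hz
  · have hmod : M % M = 0 := Nat.mod_self M
    have hdiv : M / M = 1 := Nat.div_self (by omega)
    rw [AA_diag M hk, hmod, hdiv]
    constructor
    · intro _
      constructor
      · refine (natDegree_add_le _ _).trans ?_
        simp [natDegree_X_pow]
      · rw [Nat.mul_zero, Nat.sub_zero, coeff_add, coeff_one, coeff_X_pow]
        simp [show M ≠ 0 by omega]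
    · intro h; omega
  · -- M > k
    have hkpos : 0 < k := by omega
    set q := M / k with hq
    set r := M % k with hr
    have hM : k * q + r = M := Nat.div_add_mod M k
    have hrk : r < k := Nat.mod_lt M hkpos
    have hq1 : 1 ≤ q := by
      rcases Nat.eq_zero_or_pos q with h | h
      · rw [h, Nat.mul_zero] at hM; omega
      · exact h
    obtain ⟨q', hq'⟩ : ∃ q', q = q' + 1 := ⟨q - 1, by omega⟩
    have hMrep : k * q' + k + r = M := by rw [hq', Nat.mul_succ] at hM; omega
    have hM1 : M - k = k * q' + r := by omega
    have hd1 : (M - k) / k = q' := by rw [hM1]; exact divmod_div k q' r hkpos hrk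
    have hm1 : (M - k) % k = r := by rw [hM1]; exact divmod_mod k q' r hrk
    rw [AA_big k hk hMk]
    constructor
    · intro hle
      by_cases hr0 : r = 0
      · -- r = 0 case
        have hq'ne : q' ≠ 0 := by intro h; rw [h, Nat.mul_zero] at hM1; omega
        obtain ⟨q'', hq''⟩ : ∃ q'', q' = q'' + 1 := ⟨q' - 1, by omega⟩
        have hArep : k * q'' + k = k * q' := by rw [hq'', Nat.mul_succ]
        have hM2 : M - k - 1 = k * q'' + (k - 1) := by omega
        have hd2 : (M - k - 1) / k = q'' := by rw [hM2]; exact divmod_div k _ _ hkpos (by omega)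
        have hm2 : (M - k - 1) % k = k - 1 := by rw [hM2]; exact divmod_mod k _ _ (by omega)
        have IH1 := (IH (M - k) (by omega)).1 (by rw [hm1, hd1, hr0]; omega)
        rw [hm1, hd1, hr0, Nat.mul_zero, Nat.sub_zero] at IH1
        have IH1c : (AA k (M - k)).coeff (M - k) = 1 := by
          rw [IH1.2]; simp
        -- second term is small
        have hB : (X * AA k (M - k - 1)).natDegree < M - k := by
          by_cases hcc : k - 1 ≤ q''
          · have IH2 := (IH (M - k - 1) (by omega)).1 (by rw [hm2, hd2]; exact hcc)
            rw [hm2, hd2] at IH2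
            have hBle : k ≤ k * (k - 1) := Nat.le_mul_of_pos_right k (by omega)
            have hBA : k * (k - 1) ≤ k * q'' := Nat.mul_le_mul_left k hcc
            have h1 := natDegree_X_mul_le (AA k (M - k - 1))
            have h2 := IH2.1
            omega
          · have hz2 : AA k (M - k - 1) = 0 :=
              (IH (M - k - 1) (by omega)).2 (by rw [hm2, hd2]; omega)
            rw [hz2, mul_zero, natDegree_zero]
            omega
        rw [hr0, Nat.mul_zero, Nat.sub_zero]
        constructor
        · refine (natDegree_sub_le _ _).trans ?_
          rw [max_le_iff]
          constructor
          · have := natDegree_one_add_X_pow_mul_le k (AA k (M - k))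
            omega
          · omega
        · have hcA : ((1 + X ^ k) * AA k (M - k)).coeff M = 1 := by
            have h := coeff_one_add_X_pow_mul k (AA k (M - k)) (M - k) (by omega)
            rw [show (M - k) + k = M by omega] at h
            rw [h, IH1c]
          rw [coeff_sub, hcA,
            coeff_eq_zero_of_natDegree_lt (show (X * AA k (M - k - 1)).natDegree < M by omega)]
          simp
      · -- 1 ≤ r case
        obtain ⟨rr, hrr⟩ : ∃ rr, r = rr + 1 := ⟨r - 1, by omega⟩
        have hM2 : M - k - 1 = k * q' + rr := by omega
        have hd2 : (M - k - 1) / k = q' := by rw [hM2]; exact divmod_div k _ _ hkpos (by omega)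
        have hm2 : (M - k - 1) % k = rr := by rw [hM2]; exact divmod_mod k _ _ (by omega)
        have hrrq : rr ≤ q' := by omega
        have hBA : k * rr ≤ k * q' := Nat.mul_le_mul_left k hrrq
        have hkr : k * r = k * rr + k := by rw [hrr, Nat.mul_succ]
        have IH2 := (IH (M - k - 1) (by omega)).1 (by rw [hm2, hd2]; exact hrrq)
        rw [hm2, hd2] at IH2
        have hdd2 : M - k * r = (M - k - 1 - k * rr) + 1 := by omega
        have hc2 : (X * AA k (M - k - 1)).coeff (M - k * r) = (-1) ^ rr * ((q').choose rr : ℤ) := by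
          rw [hdd2, coeff_X_mul]; exact IH2.2
        have hn2 : (X * AA k (M - k - 1)).natDegree ≤ M - k * r := by
          have := natDegree_X_mul_le (AA k (M - k - 1)); omega
        have hA : ((1 + X ^ k) * AA k (M - k)).coeff (M - k * r) = (-1) ^ r * ((q').choose r : ℤ) ∧
            ((1 + X ^ k) * AA k (M - k)).natDegree ≤ M - k * r := by
          by_cases hcc : r ≤ q'
          · have IH1 := (IH (M - k) (by omega)).1 (by rw [hm1, hd1]; exact hcc)
            rw [hm1, hd1] at IH1
            have hBA2 : k * r ≤ k * q' := Nat.mul_le_mul_left k hcc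
            have he : M - k * r = ((M - k) - k * r) + k := by omega
            constructor
            · rw [he, coeff_one_add_X_pow_mul k _ _ (by have := IH1.1; omega)]
              exact IH1.2
            · have := natDegree_one_add_X_pow_mul_le k (AA k (M - k))
              have := IH1.1
              omega
          · have hz : AA k (M - k) = 0 := (IH (M - k) (by omega)).2 (by rw [hm1, hd1]; omega)
            rw [hz, mul_zero]
            refine ⟨?_, by simp⟩
            simp [Nat.choose_eq_zero_of_lt (show q' < r by omega)]
        refine ⟨?_, ?_⟩
        · refine (natDegree_sub_le _ _).trans ?_
          rw [max_le_iff]; exact ⟨hA.2, hn2⟩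
        · rw [coeff_sub, hA.1, hc2, hq', hrr, Nat.choose_succ_succ q' rr]
          push_cast
          ring
    · intro hgt
      have hz1 : AA k (M - k) = 0 := (IH (M - k) (by omega)).2 (by rw [hm1, hd1]; omega)
      have hr1 : 1 ≤ r := by omega
      have hM2 : M - k - 1 = k * q' + (r - 1) := by omega
      have hd2 : (M - k - 1) / k = q' := by rw [hM2]; exact divmod_div k _ _ hkpos (by omega)
      have hm2 : (M - k - 1) % k = r - 1 := by rw [hM2]; exact divmod_mod k _ _ (by omega)
      have hz2 : AA k (M - k - 1) = 0 :=
        (IH (M - k - 1) (by omega)).2 (by rw [hm2, hd2]; omega)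
      rw [hz1, hz2]; simp

lemma Gz_sum (k : ℕ) (hk : 2 ≤ k) (m : ℤ) (hm : (k : ℤ) ≤ m) :
    ∑ i ∈ Finset.range k, X ^ i * Gz k (m - i) = Gz k (m - k) := by
  have step : ∀ i ∈ Finset.range k,
      X ^ i * Gz k (m - i) =
        (fun t : ℕ => X ^ t * Az k (m - t - k)) i - (fun t : ℕ => X ^ t * Az k (m - t - k)) (i + 1) := by
    intro i hi
    simp only [Finset.mem_range] at hi
    have h1 : (1 : ℤ) ≤ m - i := by omega
    simp only [Gz]
    rw [Az_rec k hk (m - i) h1]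
    have e1 : m - (i : ℤ) - k - 1 = m - ((i + 1 : ℕ) : ℤ) - k := by push_cast; ring
    rw [e1]
    ring
  rw [Finset.sum_congr rfl step, Finset.sum_range_sub']
  simp only [Gz, pow_zero, one_mul, Nat.cast_zero, sub_zero]

lemma F_closed (k : ℕ) (hk : 2 ≤ k) (F : ℤ → Polynomial ℤ)
    (hrec : ∀ n : ℤ, F n = ∑ i ∈ Finset.range k, X ^ (k - 1 - i) * F (n - 1 - (i : ℤ)))
    (hF1 : F 1 = 1)
    (hF0 : ∀ m : ℕ, m ≤ k - 2 → F (-(m : ℤ)) = 0) :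
    ∀ m : ℕ, F (1 - (m : ℤ)) = Gz k m := by
  have hrec' : ∀ n : ℤ, F n = ∑ i ∈ Finset.range k, X ^ i * F (n - k + i) := by
    intro n
    rw [hrec n, ← Finset.sum_range_reflect]
    apply Finset.sum_congr rfl
    intro i hi
    simp only [Finset.mem_range] at hi
    have e1 : k - 1 - (k - 1 - i) = i := by omega
    have e2 : n - 1 - ((k - 1 - i : ℕ) : ℤ) = n - k + i := by
      have : ((k - 1 - i : ℕ) : ℤ) = (k : ℤ) - 1 - i := by omega
      rw [this]; ring
    rw [e1, e2]
  intro m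
  induction m using Nat.strong_induction_on with
  | _ m IHm =>
  have IH' : ∀ j : ℤ, 0 ≤ j → j < m → F (1 - j) = Gz k j := by
    intro j h0 h1
    lift j to ℕ using h0
    exact IHm j (by exact_mod_cast h1)
  rcases Nat.lt_or_ge m k with hmk | hmk
  · rcases Nat.eq_zero_or_pos m with rfl | hm0
    · rw [show (1 : ℤ) - ((0:ℕ):ℤ) = 1 by simp, hF1, Gz, Az_coe,
        Az_neg k (show ((0:ℕ):ℤ) - k < 0 by omega), AA_zero]
      simp
    · have h0 : F (1 - (m : ℤ)) = 0 := by
        have h := hF0 (m - 1) (by omega)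
        rw [show -(((m - 1 : ℕ)) : ℤ) = 1 - (m : ℤ) by omega] at h
        exact h
      rw [h0, Gz, Az_coe, AA_small k (by omega) hmk,
        Az_neg k (show ((m:ℕ):ℤ) - k < 0 by omega)]
      simp
  · -- m ≥ k
    obtain ⟨k', hk'⟩ : ∃ k', k = k' + 1 := ⟨k - 1, by omega⟩
    have hrange : Finset.range k = Finset.range (k' + 1) := by rw [hk']
    have key2 : F (1 - (m:ℤ) + k) = ∑ i ∈ Finset.range k, X ^ i * F (1 - (m:ℤ) + i) := by
      rw [hrec' (1 - (m:ℤ) + k)]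
      apply Finset.sum_congr rfl
      intro i _
      have : (1 : ℤ) - m + k - k + i = 1 - m + i := by ring
      rw [this]
    have gs := Gz_sum k hk (m : ℤ) (by exact_mod_cast hmk)
    rw [hrange, Finset.sum_range_succ'] at key2 gs
    have e3 : F (1 - (m:ℤ) + k) = Gz k ((m:ℤ) - k) := by
      have h := IH' ((m:ℤ) - k) (by omega) (by omega)
      rw [show (1:ℤ) - ((m:ℤ) - k) = 1 - m + k by ring] at h
      exact h
    have e4 : ∀ i ∈ Finset.range k',
        (X : Polynomial ℤ) ^ (i+1) * F (1 - (m:ℤ) + ((i+1 : ℕ) : ℤ)) =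
        X ^ (i+1) * Gz k ((m:ℤ) - ((i+1 : ℕ) : ℤ)) := by
      intro i hi
      simp only [Finset.mem_range] at hi
      congr 1
      have h := IH' ((m:ℤ) - ((i+1 : ℕ) : ℤ)) (by push_cast; omega) (by push_cast; omega)
      rw [show (1:ℤ) - ((m:ℤ) - ((i+1 : ℕ) : ℤ)) = 1 - m + ((i+1 : ℕ) : ℤ) by ring] at h
      exact h
    rw [Finset.sum_congr rfl e4, e3] at key2
    have cancel := gs.trans key2
    have h5 := add_left_cancel cancel
    simpa using h5.symm

/-- For `n ≤ 0` with `q ≥ r` (so `F n ≠ 0`): if `r = 0` then `F n` has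
degree `|n| + 1 - k` and leading coefficient `1`; if `1 ≤ r ≤ k-1` then `F n` has degree
`|n| + 1 - k r` and leading coefficient `(-1)^r C(q-1, r-1)`. -/
theorem fib_poly_degree_leading_neg (k : ℕ) (hk : 2 ≤ k)
    (F : ℤ → Polynomial ℤ)
    (hrec : ∀ n : ℤ, F n = ∑ i ∈ Finset.range k, X ^ (k - 1 - i) * F (n - 1 - (i : ℤ)))
    (hF1 : F 1 = 1)
    (hF0 : ∀ m : ℕ, m ≤ k - 2 → F (-(m : ℤ)) = 0)
    (n : ℤ) (hn : n ≤ 0) (q r : ℕ)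
    (hq : q = ((-n).toNat + 1) / k)
    (hr : r = ((-n).toNat + 1) % k)
    (hqr : r ≤ q) :
    (r = 0 →
      (F n).natDegree = (-n).toNat + 1 - k ∧ (F n).leadingCoeff = 1) ∧
    (1 ≤ r →
      (F n).natDegree = (-n).toNat + 1 - k * r ∧
      (F n).leadingCoeff = (-1) ^ r * ((q - 1).choose (r - 1) : ℤ)) := by
  set N := (-n).toNat + 1 with hN
  have hnn : ((-n).toNat : ℤ) = -n := Int.toNat_of_nonneg (by omega)
  have hNn : (1 : ℤ) - (N : ℤ) = n := by rw [hN]; push_cast [hnn]; ring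
  have hFn : F n = Gz k N := by
    have h := F_closed k hk F hrec hF1 hF0 N
    rw [hNn] at h
    exact h
  have hkpos : 0 < k := by omega
  have hNk : k ≤ N := by
    by_contra h
    push_neg at h
    rw [Nat.div_eq_of_lt h] at hq
    rw [Nat.mod_eq_of_lt h] at hr
    omega
  have hGz : Gz k (N : ℤ) = Az k ((N:ℤ) - k) - X * Az k ((N:ℤ) - k - 1) := by
    rw [Gz, Az_rec k hk (N : ℤ) (by omega)]
    ring
  have hM1 : Az k ((N:ℤ) - k) = AA k (N - k) := by
    rw [show ((N:ℤ) - k) = ((N - k : ℕ) : ℤ) by omega, Az_coe]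
  have hM : k * q + r = N := by rw [hq, hr]; exact Nat.div_add_mod N k
  have hrk : r < k := by rw [hr]; exact Nat.mod_lt N hkpos
  have hq1 : 1 ≤ q := by
    rcases Nat.eq_zero_or_pos q with h | h
    · rw [h, Nat.mul_zero] at hM; omega
    · exact h
  obtain ⟨q', hq'⟩ : ∃ q', q = q' + 1 := ⟨q - 1, by omega⟩
  have hMrep : k * q' + k + r = N := by rw [hq', Nat.mul_succ] at hM; omega
  constructor
  · intro hr0
    have hM1rep : N - k = k * q' := by omega
    have hd1 : (N - k) / k = q' := by rw [hM1rep]; exact Nat.mul_div_cancel_left q' hkpos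
    have hm1 : (N - k) % k = 0 := by rw [hM1rep]; exact Nat.mul_mod_right k q'
    have IH1 := (AA_struct k hk (N - k)).1 (by rw [hm1, hd1]; omega)
    rw [hm1, hd1, Nat.mul_zero, Nat.sub_zero] at IH1
    have IH1c : (AA k (N - k)).coeff (N - k) = 1 := by rw [IH1.2]; simp
    have hsmall : (X * Az k ((N:ℤ) - k - 1)).natDegree < N - k ∨
        X * Az k ((N:ℤ) - k - 1) = 0 := by
      rcases Nat.eq_or_lt_of_le hNk with he | hlt
      · right
        rw [show ((N:ℤ) - k - 1) = (-1 : ℤ) by omega, Az_neg k (by norm_num), mul_zero]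
      · have hq'1 : 1 ≤ q' := by
          rcases Nat.eq_zero_or_pos q' with h | h
          · rw [h, Nat.mul_zero] at hMrep; omega
          · exact h
        obtain ⟨q'', hq''⟩ : ∃ q'', q' = q'' + 1 := ⟨q' - 1, by omega⟩
        have hArep : k * q'' + k = k * q' := by rw [hq'', Nat.mul_succ]
        have hAz2 : Az k ((N:ℤ) - k - 1) = AA k (N - k - 1) := by
          rw [show ((N:ℤ) - k - 1) = ((N - k - 1 : ℕ) : ℤ) by omega, Az_coe]
        have hM2 : N - k - 1 = k * q'' + (k - 1) := by omega
        have hd2 : (N - k - 1) / k = q'' := by rw [hM2]; exact divmod_div k _ _ hkpos (by omega)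
        have hm2 : (N - k - 1) % k = k - 1 := by rw [hM2]; exact divmod_mod k _ _ (by omega)
        by_cases hcc : k - 1 ≤ q''
        · left
          have IH2 := (AA_struct k hk (N - k - 1)).1 (by rw [hm2, hd2]; exact hcc)
          rw [hm2, hd2] at IH2
          have hBle : k ≤ k * (k - 1) := Nat.le_mul_of_pos_right k (by omega)
          have hBA : k * (k - 1) ≤ k * q'' := Nat.mul_le_mul_left k hcc
          have h1 : (X * Az k ((N:ℤ) - k - 1)).natDegree ≤ 1 + (AA k (N - k - 1)).natDegree := by
            rw [hAz2]; exact natDegree_X_mul_le _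
          have h2 := IH2.1
          omega
        · right
          rw [hAz2, (AA_struct k hk (N - k - 1)).2 (by rw [hm2, hd2]; omega), mul_zero]
    have hcoeff : (F n).coeff (N - k) = 1 := by
      rw [hFn, hGz, hM1, coeff_sub, IH1c]
      rcases hsmall with h | h
      · rw [coeff_eq_zero_of_natDegree_lt h]; norm_num
      · rw [h]; simp
    have hdeg : (F n).natDegree ≤ N - k := by
      rw [hFn, hGz, hM1]
      refine (natDegree_sub_le _ _).trans ?_
      rw [max_le_iff]
      refine ⟨IH1.1, ?_⟩
      rcases hsmall with h | h
      · omega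
      · rw [h]; simp
    exact deg_coeff_eq hdeg hcoeff one_ne_zero
  · intro hr1
    obtain ⟨rr, hrr⟩ : ∃ rr, r = rr + 1 := ⟨r - 1, by omega⟩
    have hAz2 : Az k ((N:ℤ) - k - 1) = AA k (N - k - 1) := by
      rw [show ((N:ℤ) - k - 1) = ((N - k - 1 : ℕ) : ℤ) by omega, Az_coe]
    have hM2 : N - k - 1 = k * q' + rr := by omega
    have hd2 : (N - k - 1) / k = q' := by rw [hM2]; exact divmod_div k _ _ hkpos (by omega)
    have hm2 : (N - k - 1) % k = rr := by rw [hM2]; exact divmod_mod k _ _ (by omega)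
    have hrrq : rr ≤ q' := by omega
    have hBA : k * rr ≤ k * q' := Nat.mul_le_mul_left k hrrq
    have hkr : k * r = k * rr + k := by rw [hrr, Nat.mul_succ]
    have IH2 := (AA_struct k hk (N - k - 1)).1 (by rw [hm2, hd2]; exact hrrq)
    rw [hm2, hd2] at IH2
    have hdd2 : N - k * r = (N - k - 1 - k * rr) + 1 := by omega
    have hc2 : (X * Az k ((N:ℤ) - k - 1)).coeff (N - k * r) = (-1) ^ rr * ((q').choose rr : ℤ) := by
      rw [hAz2, hdd2, coeff_X_mul]; exact IH2.2
    have hn2 : (X * Az k ((N:ℤ) - k - 1)).natDegree ≤ N - k * r := by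
      have h := natDegree_X_mul_le (AA k (N - k - 1))
      rw [hAz2]
      have h2 := IH2.1
      omega
    have hM1rep : N - k = k * q' + r := by omega
    have hd1 : (N - k) / k = q' := by rw [hM1rep]; exact divmod_div k _ _ hkpos hrk
    have hm1 : (N - k) % k = r := by rw [hM1rep]; exact divmod_mod k _ _ hrk
    have hA : (AA k (N - k)).coeff (N - k * r) = 0 ∧ (AA k (N - k)).natDegree ≤ N - k * r := by
      by_cases hcc : r ≤ q'
      · have IH1 := (AA_struct k hk (N - k)).1 (by rw [hm1, hd1]; exact hcc)
        rw [hm1, hd1] at IH1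
        have hBA2 : k * r ≤ k * q' := Nat.mul_le_mul_left k hcc
        have h1 := IH1.1
        exact ⟨coeff_eq_zero_of_natDegree_lt (by omega), by omega⟩
      · have hz : AA k (N - k) = 0 := (AA_struct k hk (N - k)).2 (by rw [hm1, hd1]; omega)
        rw [hz]; simp
    have hcoeff : (F n).coeff (N - k * r) = (-1) ^ r * ((q').choose rr : ℤ) := by
      rw [hFn, hGz, hM1, coeff_sub, hA.1, hc2, hrr]
      push_cast
      ring
    have hdeg : (F n).natDegree ≤ N - k * r := by
      rw [hFn, hGz, hM1]
      refine (natDegree_sub_le _ _).trans ?_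
      rw [max_le_iff]; exact ⟨hA.2, hn2⟩
    have hcne : ((-1 : ℤ)) ^ r * ((q').choose rr : ℤ) ≠ 0 := by
      have hpos : 0 < (q').choose rr := Nat.choose_pos hrrq
      exact mul_ne_zero (pow_ne_zero _ (by norm_num)) (by exact_mod_cast hpos.ne')
    have hfin := deg_coeff_eq hdeg hcoeff hcne
    refine ⟨hfin.1, ?_⟩
    rw [hfin.2, show q - 1 = q' by omega, show r - 1 = rr by omega]
end

section
/- Let k ≥ 2 be an integer and n ≤ 0 an integer, and write q = q_{n,k}, r = r_{n,k}. (i) If r = 0 and |n| ≥ 2k − 1, then the coefficient of x^{|n|+1−2k} in 𝓕_{n,k}(x) equals 2q − 3 when k = 2 and equals q − 1 when k ≥ 3. (ii) If 1 ≤ r ≤ k−1 and q ≥ r + 1, then the coefficient of x^{|n|+1−k(r+1)} in 𝓕_{n,k}(x) equals (−1)^r · (r+1) · C(q−1, r). -/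
open Polynomial
set_option maxHeartbeats 1600000


section Aux

variable {k : ℕ} (hk : 2 ≤ k) (F : ℤ → Polynomial ℤ)
  (hrec : ∀ n : ℤ, F n = ∑ i ∈ Finset.range k, X ^ (k - 1 - i) * F (n - 1 - (i : ℤ)))
  (hF1 : F 1 = 1)
  (hF0 : ∀ m : ℕ, m ≤ k - 2 → F (-(m : ℤ)) = 0)

include hk hrec in
lemma three_term (n : ℤ) :
    F n = F (n + k) + X ^ k * F (n + k) - X * F (n + k + 1) := by
  have h1 := hrec (n + k)
  have h2 := hrec (n + k + 1)
  have e1 : X * F (n + k + 1) = ∑ i ∈ Finset.range k, X ^ (k - i) * F (n + k - i) := by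
    rw [h2, Finset.mul_sum]
    refine Finset.sum_congr rfl fun i hi => ?_
    simp only [Finset.mem_range] at hi
    have harg : n + (k:ℤ) + 1 - 1 - (i:ℤ) = n + k - i := by ring
    have hx : (X:Polynomial ℤ) ^ (k - i) = X * X ^ (k - 1 - i) := by
      rw [show k - i = (k - 1 - i) + 1 from by omega, pow_succ, mul_comm]
    rw [hx, mul_assoc, harg]
  have e2 : ∑ i ∈ Finset.range k, X ^ (k - i) * F (n + k - i)
      = X ^ k * F (n + k) + ∑ i ∈ Finset.range (k-1), X ^ (k - 1 - i) * F (n + k - 1 - i) := by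
    obtain ⟨k', rfl⟩ : ∃ k', k = k' + 1 := ⟨k - 1, by omega⟩
    rw [Finset.sum_range_succ', add_comm]
    simp only [Nat.add_sub_cancel]
    congr 1
    · norm_num
    · refine Finset.sum_congr rfl fun i hi => ?_
      rw [show k' + 1 - (i + 1) = k' - i from by omega]
      congr 2
      push_cast
      ring
  have e3 : F (n + k) = (∑ i ∈ Finset.range (k-1), X ^ (k - 1 - i) * F (n + k - 1 - i)) + F n := by
    rw [h1]
    obtain ⟨k', rfl⟩ : ∃ k', k = k' + 1 := ⟨k - 1, by omega⟩
    rw [Finset.sum_range_succ]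
    simp only [Nat.add_sub_cancel]
    congr 1
    rw [Nat.sub_self, pow_zero, one_mul]
    congr 1
    push_cast; ring
  rw [e1, e2]
  linear_combination -e3

include hk hrec hF1 hF0 in
lemma F_two : F 2 = X ^ (k - 1) := by
  rw [hrec 2]
  rw [Finset.sum_eq_single_of_mem 0 (Finset.mem_range.2 (by omega))]
  · norm_num [hF1]
  · intro b hbm hb
    simp only [Finset.mem_range] at hbm
    have harg : (2:ℤ) - 1 - (b:ℤ) = -(((b-1 : ℕ)):ℤ) := by omega
    rw [harg, hF0 (b-1) (by omega), mul_zero]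

include hk hrec hF1 hF0 in
lemma F_base0 (m : ℕ) (h1 : 1 ≤ m) (h2 : m ≤ k - 1) : F (1 - (m:ℤ)) = 0 := by
  have harg : (1:ℤ) - (m:ℤ) = -(((m-1 : ℕ)):ℤ) := by omega
  rw [harg]
  exact hF0 (m-1) (by omega)

include hk hrec hF1 hF0 in
lemma F_k : F (1 - (k:ℤ)) = 1 := by
  have h := three_term hk F hrec (1 - (k:ℤ))
  have c1 : (1:ℤ) - k + k = 1 := by ring
  rw [c1, show (1:ℤ)+1 = 2 from by norm_num] at h
  rw [h, hF1, F_two hk F hrec hF1 hF0]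
  have : (X:Polynomial ℤ) * X ^ (k-1) = X ^ k := by
    rw [mul_comm, ← pow_succ]
    congr 1
    omega
  rw [this]
  ring

lemma kmul_succ_sub (k a : ℕ) (h : 1 ≤ a) : k * a = k * (a - 1) + k := by
  obtain ⟨b, rfl⟩ : ∃ b, a = b + 1 := ⟨a - 1, by omega⟩
  rw [Nat.add_sub_cancel, Nat.mul_add, Nat.mul_one]

include hk hrec in
lemma step (m : ℕ) (hm : k + 1 ≤ m) (e : ℕ) :
    (F (1 - (m:ℤ))).coeff e
      = (F (1 - ((m - k : ℕ) : ℤ))).coeff e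
        + (if k ≤ e then (F (1 - ((m - k : ℕ) : ℤ))).coeff (e - k) else 0)
        - (if 1 ≤ e then (F (1 - ((m - k - 1 : ℕ) : ℤ))).coeff (e - 1) else 0) := by
  have h := three_term hk F hrec (1 - (m:ℤ))
  have c1 : (1:ℤ) - m + k = 1 - ((m - k : ℕ):ℤ) := by omega
  have c2 : (1:ℤ) - ((m - k : ℕ):ℤ) + 1 = 1 - ((m - k - 1 : ℕ):ℤ) := by omega
  rw [c1, c2] at h
  rw [h]
  rw [coeff_sub, coeff_add, mul_comm (X ^ k), coeff_mul_X_pow',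
    show (X : Polynomial ℤ) = X ^ 1 by rw [pow_one], mul_comm ((X:Polynomial ℤ) ^ 1),
    coeff_mul_X_pow']

include hk hrec hF1 hF0 in
lemma main : ∀ q : ℕ, ∀ r : ℕ, r < k →
    (q < r → F (1 - ((q * k + r : ℕ) : ℤ)) = 0) ∧
    (∀ e : ℕ, (if r = 0 then k * (q-1) else k * (q-r) + r) < e →
      (F (1 - ((q * k + r : ℕ):ℤ))).coeff e = 0) ∧
    (1 ≤ r → r ≤ q →
      (F (1 - ((q * k + r : ℕ):ℤ))).coeff (k * (q-r) + r)
        = (-1)^r * ((q-1).choose (r-1) : ℤ)) ∧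
    (r = 0 → (F (1 - ((q * k + r : ℕ):ℤ))).coeff (k * (q-1)) = 1) ∧
    (1 ≤ r → r + 1 ≤ q →
      (F (1 - ((q * k + r : ℕ):ℤ))).coeff (k * (q-r-1) + r)
        = (-1)^r * ((r:ℤ) + 1) * ((q-1).choose r : ℤ)) ∧
    (r = 0 → 2 ≤ q →
      (F (1 - ((q * k + r : ℕ):ℤ))).coeff (k * (q-2))
        = if k = 2 then 2*(q:ℤ) - 3 else (q:ℤ) - 1) := by
  intro q
  induction q using Nat.strong_induction_on with
  | _ q IH =>
  intro r hr
  by_cases hq0 : q = 0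
  · subst hq0
    by_cases hr0 : r = 0
    · subst hr0
      have hP : F (1 - ((0 * k + 0 : ℕ):ℤ)) = 1 := by norm_num [hF1]
      refine ⟨fun h => absurd h (by omega), ?_, fun h => absurd h (by omega), fun _ => ?_,
        fun h => absurd h (by omega), fun _ h => absurd h (by omega)⟩
      · intro e he
        rw [if_pos rfl] at he
        rw [hP, coeff_one, if_neg (by omega)]
      · rw [hP, show k * (0 - 1) = 0 from by norm_num, coeff_one, if_pos rfl]
    · have hP : F (1 - ((0 * k + r : ℕ):ℤ)) = 0 := by
        rw [show 0 * k + r = r from by omega]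
        exact F_base0 hk F hrec hF1 hF0 r (by omega) (by omega)
      refine ⟨fun _ => hP, ?_, fun _ h => absurd h (by omega), fun h => absurd h hr0,
        fun _ h => absurd h (by omega), fun h => absurd h hr0⟩
      intro e _
      rw [hP, coeff_zero]
  · by_cases hq1 : q = 1 ∧ r = 0
    · obtain ⟨hq1', hr0⟩ := hq1
      subst hq1'; subst hr0
      have hP : F (1 - ((1 * k + 0 : ℕ):ℤ)) = 1 := by
        rw [show 1 * k + 0 = k from by omega]
        exact F_k hk F hrec hF1 hF0
      refine ⟨fun h => absurd h (by omega), ?_, fun h => absurd h (by omega), fun _ => ?_,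
        fun h => absurd h (by omega), fun _ h => absurd h (by omega)⟩
      · intro e he
        rw [if_pos rfl] at he
        rw [hP, coeff_one, if_neg (by omega)]
      · rw [hP, show k * (1 - 1) = 0 from by norm_num, coeff_one, if_pos rfl]
    · -- inductive step
      obtain ⟨q', rfl⟩ : ∃ q', q = q' + 1 := ⟨q - 1, by omega⟩
      have hms : (q' + 1) * k = q' * k + k := Nat.succ_mul q' k
      have hcase : 1 ≤ r ∨ 1 ≤ q' := by
        by_cases h : r = 0
        · right
          rcases Nat.eq_zero_or_pos q' with h'|h'
          · exact absurd ⟨by omega, h⟩ hq1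
          · exact h'
        · left; omega
      have hm : k + 1 ≤ (q' + 1) * k + r := by
        rcases hcase with h|h
        · omega
        · have h2 : 1 * k ≤ q' * k := Nat.mul_le_mul_right k h
          omega
      have hstep := step hk F hrec ((q' + 1) * k + r) hm
      have hA : (q' + 1) * k + r - k = q' * k + r := by omega
      rw [hA] at hstep
      have IH1 := IH q' (by omega) r hr
      by_cases hr0 : r = 0
      · -- residue 0
        subst hr0
        have hq'1 : 1 ≤ q' := by rcases hcase with h|h <;> omega
        obtain ⟨q'', rfl⟩ : ∃ q'', q' = q'' + 1 := ⟨q' - 1, by omega⟩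
        have hms2 : (q'' + 1) * k = q'' * k + k := Nat.succ_mul q'' k
        have hB : (q'' + 1) * k + 0 - 1 = q'' * k + (k - 1) := by omega
        rw [hB] at hstep
        have IH2 := IH q'' (by omega) (k - 1) (by omega)
        have hmul1 : k * (q'' + 1) = k * q'' + k := Nat.mul_succ k q''
        have hmul2 : k * (q'' + 1 + 1 - 1) = k * q'' + k := by
          rw [show q'' + 1 + 1 - 1 = q'' + 1 from rfl]; exact hmul1
        have hzero3 : ∀ e : ℕ, k * q'' - k < e →
            (F (1 - ((q'' * k + (k - 1) : ℕ):ℤ))).coeff e = 0 ∨ k = 2 := by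
          intro e he
          by_cases hk2 : k = 2
          · right; exact hk2
          · left
            by_cases hqz : q'' < k - 1
            · rw [IH2.1 hqz, coeff_zero]
            · refine IH2.2.1 e ?_
              rw [if_neg (by omega)]
              have hsub : k * (q'' - (k - 1)) + k * (k - 1) = k * q'' := by
                rw [← Nat.mul_add, Nat.sub_add_cancel (by omega)]
              have hkk : k * 2 ≤ k * (k - 1) := Nat.mul_le_mul_left k (by omega)
              omega
        refine ⟨fun h => absurd h (by omega), ?_, fun h => absurd h (by omega), fun _ => ?_,
          fun h => absurd h (by omega), fun _ _ => ?_⟩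
        · -- V0
          intro e he
          rw [if_pos rfl, hmul2] at he
          rw [hstep e]
          have v1 : (F (1 - (((q'' + 1) * k + 0 : ℕ):ℤ))).coeff e = 0 := by
            refine IH1.2.1 e ?_
            rw [if_pos rfl, show q'' + 1 - 1 = q'' from rfl]
            omega
          have v2 : (F (1 - (((q'' + 1) * k + 0 : ℕ):ℤ))).coeff (e - k) = 0 := by
            refine IH1.2.1 (e - k) ?_
            rw [if_pos rfl, show q'' + 1 - 1 = q'' from rfl]
            omega
          have v3 : (F (1 - ((q'' * k + (k - 1) : ℕ):ℤ))).coeff (e - 1) = 0 := by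
            by_cases hqz : q'' < k - 1
            · rw [IH2.1 hqz, coeff_zero]
            · refine IH2.2.1 (e - 1) ?_
              rw [if_neg (by omega)]
              have hle : k * (q'' - (k - 1)) ≤ k * q'' := Nat.mul_le_mul_left k (Nat.sub_le _ _)
              omega
          rw [v1, v2, v3]
          simp
        · -- T0
          rw [hstep _, hmul2]
          have t1 : (F (1 - (((q'' + 1) * k + 0 : ℕ):ℤ))).coeff (k * q'' + k) = 0 := by
            refine IH1.2.1 _ ?_
            rw [if_pos rfl, show q'' + 1 - 1 = q'' from rfl]
            omega
          have t2 : (F (1 - (((q'' + 1) * k + 0 : ℕ):ℤ))).coeff (k * q'' + k - k) = 1 := by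
            have := IH1.2.2.2.1 rfl
            rw [show q'' + 1 - 1 = q'' from rfl] at this
            rw [show k * q'' + k - k = k * q'' from by omega]
            exact this
          have t3 : (F (1 - ((q'' * k + (k - 1) : ℕ):ℤ))).coeff (k * q'' + k - 1) = 0 := by
            by_cases hqz : q'' < k - 1
            · rw [IH2.1 hqz, coeff_zero]
            · refine IH2.2.1 _ ?_
              rw [if_neg (by omega)]
              have hsub : k * (q'' - (k - 1)) + k * (k - 1) = k * q'' := by
                rw [← Nat.mul_add, Nat.sub_add_cancel (by omega)]
              have hkk : k * 1 ≤ k * (k - 1) := Nat.mul_le_mul_left k (by omega)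
              omega
          rw [t1, t2, if_pos (by omega), if_pos (by omega), t3]
          ring
        · -- S0
          rw [hstep _]
          rw [show k * (q'' + 1 + 1 - 2) = k * q'' from by rw [show q'' + 1 + 1 - 2 = q'' from by omega]]
          have t1 : (F (1 - (((q'' + 1) * k + 0 : ℕ):ℤ))).coeff (k * q'') = 1 := by
            have := IH1.2.2.2.1 rfl
            rw [show q'' + 1 - 1 = q'' from rfl] at this
            exact this
          rcases Nat.eq_zero_or_pos q'' with hq2|hq2
          · subst hq2
            rw [t1, if_neg (by omega), if_neg (by omega)]
            by_cases hk2 : k = 2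
            · rw [if_pos hk2]; norm_num
            · rw [if_neg hk2]; norm_num
          · have t2 : (F (1 - (((q'' + 1) * k + 0 : ℕ):ℤ))).coeff (k * q'' - k)
                = if k = 2 then 2 * ((q'' + 1 : ℕ):ℤ) - 3 else ((q'' + 1 : ℕ):ℤ) - 1 := by
              have := IH1.2.2.2.2.2 rfl (by omega)
              rw [show k * (q'' + 1 - 2) = k * q'' - k from by
                have h := kmul_succ_sub k q'' hq2
                rw [show q'' + 1 - 2 = q'' - 1 from by omega]
                omega] at this
              exact this
            have hguards : k ≤ k * q'' ∧ 1 ≤ k * q'' := by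
              have : k * 1 ≤ k * q'' := Nat.mul_le_mul_left k hq2
              omega
            by_cases hk2 : k = 2
            · have t3 : (F (1 - ((q'' * k + (k - 1) : ℕ):ℤ))).coeff (k * q'' - 1)
                  = -1 := by
                subst hk2
                have := IH2.2.2.1 (by omega) (by omega)
                rw [show 2 * (q'' - (2 - 1)) + (2 - 1) = 2 * q'' - 1 from by omega] at this
                rw [this]
                norm_num
              rw [t1, if_pos hguards.1, t2, if_pos hguards.2, t3, if_pos hk2, if_pos hk2]
              push_cast
              ring
            · have t3 : (F (1 - ((q'' * k + (k - 1) : ℕ):ℤ))).coeff (k * q'' - 1) = 0 := by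
                rcases hzero3 (k * q'' - 1) (by omega) with h|h
                · exact h
                · exact absurd h hk2
              rw [t1, if_pos hguards.1, t2, if_pos hguards.2, t3, if_neg hk2, if_neg hk2]
              push_cast
              ring
      · -- residue r ≥ 1
        have hr1 : 1 ≤ r := by omega
        have hB : q' * k + r - 1 = q' * k + (r - 1) := by omega
        rw [hB] at hstep
        have IH2 := IH q' (by omega) (r - 1) (by omega)
        refine ⟨?_, ?_, fun _ hrq => ?_, fun h => absurd h hr0, fun _ hrq => ?_,
          fun h => absurd h hr0⟩
        · -- Z
          intro hlt
          have z1 := IH1.1 (by omega)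
          have z2 := IH2.1 (by omega)
          ext e
          rw [hstep e, z1, z2]
          simp
        · -- V
          intro e he
          rw [if_neg hr0] at he
          rw [hstep e]
          by_cases hq'r : q' < r
          · have he' : r < e := by
              rw [show q' + 1 - r = 0 from by omega, Nat.mul_zero] at he
              omega
            have h3 : (F (1 - ((q' * k + (r - 1) : ℕ):ℤ))).coeff (e - 1) = 0 := by
              by_cases h4 : q' < r - 1
              · rw [IH2.1 h4, coeff_zero]
              · refine IH2.2.1 (e - 1) ?_
                by_cases hre : r = 1
                · rw [if_pos (by omega), show q' - 1 = 0 from by omega, Nat.mul_zero]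
                  omega
                · rw [if_neg (by omega), show q' - (r - 1) = 0 from by omega, Nat.mul_zero]
                  omega
            rw [IH1.1 hq'r, h3]
            simp
          · push_neg at hq'r
            have hd : k * (q' + 1 - r) = k * (q' - r) + k := by
              rw [show q' + 1 - r = (q' - r) + 1 from by omega, Nat.mul_succ]
            have v1 : (F (1 - ((q' * k + r : ℕ):ℤ))).coeff e = 0 := by
              refine IH1.2.1 e ?_
              rw [if_neg hr0]; omega
            have v2 : (F (1 - ((q' * k + r : ℕ):ℤ))).coeff (e - k) = 0 := by
              refine IH1.2.1 (e - k) ?_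
              rw [if_neg hr0]; omega
            have v3 : (F (1 - ((q' * k + (r - 1) : ℕ):ℤ))).coeff (e - 1) = 0 := by
              by_cases hre : r = 1
              · subst hre
                refine IH2.2.1 (e - 1) ?_
                rw [if_pos rfl]
                have h5 : k * q' = k * (q' - 1) + k := kmul_succ_sub k q' (by omega)
                rw [show q' + 1 - 1 = q' from rfl] at he
                omega
              · refine IH2.2.1 (e - 1) ?_
                rw [if_neg (by omega)]
                rw [show q' - (r - 1) = q' + 1 - r from by omega]
                omega
            rw [v1, v2, v3]
            simp
        · -- T
          rw [hstep _]
          rw [show q' + 1 - 1 = q' from rfl]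
          by_cases hq'r : r ≤ q'
          · have hd : k * (q' + 1 - r) = k * (q' - r) + k := by
              rw [show q' + 1 - r = (q' - r) + 1 from by omega, Nat.mul_succ]
            have t1 : (F (1 - ((q' * k + r : ℕ):ℤ))).coeff (k * (q' + 1 - r) + r) = 0 := by
              refine IH1.2.1 _ ?_
              rw [if_neg hr0]; omega
            have t2 : (F (1 - ((q' * k + r : ℕ):ℤ))).coeff (k * (q' + 1 - r) + r - k)
                = (-1)^r * ((q' - 1).choose (r - 1) : ℤ) := by
              rw [show k * (q' + 1 - r) + r - k = k * (q' - r) + r from by omega]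
              exact IH1.2.2.1 hr1 hq'r
            have t3 : (F (1 - ((q' * k + (r - 1) : ℕ):ℤ))).coeff (k * (q' + 1 - r) + r - 1)
                = if r = 1 then 0 else (-1)^(r - 1) * ((q' - 1).choose (r - 2) : ℤ) := by
              by_cases hre : r = 1
              · subst hre
                rw [if_pos rfl]
                refine IH2.2.1 _ ?_
                rw [if_pos rfl]
                have h5 : k * q' = k * (q' - 1) + k := kmul_succ_sub k q' (by omega)
                rw [show q' + 1 - 1 = q' from rfl]
                omega
              · rw [if_neg hre]
                have := IH2.2.2.1 (by omega) (by omega)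
                rw [show r - 1 - 1 = r - 2 from by omega] at this
                rw [show k * (q' + 1 - r) + r - 1 = k * (q' - (r - 1)) + (r - 1) from by
                  rw [show q' - (r - 1) = q' + 1 - r from by omega]; omega]
                exact this
            rw [t1, t2, if_pos (by omega), if_pos (by omega), t3]
            by_cases hre : r = 1
            · subst hre
              rw [if_pos rfl]
              norm_num
            · rw [if_neg hre]
              obtain ⟨b, rfl⟩ : ∃ b, r = b + 2 := ⟨r - 2, by omega⟩
              obtain ⟨a, rfl⟩ : ∃ a, q' = a + 1 := ⟨q' - 1, by omega⟩
              simp only [show a + 1 - 1 = a from rfl, show b + 2 - 1 = b + 1 from rfl,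
                show b + 2 - 2 = b from by omega]
              rw [Nat.choose_succ_succ a b]
              push_cast
              ring
          · -- q' = r - 1
            have hd0 : k * (q' + 1 - r) = 0 := by
              rw [show q' + 1 - r = 0 from by omega, Nat.mul_zero]
            have t1 : (F (1 - ((q' * k + r : ℕ):ℤ))).coeff (k * (q' + 1 - r) + r) = 0 := by
              rw [IH1.1 (by omega), coeff_zero]
            have t3 : (F (1 - ((q' * k + (r - 1) : ℕ):ℤ))).coeff (k * (q' + 1 - r) + r - 1)
                = (-1)^(r - 1) * 1 := by
              by_cases hre : r = 1
              · subst hre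
                have := IH2.2.2.2.1 rfl
                rw [show q' - 1 = 0 from by omega, Nat.mul_zero] at this
                rw [hd0]
                simpa using this
              · have := IH2.2.2.1 (by omega) (by omega)
                rw [show (q' - 1).choose (r - 1 - 1) = 1 from by
                  rw [show r - 1 - 1 = q' - 1 from by omega, Nat.choose_self]] at this
                rw [show k * (q' + 1 - r) + r - 1 = k * (q' - (r - 1)) + (r - 1) from by
                  rw [show q' - (r - 1) = 0 from by omega, Nat.mul_zero, hd0]
                  omega]
                exact this
            rw [t1, if_neg (by omega), if_pos (by omega), t3]
            rw [show q'.choose (r - 1) = 1 from by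
              rw [show q' = r - 1 from by omega, Nat.choose_self]]
            rw [show r = (r - 1) + 1 from by omega]
            push_cast
            ring
        · -- S
          have hq'r : r ≤ q' := by omega
          rw [hstep _]
          rw [show q' + 1 - 1 = q' from rfl, show q' + 1 - r - 1 = q' - r from by omega]
          have t1 : (F (1 - ((q' * k + r : ℕ):ℤ))).coeff (k * (q' - r) + r)
              = (-1)^r * ((q' - 1).choose (r - 1) : ℤ) := IH1.2.2.1 hr1 hq'r
          have t2 : (if k ≤ k * (q' - r) + r
                then (F (1 - ((q' * k + r : ℕ):ℤ))).coeff (k * (q' - r) + r - k) else 0)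
              = (-1)^r * ((r:ℤ) + 1) * ((q' - 1).choose r : ℤ) := by
            by_cases hqe : r + 1 ≤ q'
            · have hd : k * (q' - r) = k * (q' - r - 1) + k := kmul_succ_sub k (q' - r) (by omega)
              rw [if_pos (by omega)]
              have := IH1.2.2.2.2.1 hr1 hqe
              rw [show k * (q' - r) + r - k = k * (q' - r - 1) + r from by omega]
              exact this
            · rw [if_neg ?_, show (q' - 1).choose r = 0 from Nat.choose_eq_zero_of_lt (by omega)]
              · push_cast; ring
              · rw [show q' - r = 0 from by omega, Nat.mul_zero]; omega
          have t3 : (F (1 - ((q' * k + (r - 1) : ℕ):ℤ))).coeff (k * (q' - r) + r - 1)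
              = (-1)^(r - 1) * (r:ℤ) * ((q' - 1).choose (r - 1) : ℤ) := by
            by_cases hre : r = 1
            · subst hre
              have := IH2.2.2.2.1 rfl
              rw [show k * (q' - 1) + 1 - 1 = k * (q' - 1) from by omega]
              simpa using this
            · have := IH2.2.2.2.2.1 (by omega) (by omega)
              rw [show k * (q' - r) + r - 1 = k * (q' - (r - 1) - 1) + (r - 1) from by
                rw [show q' - (r - 1) - 1 = q' - r from by omega]; omega]
              rw [this]
              rw [show ((r - 1 : ℕ):ℤ) = (r:ℤ) - 1 from by omega]
              ring
          rw [t1, t2, if_pos (by omega), t3]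
          obtain ⟨b, rfl⟩ : ∃ b, r = b + 1 := ⟨r - 1, by omega⟩
          obtain ⟨a, rfl⟩ : ∃ a, q' = a + 1 := ⟨q' - 1, by omega⟩
          simp only [show a + 1 - 1 = a from rfl, show b + 1 - 1 = b from rfl]
          rw [Nat.choose_succ_succ a b]
          push_cast
          ring

end Aux

/-- Second-highest coefficient of the `k`-generalized Fibonacci polynomial
for `n ≤ 0`: (i) if `r = 0` and `|n| ≥ 2k - 1`, the coefficient of `x^(|n|+1-2k)` equals
`2q - 3` when `k = 2` and `q - 1` when `k ≥ 3`; (ii) if `1 ≤ r ≤ k-1` and `q ≥ r + 1`,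
the coefficient of `x^(|n|+1-k(r+1))` equals `(-1)^r (r+1) C(q-1, r)`. -/
theorem fib_poly_second_highest_coeff_neg (k : ℕ) (hk : 2 ≤ k)
    (F : ℤ → Polynomial ℤ)
    (hrec : ∀ n : ℤ, F n = ∑ i ∈ Finset.range k, X ^ (k - 1 - i) * F (n - 1 - (i : ℤ)))
    (hF1 : F 1 = 1)
    (hF0 : ∀ m : ℕ, m ≤ k - 2 → F (-(m : ℤ)) = 0)
    (n : ℤ) (hn : n ≤ 0) (q r : ℕ)
    (hq : q = ((-n).toNat + 1) / k)
    (hr : r = ((-n).toNat + 1) % k) :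
    (r = 0 → 2 * k - 1 ≤ (-n).toNat → k = 2 →
      (F n).coeff ((-n).toNat + 1 - 2 * k) = 2 * (q : ℤ) - 3) ∧
    (r = 0 → 2 * k - 1 ≤ (-n).toNat → 3 ≤ k →
      (F n).coeff ((-n).toNat + 1 - 2 * k) = (q : ℤ) - 1) ∧
    (1 ≤ r → r + 1 ≤ q →
      (F n).coeff ((-n).toNat + 1 - k * (r + 1)) =
        (-1) ^ r * ((r : ℤ) + 1) * ((q - 1).choose r : ℤ)) := by
  set m : ℕ := (-n).toNat + 1 with hm
  have hmn : (m : ℤ) = -n + 1 := by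
    simp only [hm]
    push_cast [Int.toNat_of_nonneg (by omega : (0:ℤ) ≤ -n)]
    ring
  have hn1 : n = 1 - (m:ℤ) := by omega
  have hrk : r < k := by rw [hr]; exact Nat.mod_lt _ (by omega)
  have hqk : q * k + r = m := by
    rw [hq, hr, mul_comm]
    exact Nat.div_add_mod m k
  have H := main hk F hrec hF1 hF0 q r hrk
  refine ⟨?_, ?_, ?_⟩
  · intro hr0 h2k hk2
    have hq2 : 2 ≤ q := by
      by_contra hcon
      have : q ≤ 1 := by omega
      have : q * k ≤ k := by
        calc q * k ≤ 1 * k := Nat.mul_le_mul_right _ this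
        _ = k := one_mul k
      omega
    have hidx : m - 2 * k = k * (q - 2) := by
      obtain ⟨q', rfl⟩ : ∃ q', q = q' + 2 := ⟨q - 2, by omega⟩
      have h1 : (q' + 2) * k = q' * k + 2 * k := by ring
      have h2 : k * (q' + 2 - 2) = k * q' := by norm_num
      have h3 : k * q' = q' * k := Nat.mul_comm k q'
      omega
    have := H.2.2.2.2.2 hr0 hq2
    rw [hn1, ← hqk]
    have hidx' : q * k + r - 2 * k = k * (q - 2) := by omega
    rw [hidx']
    rw [if_pos hk2] at this
    exact this
  · intro hr0 h2k hk3
    have hq2 : 2 ≤ q := by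
      by_contra hcon
      have : q ≤ 1 := by omega
      have : q * k ≤ k := by
        calc q * k ≤ 1 * k := Nat.mul_le_mul_right _ this
        _ = k := one_mul k
      omega
    have hidx : m - 2 * k = k * (q - 2) := by
      obtain ⟨q', rfl⟩ : ∃ q', q = q' + 2 := ⟨q - 2, by omega⟩
      have h1 : (q' + 2) * k = q' * k + 2 * k := by ring
      have h2 : k * (q' + 2 - 2) = k * q' := by norm_num
      have h3 : k * q' = q' * k := Nat.mul_comm k q'
      omega
    have := H.2.2.2.2.2 hr0 hq2
    rw [hn1, ← hqk]
    have hidx' : q * k + r - 2 * k = k * (q - 2) := by omega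
    rw [hidx']
    rw [if_neg (by omega)] at this
    exact this
  · intro hr1 hrq
    have hidx : m - k * (r + 1) = k * (q - r - 1) + r := by
      obtain ⟨q', rfl⟩ : ∃ q', q = q' + r + 1 := ⟨q - r - 1, by omega⟩
      have h1 : (q' + r + 1) * k = q' * k + r * k + k := by ring
      have h2 : k * (r + 1) = k * r + k := by ring
      have h3 : k * (q' + r + 1 - r - 1) = k * q' := by
        rw [show q' + r + 1 - r - 1 = q' from by omega]
      have h4 : k * q' = q' * k := Nat.mul_comm k q'
      have h5 : k * r = r * k := Nat.mul_comm k r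
      omega
    have := H.2.2.2.2.1 hr1 hrq
    rw [hn1, ← hqk]
    have hidx' : q * k + r - k * (r + 1) = k * (q - r - 1) + r := by omega
    rw [hidx']
    exact this
end

section
/- Let k ≥ 2 be an integer and n ∈ ℤ. There exists a polynomial P ∈ ℤ[x] such that 𝓕_{n,k}(x) = x^{r_{n,k}} · P(x^k) (P evaluated at x^k). Moreover, if 𝓕_{n,k} is not the zero polynomial, then P can be chosen with P(0) ≠ 0; equivalently, every exponent j with nonzero coefficient in 𝓕_{n,k} satisfies j ≡ r_{n,k} (mod k), and the smallest such exponent is exactly r_{n,k}. -/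
open Polynomial

open Finset

namespace FibAux

/-- Alternating partial sum of a row. -/
noncomputable def T (g : ℕ → Polynomial ℤ) (r : ℕ) : Polynomial ℤ :=
  ∑ m ∈ Finset.range r, (-1) ^ m * g m

/-- The Pascal-like family for negative-index k-Fibonacci polynomials. -/
noncomputable def Grow (k : ℕ) : ℕ → ℕ → Polynomial ℤ
  | 0, 0 => 1
  | 0, _ + 1 => 0
  | q + 1, 0 => (1 + X) * Grow k q 0 - X * T (Grow k q) k
  | q + 1, r + 1 => (1 + X) * Grow k q (r + 1) + Grow k q r

lemma grow_succ_zero (k q : ℕ) :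
    Grow k (q + 1) 0 = (1 + X) * Grow k q 0 - X * T (Grow k q) k := rfl

lemma grow_succ_succ (k q r : ℕ) :
    Grow k (q + 1) (r + 1) = (1 + X) * Grow k q (r + 1) + Grow k q r := rfl

lemma T_succ (g : ℕ → Polynomial ℤ) (r : ℕ) :
    T g (r + 1) = T g r + (-1) ^ r * g r := by
  simp [T, Finset.sum_range_succ]

lemma key (k q r : ℕ) :
    T (Grow k (q + 1)) (r + 1) =
      (-1) ^ r * Grow k q r + X * T (Grow k q) (r + 1) - X * T (Grow k q) k := by
  induction r with
  | zero =>
    rw [T_succ, grow_succ_zero, T_succ]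
    simp only [T, Finset.range_zero, Finset.sum_empty, pow_zero, one_mul]
    ring
  | succ r ih =>
    rw [T_succ, ih, grow_succ_succ, T_succ (Grow k q) (r + 1)]
    ring

lemma grow_eq_zero (k : ℕ) : ∀ q r : ℕ, q < r → Grow k q r = 0 := by
  intro q
  induction q with
  | zero => intro r hr; match r, hr with | r + 1, _ => rfl
  | succ q ih =>
    intro r hr
    match r, hr with
    | r + 1, hr =>
      rw [grow_succ_succ, ih (r + 1) (by omega), ih r (by omega)]; ring

lemma grow_coeff_zero (k : ℕ) : ∀ q r : ℕ, (Grow k q r).coeff 0 = (q.choose r : ℤ) := by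
  intro q
  induction q with
  | zero =>
    intro r
    match r with
    | 0 => simp [Grow]
    | r + 1 => show (0 : Polynomial ℤ).coeff 0 = _; simp
  | succ q ih =>
    intro r
    match r with
    | 0 =>
      rw [grow_succ_zero]
      simp [mul_coeff_zero, ih, coeff_X_zero]
    | r + 1 =>
      rw [grow_succ_succ]
      simp [mul_coeff_zero, ih, coeff_X_zero, Nat.choose_succ_succ]
      ring

/-- candidate value of `F (1 - t)` -/
noncomputable def W (k t : ℕ) : Polynomial ℤ :=
  (-1) ^ (t % k) * X ^ (t % k) * expand ℤ k (Grow k (t / k) (t % k))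

lemma dm_mod (k q r : ℕ) (hr : r < k) : (q * k + r) % k = r := by
  rw [mul_comm, Nat.mul_add_mod, Nat.mod_eq_of_lt hr]

lemma dm_div (k q r : ℕ) (hr : r < k) : (q * k + r) / k = q := by
  rw [add_comm, Nat.add_mul_div_right _ _ (by omega : 0 < k), Nat.div_eq_of_lt hr]; omega

lemma W_eq (k q r : ℕ) (hr : r < k) :
    W k (q * k + r) = (-1) ^ r * X ^ r * expand ℤ k (Grow k q r) := by
  rw [W, dm_mod k q r hr, dm_div k q r hr]

lemma T_zero (g : ℕ → Polynomial ℤ) : T g 0 = 0 := by simp [T]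

lemma tail_sum (g : ℕ → Polynomial ℤ) :
    ∀ b a : ℕ, a ≤ b →
      ∑ j ∈ Finset.range (b - a), (-1) ^ (b - 1 - j) * g (b - 1 - j) = T g b - T g a := by
  intro b
  induction b with
  | zero =>
    intro a ha
    have : a = 0 := by omega
    subst this
    simp
  | succ b ih =>
    intro a ha
    rcases Nat.eq_or_lt_of_le ha with h | h
    · rw [h]
      simp
    · have ha' : a ≤ b := by omega
      have h1 : b + 1 - a = (b - a) + 1 := by omega
      rw [h1, Finset.sum_range_succ']
      have e2 : ∀ j : ℕ, b + 1 - 1 - (j + 1) = b - 1 - j := by omega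
      have e3 : b + 1 - 1 - 0 = b := by omega
      simp only [e2, e3]
      rw [ih a ha', T_succ]
      ring

lemma expand_T (k : ℕ) (g : ℕ → Polynomial ℤ) (a : ℕ) :
    expand ℤ k (T g a) = ∑ m ∈ Finset.range a, (-1) ^ m * expand ℤ k (g m) := by
  simp [T, map_sum, map_mul, map_pow, map_neg, map_one]

lemma pull (k : ℕ) (c : Polynomial ℤ) (g : ℕ → Polynomial ℤ) (a : ℕ) :
    ∑ m ∈ Finset.range a, (-1) ^ m * (c * expand ℤ k (g m)) = c * expand ℤ k (T g a) := by
  rw [expand_T, Finset.mul_sum]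
  exact Finset.sum_congr rfl fun m _ => by ring

lemma W_step (k : ℕ) (hk : 2 ≤ k) (q r : ℕ) (hr : r < k) :
    W k ((q + 1) * k + r) =
      W k (q * k + r)
        - ∑ j ∈ Finset.range (k - 1), X ^ (j + 1) * W k ((q + 1) * k + r - (j + 1)) := by
  have hk0 : 0 < k := by omega
  have e1 : (q + 1) * k = q * k + k := by ring
  -- rewrite each summand
  have hsum : ∀ j ∈ Finset.range (k - 1),
      X ^ (j + 1) * W k ((q + 1) * k + r - (j + 1)) =
        if j < r then (-1) ^ (r - 1 - j) * X ^ r * expand ℤ k (Grow k (q + 1) (r - 1 - j))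
        else (-1) ^ (k - 1 - (j - r)) * X ^ (k + r) *
          expand ℤ k (Grow k q (k - 1 - (j - r))) := by
    intro j hj
    rw [Finset.mem_range] at hj
    by_cases hjr : j < r
    · rw [if_pos hjr]
      have h1 : (q + 1) * k + r - (j + 1) = (q + 1) * k + (r - 1 - j) := by omega
      rw [h1, W_eq k (q + 1) (r - 1 - j) (by omega)]
      rw [show X ^ (j + 1) * ((-1) ^ (r - 1 - j) * X ^ (r - 1 - j) * expand ℤ k (Grow k (q+1) (r - 1 - j)))
          = (-1) ^ (r - 1 - j) * (X ^ (j + 1) * X ^ (r - 1 - j)) * expand ℤ k (Grow k (q+1) (r - 1 - j)) by ring,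
        ← pow_add, show j + 1 + (r - 1 - j) = r by omega]
    · rw [if_neg hjr]
      have h1 : (q + 1) * k + r - (j + 1) = q * k + (k - 1 - (j - r)) := by omega
      rw [h1, W_eq k q (k - 1 - (j - r)) (by omega)]
      rw [show X ^ (j + 1) * ((-1) ^ (k - 1 - (j-r)) * X ^ (k - 1 - (j-r)) * expand ℤ k (Grow k q (k - 1 - (j-r))))
          = (-1) ^ (k - 1 - (j-r)) * (X ^ (j + 1) * X ^ (k - 1 - (j-r))) * expand ℤ k (Grow k q (k - 1 - (j-r))) by ring,
        ← pow_add, show j + 1 + (k - 1 - (j - r)) = k + r by omega]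
  rw [Finset.sum_congr rfl hsum]
  have hrk1 : r ≤ k - 1 := by omega
  rw [Finset.range_eq_Ico, ← Finset.sum_Ico_consecutive _ (Nat.zero_le r) hrk1]
  have hA : (∑ j ∈ Finset.Ico 0 r,
      if j < r then (-1) ^ (r - 1 - j) * X ^ r * expand ℤ k (Grow k (q + 1) (r - 1 - j))
      else (-1) ^ (k - 1 - (j - r)) * X ^ (k + r) * expand ℤ k (Grow k q (k - 1 - (j - r))))
      = X ^ r * expand ℤ k (T (Grow k (q + 1)) r) := by
    rw [← Finset.range_eq_Ico]
    have e4 : ∀ j ∈ Finset.range r,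
        (if j < r then (-1) ^ (r - 1 - j) * X ^ r * expand ℤ k (Grow k (q + 1) (r - 1 - j))
        else (-1) ^ (k - 1 - (j - r)) * X ^ (k + r) * expand ℤ k (Grow k q (k - 1 - (j - r))))
        = (-1) ^ (r - 1 - j) * ((fun m => X ^ r * expand ℤ k (Grow k (q + 1) m)) (r - 1 - j)) := by
      intro j hj
      rw [Finset.mem_range] at hj
      rw [if_pos hj]
      ring
    rw [Finset.sum_congr rfl e4]
    have := tail_sum (fun m => X ^ r * expand ℤ k (Grow k (q + 1) m)) r 0 (Nat.zero_le r)
    rw [Nat.sub_zero] at this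
    rw [this, T_zero, sub_zero]
    exact pull k (X ^ r) (Grow k (q + 1)) r
  have hB : (∑ j ∈ Finset.Ico r (k - 1),
      if j < r then (-1) ^ (r - 1 - j) * X ^ r * expand ℤ k (Grow k (q + 1) (r - 1 - j))
      else (-1) ^ (k - 1 - (j - r)) * X ^ (k + r) * expand ℤ k (Grow k q (k - 1 - (j - r))))
      = X ^ (k + r) * expand ℤ k (T (Grow k q) k)
        - X ^ (k + r) * expand ℤ k (T (Grow k q) (r + 1)) := by
    rw [Finset.sum_Ico_eq_sum_range]
    have e5 : ∀ j ∈ Finset.range (k - 1 - r),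
        (if r + j < r then (-1) ^ (r - 1 - (r + j)) * X ^ r * expand ℤ k (Grow k (q + 1) (r - 1 - (r + j)))
        else (-1) ^ (k - 1 - (r + j - r)) * X ^ (k + r) * expand ℤ k (Grow k q (k - 1 - (r + j - r))))
        = (-1) ^ (k - 1 - j) * ((fun m => X ^ (k + r) * expand ℤ k (Grow k q m)) (k - 1 - j)) := by
      intro j hj
      rw [if_neg (by omega)]
      have e6 : r + j - r = j := by omega
      rw [e6]
      ring
    rw [Finset.sum_congr rfl e5]
    have e7 : k - 1 - r = k - (r + 1) := by omega
    rw [e7]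
    have := tail_sum (fun m => X ^ (k + r) * expand ℤ k (Grow k q m)) k (r + 1) (by omega)
    rw [this]
    rw [show T (fun m => X ^ (k + r) * expand ℤ k (Grow k q m)) k
        = X ^ (k + r) * expand ℤ k (T (Grow k q) k) from pull k _ _ k,
      show T (fun m => X ^ (k + r) * expand ℤ k (Grow k q m)) (r + 1)
        = X ^ (k + r) * expand ℤ k (T (Grow k q) (r + 1)) from pull k _ _ (r + 1)]
  rw [hA, hB, W_eq k (q + 1) r hr, W_eq k q r hr]
  have K := congrArg (expand ℤ k) (key k q r)
  simp only [map_sub, map_add, map_mul, map_pow, map_neg, map_one, expand_X] at K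
  have TS := congrArg (expand ℤ k) (T_succ (Grow k (q + 1)) r)
  simp only [map_add, map_mul, map_pow, map_neg, map_one] at TS
  linear_combination (X : Polynomial ℤ) ^ r * K - X ^ r * TS



section WithF

variable (k : ℕ) (F : ℤ → Polynomial ℤ)

/-- matching at nonpositive indices -/
lemma Fmatch (hk : 2 ≤ k)
    (hrec : ∀ n : ℤ, F n = ∑ i ∈ Finset.range k, X ^ (k - 1 - i) * F (n - 1 - (i : ℤ)))
    (hF1 : F 1 = 1)
    (hF0 : ∀ m : ℕ, m ≤ k - 2 → F (-(m : ℤ)) = 0) :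
    ∀ t : ℕ, F (1 - (t : ℤ)) = W k t := by
  intro t
  induction t using Nat.strong_induction_on with
  | _ t ih =>
    rcases lt_or_ge t k with ht | ht
    · -- base cases
      rcases Nat.eq_zero_or_pos t with h0 | h1
      · subst h0
        rw [W]
        simp only [Nat.zero_mod, Nat.zero_div]
        have : Grow k 0 0 = 1 := rfl
        rw [this]
        simpa using hF1
      · have hz : F (1 - (t : ℤ)) = 0 := by
          have : (1 : ℤ) - t = -((t - 1 : ℕ) : ℤ) := by omega
          rw [this]
          exact hF0 (t - 1) (by omega)
        rw [hz, W]
        rw [Nat.mod_eq_of_lt ht, Nat.div_eq_of_lt ht]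
        obtain ⟨s, rfl⟩ : ∃ s, t = s + 1 := ⟨t - 1, by omega⟩
        have : Grow k 0 (s + 1) = 0 := rfl
        rw [this]
        simp
    · -- inductive step
      have hq1 : 1 ≤ t / k := Nat.one_le_div_iff (by omega) |>.mpr ht
      obtain ⟨q, hq⟩ : ∃ q, t / k = q + 1 := ⟨t / k - 1, by omega⟩
      set r := t % k with hrdef
      have hrk : r < k := Nat.mod_lt _ (by omega)
      have htqr : t = (q + 1) * k + r := by
        have h := Nat.div_add_mod t k
        rw [hq] at h
        have h2 : k * (q + 1) = (q + 1) * k := by ring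
        omega
      -- use hrec at n = 1 - t + k
      have hn := hrec (1 - (t : ℤ) + k)
      have hsplit := Finset.sum_range_succ
        (fun i : ℕ => X ^ (k - 1 - i) * F (1 - (t:ℤ) + (k:ℤ) - 1 - (i:ℤ))) (k - 1)
      rw [show k - 1 + 1 = k from by omega] at hsplit
      rw [hsplit] at hn
      have hlast : X ^ (k - 1 - (k - 1)) * F (1 - (t:ℤ) + k - 1 - ((k-1 : ℕ) : ℤ))
          = F (1 - (t : ℤ)) := by
        rw [Nat.sub_self]
        have : (1 : ℤ) - t + k - 1 - ((k - 1 : ℕ) : ℤ) = 1 - t := by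
          push_cast [Nat.cast_sub (by omega : 1 ≤ k)]
          ring
        rw [this, pow_zero, one_mul]
      rw [hlast] at hn
      -- F (1 - t) = F (1 - (t - k)) - ∑ ...
      have hmain : F (1 - (t : ℤ)) = F (1 - ((t - k : ℕ) : ℤ))
          - ∑ i ∈ Finset.range (k - 1), X ^ (k - 1 - i) * F (1 - ((t - (k - 1 - i) : ℕ) : ℤ)) := by
      -- 1 - t + k = 1 - (t - k); and 1-t+k-1-i = 1 - (t - (k-1-i))
        have hL : (1 : ℤ) - t + k = 1 - ((t - k : ℕ) : ℤ) := by omega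
        rw [hL] at hn
        have hcong : ∀ i ∈ Finset.range (k - 1),
            X ^ (k - 1 - i) * F (1 - ((t - k : ℕ) : ℤ) - 1 - (i : ℤ))
            = X ^ (k - 1 - i) * F (1 - ((t - (k - 1 - i) : ℕ) : ℤ)) := by
          intro i hi
          rw [Finset.mem_range] at hi
          congr 1
          congr 1
          omega
        rw [Finset.sum_congr rfl hcong] at hn
        linear_combination -hn
      rw [hmain, ih (t - k) (by omega)]
      have hstep := W_step k hk q r hrk
      rw [← htqr] at hstep
      have ht2 : t - k = q * k + r := by
        have h3 : (q + 1) * k = q * k + k := by ring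
        omega
      rw [← ht2] at hstep
      rw [hstep]
      congr 1
      -- the two sums match after reindexing j := k - 2 - i  (i.e. reflection)
      rw [← Finset.sum_range_reflect (fun j => X ^ (j + 1) * W k (t - (j + 1))) (k - 1)]
      refine Finset.sum_congr rfl fun i hi => ?_
      rw [Finset.mem_range] at hi
      have e1 : k - 1 - 1 - i + 1 = k - 1 - i := by omega
      rw [e1, ih (t - (k - 1 - i)) (by omega)]

lemma pos_side (hk : 2 ≤ k)
    (hrec : ∀ n : ℤ, F n = ∑ i ∈ Finset.range k, X ^ (k - 1 - i) * F (n - 1 - (i : ℤ)))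
    (hF1 : F 1 = 1)
    (hF0 : ∀ m : ℕ, m ≤ k - 2 → F (-(m : ℤ)) = 0) :
    ∀ m : ℕ, (∀ j, 0 ≤ (F ((m : ℤ) + 1)).coeff j) ∧
      (∀ j, (F ((m : ℤ) + 1)).coeff j ≠ 0 → (j : ZMod k) = -(m : ZMod k)) ∧
      ∃ j0, j0 < k ∧ ((j0 : ZMod k) = -(m : ZMod k)) ∧ 0 < (F ((m : ℤ) + 1)).coeff j0 := by
  intro m
  induction m using Nat.strong_induction_on with
  | _ m ih =>
  rcases Nat.eq_zero_or_pos m with rfl | hm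
  · rw [show ((0 : ℕ) : ℤ) + 1 = 1 by norm_num, hF1]
    refine ⟨fun j => ?_, fun j hj => ?_, 0, by omega, by simp, by simp⟩
    · rw [coeff_one]; split <;> norm_num
    · rw [coeff_one] at hj
      have : j = 0 := by by_contra h; rw [if_neg (by simpa using h)] at hj; exact hj rfl
      subst this; simp
  · have hn := hrec ((m : ℤ) + 1)
    have hsimp : ∀ i : ℕ, (m : ℤ) + 1 - 1 - (i : ℤ) = (m : ℤ) - i := by intro i; ring
    simp only [hsimp] at hn
    have hterm : ∀ i ∈ Finset.range k,
        (∀ j : ℕ, 0 ≤ (X ^ (k - 1 - i) * F ((m : ℤ) - i)).coeff j) ∧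
        (∀ j : ℕ, (X ^ (k - 1 - i) * F ((m : ℤ) - i)).coeff j ≠ 0 →
          (j : ZMod k) = -(m : ZMod k)) := by
      intro i hi
      rw [Finset.mem_range] at hi
      by_cases him : i < m
      · have hFi : (m : ℤ) - i = ((m - i - 1 : ℕ) : ℤ) + 1 := by omega
        rw [hFi]
        obtain ⟨h1, h2, -⟩ := ih (m - i - 1) (by omega)
        constructor
        · intro j
          rw [mul_comm, Polynomial.coeff_mul_X_pow']
          split
          · exact h1 _
          · exact le_refl 0
        · intro j hj
          rw [mul_comm, Polynomial.coeff_mul_X_pow'] at hj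
          by_cases hle : k - 1 - i ≤ j
          · rw [if_pos hle] at hj
            have hc := h2 _ hj
            have e1 : j = (j - (k - 1 - i)) + (k - 1 - i) := by omega
            rw [e1]
            push_cast
            rw [hc]
            have e2 : ((k - 1 - i : ℕ) : ZMod k) = -1 - (i : ZMod k) := by
              have : ((k - 1 - i : ℕ) : ZMod k) = ((k : ℕ) : ZMod k) - 1 - (i : ZMod k) := by
                rw [show k - 1 - i = k - (1 + i) from by omega,
                  Nat.cast_sub (by omega : 1 + i ≤ k)]
                push_cast
                ring
              rw [this, ZMod.natCast_self]
              ring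
            have e3 : ((m - i - 1 : ℕ) : ZMod k) = (m : ZMod k) - i - 1 := by
              rw [show m - i - 1 = m - (i + 1) from by omega,
                Nat.cast_sub (by omega : i + 1 ≤ m)]
              push_cast
              ring
            rw [e2, e3]
            ring
          · rw [if_neg hle] at hj
            exact absurd rfl hj
      · have hFi : F ((m : ℤ) - i) = 0 := by
          have : (m : ℤ) - i = -((i - m : ℕ) : ℤ) := by omega
          rw [this]
          exact hF0 (i - m) (by omega)
        rw [hFi, mul_zero]
        simp
    have hnonneg : ∀ j, 0 ≤ (F ((m : ℤ) + 1)).coeff j := by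
      intro j
      rw [hn, Polynomial.finset_sum_coeff]
      exact Finset.sum_nonneg fun i hi => (hterm i hi).1 j
    refine ⟨hnonneg, fun j hj => ?_, ?_⟩
    · rw [hn, Polynomial.finset_sum_coeff] at hj
      obtain ⟨i, hi, hne⟩ := Finset.exists_ne_zero_of_sum_ne_zero hj
      exact (hterm i hi).2 j hne
    · -- witness
      have key : ∀ i0 ∈ Finset.range k, ∀ j0,
          (F ((m : ℤ) + 1)).coeff j0 ≥ (X ^ (k - 1 - i0) * F ((m : ℤ) - i0)).coeff j0 := by
        intro i0 hi0 j0
        rw [hn, Polynomial.finset_sum_coeff]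
        exact Finset.single_le_sum (fun i hi => (hterm i hi).1 j0) hi0
      rcases lt_or_ge m k with hmk | hmk
      · -- use i0 = m - 1, j0 = k - m
        have hi0 : m - 1 ∈ Finset.range k := by rw [Finset.mem_range]; omega
        have hterm0 : (X ^ (k - 1 - (m - 1)) * F ((m : ℤ) - (m - 1 : ℕ))).coeff (k - m) = 1 := by
          have e1 : (m : ℤ) - (m - 1 : ℕ) = 1 := by omega
          have e2 : k - 1 - (m - 1) = k - m := by omega
          rw [e1, e2, hF1, mul_one, Polynomial.coeff_X_pow, if_pos rfl]
        refine ⟨k - m, by omega, ?_, ?_⟩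
        · rw [Nat.cast_sub (by omega : m ≤ k), ZMod.natCast_self]
          ring
        · have := key (m - 1) hi0 (k - m)
          rw [hterm0] at this
          omega
      · -- use i0 = k - 1
        have hi0 : k - 1 ∈ Finset.range k := by rw [Finset.mem_range]; omega
        obtain ⟨-, -, j0, hj0k, hj0c, hj0pos⟩ := ih (m - k) (by omega)
        have hterm0 : (X ^ (k - 1 - (k - 1)) * F ((m : ℤ) - (k - 1 : ℕ))).coeff j0
            = (F (((m - k : ℕ) : ℤ) + 1)).coeff j0 := by
          have e1 : (m : ℤ) - (k - 1 : ℕ) = ((m - k : ℕ) : ℤ) + 1 := by omega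
          rw [Nat.sub_self, pow_zero, one_mul, e1]
        refine ⟨j0, hj0k, ?_, ?_⟩
        · rw [hj0c, Nat.cast_sub (by omega : k ≤ m), ZMod.natCast_self]
          ring
        · have := key (k - 1) hi0 j0
          rw [hterm0] at this
          omega

end WithF

lemma coeff_Xpow_mul_expand (k r : ℕ) (hk : 0 < k) (Q : Polynomial ℤ) (j : ℕ) :
    (X ^ r * Q.comp (X ^ k)).coeff j
      = if r ≤ j then (if k ∣ (j - r) then Q.coeff ((j - r) / k) else 0) else 0 := by
  rw [← Polynomial.expand_eq_comp_X_pow, mul_comm, Polynomial.coeff_mul_X_pow']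
  split
  · rw [Polynomial.coeff_expand hk]
  · rfl

lemma repr_coeff (k r : ℕ) (hk : 0 < k) (hr : r < k) (Q : Polynomial ℤ) :
    (∀ j : ℕ, (X ^ r * Q.comp (X ^ k)).coeff j ≠ 0 → j % k = r) ∧
    (X ^ r * Q.comp (X ^ k)).coeff r = Q.coeff 0 ∧
    (∀ j : ℕ, j < r → (X ^ r * Q.comp (X ^ k)).coeff j = 0) := by
  refine ⟨fun j hj => ?_, ?_, fun j hjr => ?_⟩
  · rw [coeff_Xpow_mul_expand k r hk] at hj
    by_cases h1 : r ≤ j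
    · rw [if_pos h1] at hj
      by_cases h2 : k ∣ (j - r)
      · obtain ⟨c, hc⟩ := h2
        have : j = r + k * c := by omega
        rw [this, Nat.add_mul_mod_self_left, Nat.mod_eq_of_lt hr]
      · rw [if_neg h2] at hj; exact absurd rfl hj
    · rw [if_neg h1] at hj; exact absurd rfl hj
  · rw [coeff_Xpow_mul_expand k r hk, if_pos (le_refl r), Nat.sub_self,
      if_pos (dvd_zero k), Nat.zero_div]
  · rw [coeff_Xpow_mul_expand k r hk, if_neg (by omega)]

lemma exists_repr (k r : ℕ) (hk : 0 < k) (p : Polynomial ℤ)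
    (hcong : ∀ j : ℕ, p.coeff j ≠ 0 → j % k = r) :
    ∃ Q : Polynomial ℤ, p = X ^ r * Q.comp (X ^ k) ∧ Q.coeff 0 = p.coeff r := by
  set N := p.natDegree with hN
  set Q : Polynomial ℤ :=
    ∑ c ∈ Finset.range (N + 1), Polynomial.monomial c (p.coeff (r + k * c)) with hQ
  have hQc : ∀ d : ℕ, Q.coeff d = if d < N + 1 then p.coeff (r + k * d) else 0 := by
    intro d
    rw [hQ, Polynomial.finset_sum_coeff]
    simp only [Polynomial.coeff_monomial]
    rw [Finset.sum_ite_eq' (Finset.range (N + 1)) d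
      (fun c => p.coeff (r + k * c))]
    simp [Finset.mem_range]
  refine ⟨Q, ?_, ?_⟩
  · ext j
    rw [coeff_Xpow_mul_expand k r hk]
    by_cases hpj : p.coeff j = 0
    · rw [hpj]
      by_cases h1 : r ≤ j
      · rw [if_pos h1]
        by_cases h2 : k ∣ (j - r)
        · rw [if_pos h2, hQc]
          obtain ⟨c, hc⟩ := h2
          rw [show j - r = k * c from hc, Nat.mul_div_cancel_left c hk]
          split
          · rw [show r + k * c = j from by omega, hpj]
          · rfl
        · rw [if_neg h2]
      · rw [if_neg h1]
    · have hjr := hcong j hpj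
      have hjN : j ≤ N := Polynomial.le_natDegree_of_ne_zero hpj
      obtain ⟨c, hc⟩ : ∃ c, j = k * c + r := by
        refine ⟨j / k, ?_⟩
        conv_lhs => rw [← Nat.div_add_mod j k]
        rw [hjr]
      have hcj : c ≤ j := by
        have : c ≤ k * c := Nat.le_mul_of_pos_left c hk
        omega
      rw [if_pos (by omega), if_pos ⟨c, by omega⟩,
        show j - r = k * c from by omega, Nat.mul_div_cancel_left c hk, hQc,
        if_pos (by omega), show r + k * c = j from by omega]
  · rw [hQc, if_pos (by omega), Nat.mul_zero, Nat.add_zero]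

end FibAux


open FibAux in
/-- `F n = x^r · P(x^k)` for some `P ∈ ℤ[x]`, where `r = r_{n,k}`; moreover,
if `F n ≠ 0` then `P` can be chosen with `P(0) ≠ 0`; equivalently every exponent with
nonzero coefficient is `≡ r (mod k)` and the smallest such exponent is exactly `r`. -/
theorem fib_poly_structure (k : ℕ) (hk : 2 ≤ k)
    (F : ℤ → Polynomial ℤ)
    (hrec : ∀ n : ℤ, F n = ∑ i ∈ Finset.range k, X ^ (k - 1 - i) * F (n - 1 - (i : ℤ)))
    (hF1 : F 1 = 1)
    (hF0 : ∀ m : ℕ, m ≤ k - 2 → F (-(m : ℤ)) = 0)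
    (n : ℤ) (r : ℕ)
    (hr : r = if 0 < n then ((k - 1) * (n - 1).toNat) % k else ((-n).toNat + 1) % k) :
    (∃ P : Polynomial ℤ, F n = X ^ r * P.comp (X ^ k)) ∧
    (F n ≠ 0 →
      (∃ P : Polynomial ℤ, F n = X ^ r * P.comp (X ^ k) ∧ P.coeff 0 ≠ 0) ∧
      (∀ j : ℕ, (F n).coeff j ≠ 0 → j % k = r) ∧
      (F n).coeff r ≠ 0 ∧ (∀ j : ℕ, j < r → (F n).coeff j = 0)) := by
  have hk0 : 0 < k := by omega
  by_cases hn : 0 < n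
  · rw [if_pos hn] at hr
    set m : ℕ := (n - 1).toNat with hm
    have hnm : n = (m : ℤ) + 1 := by omega
    obtain ⟨hpos, hcongZ, j0, hj0k, hj0c, hj0pos⟩ := pos_side k F hk hrec hF1 hF0 m
    rw [← hnm] at hpos hcongZ hj0pos
    have hrk : r < k := by rw [hr]; exact Nat.mod_lt _ hk0
    have hrc : (r : ZMod k) = -(m : ZMod k) := by
      rw [hr, ZMod.natCast_mod]
      push_cast
      rw [Nat.cast_sub (by omega : 1 ≤ k)]
      push_cast
      rw [ZMod.natCast_self]
      ring
    have hcong : ∀ j : ℕ, (F n).coeff j ≠ 0 → j % k = r := by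
      intro j hj
      have h2 : (j : ZMod k) = (r : ZMod k) := by rw [hcongZ j hj, hrc]
      have h3 := (ZMod.natCast_eq_natCast_iff' _ _ _).mp h2
      rwa [Nat.mod_eq_of_lt hrk] at h3
    have hj0r : j0 = r := by
      have h2 : (j0 : ZMod k) = (r : ZMod k) := by rw [hj0c, hrc]
      have h3 := (ZMod.natCast_eq_natCast_iff' _ _ _).mp h2
      rwa [Nat.mod_eq_of_lt hj0k, Nat.mod_eq_of_lt hrk] at h3
    obtain ⟨Q, hQ, hQ0⟩ := exists_repr k r hk0 (F n) hcong
    have hcr : (F n).coeff r ≠ 0 := by rw [← hj0r]; exact ne_of_gt hj0pos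
    refine ⟨⟨Q, hQ⟩, fun _ => ⟨⟨Q, hQ, by rw [hQ0]; exact hcr⟩, hcong, hcr, fun j hjr => ?_⟩⟩
    by_contra hne
    have h4 := hcong j hne
    rw [Nat.mod_eq_of_lt (hjr.trans hrk)] at h4
    omega
  · rw [if_neg hn] at hr
    push_neg at hn
    set t : ℕ := (-n).toNat + 1 with ht
    have hnt : n = 1 - (t : ℤ) := by omega
    have hFn : F n = W k t := by rw [hnt]; exact Fmatch k F hk hrec hF1 hF0 t
    have hrr : r = t % k := hr
    have hrk : r < k := by rw [hrr]; exact Nat.mod_lt _ hk0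
    set P0 : Polynomial ℤ := C ((-1 : ℤ) ^ r) * Grow k (t / k) r with hP0def
    have hP0 : F n = X ^ r * P0.comp (X ^ k) := by
      rw [hFn, W, ← hrr, hP0def, Polynomial.mul_comp, Polynomial.C_comp,
        ← Polynomial.expand_eq_comp_X_pow]
      rw [show (C ((-1 : ℤ) ^ r) : Polynomial ℤ) = (-1 : Polynomial ℤ) ^ r by
        rw [map_pow, map_neg, map_one]]
      ring
    refine ⟨⟨P0, hP0⟩, fun hFne => ?_⟩
    have hGne : Grow k (t / k) r ≠ 0 := by
      intro h
      apply hFne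
      rw [hP0, hP0def, h, mul_zero, Polynomial.zero_comp, mul_zero]
    have hqr : r ≤ t / k := by
      by_contra h
      exact hGne (grow_eq_zero k _ _ (by omega))
    have hP00 : P0.coeff 0 ≠ 0 := by
      rw [hP0def, Polynomial.coeff_C_mul, grow_coeff_zero]
      have h1 : ((t / k).choose r : ℤ) ≠ 0 :=
        Int.natCast_ne_zero.mpr (Nat.choose_pos hqr).ne'
      intro h
      rcases mul_eq_zero.mp h with h2 | h2
      · exact absurd h2 (pow_ne_zero r (by norm_num))
      · exact h1 h2
    obtain ⟨hc1, hc2, hc3⟩ := repr_coeff k r hk0 hrk P0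
    refine ⟨⟨P0, hP0, hP00⟩, ?_, ?_, ?_⟩
    · intro j hj
      rw [hP0] at hj
      exact hc1 j hj
    · rw [hP0, hc2]
      exact hP00
    · intro j hjr
      rw [hP0]
      exact hc3 j hjr
end

section
/- Let k ≥ 2 be an integer and n ∈ ℤ with 𝓕_{n,k} not the zero polynomial. Then (x^k + 1)^{ρ_{n,k}} divides 𝓕_{n,k}(x) in ℤ[x], while (x^k + 1)^{ρ_{n,k}+1} does not divide 𝓕_{n,k}(x). -/
open Polynomial

namespace FibPolyMultAux

section
variable {k : ℕ} {F : ℤ → Polynomial ℤ}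


lemma keyid (hk : 2 ≤ k)
    (hrec : ∀ n : ℤ, F n = ∑ i ∈ Finset.range k, X ^ (k - 1 - i) * F (n - 1 - (i : ℤ)))
    (n : ℤ) :
    X * F (n+1) = (X^k + 1) * F n - F (n - (k:ℤ)) := by
  obtain ⟨K, rfl⟩ : ∃ K, k = K+1 := ⟨k-1, by omega⟩
  have h2 := hrec n
  rw [Finset.sum_range_succ, show K+1-1-K = 0 from by omega, pow_zero, one_mul] at h2
  have h1 : X * F (n+1) = ∑ i ∈ Finset.range (K+1), X * (X^(K-i) * F (n-(i:ℤ))) := by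
    rw [hrec (n+1), Finset.mul_sum]
    refine Finset.sum_congr rfl fun i hi => ?_
    rw [show K+1-1-i = K-i from by omega, show n+1-1-(i:ℤ) = n-(i:ℤ) from by ring]
  rw [Finset.sum_range_succ'] at h1
  have h3 : ∀ i ∈ Finset.range K,
      X * ((X:Polynomial ℤ)^(K-(i+1)) * F (n-((i+1:ℕ):ℤ))) = X^(K+1-1-i) * F (n-1-(i:ℤ)) := by
    intro i hi
    have hiK : i < K := Finset.mem_range.mp hi
    have e1 : (X:Polynomial ℤ) * X^(K-(i+1)) = X^(K+1-1-i) := by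
      rw [← pow_succ']; congr 1; omega
    rw [← mul_assoc, e1, show n - ((i+1:ℕ):ℤ) = n-1-(i:ℤ) from by push_cast; ring]
  rw [Finset.sum_congr rfl h3] at h1
  simp only [Nat.sub_zero, Nat.cast_zero, sub_zero] at h1
  rw [show n - ((K+1:ℕ):ℤ) = n-1-(K:ℤ) from by push_cast; ring]
  rw [h1]
  linear_combination -h2

lemma Fbase (hk : 2 ≤ k)
    (hrec : ∀ n : ℤ, F n = ∑ i ∈ Finset.range k, X ^ (k - 1 - i) * F (n - 1 - (i : ℤ)))
    (hF1 : F 1 = 1) (hF0 : ∀ m : ℕ, m ≤ k - 2 → F (-(m : ℤ)) = 0) :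
    F (1 - (k:ℤ)) = 1 := by
  obtain ⟨K, rfl⟩ : ∃ K, k = K+1 := ⟨k-1, by omega⟩
  have h1 := hrec 1
  rw [hF1, Finset.sum_range_succ] at h1
  have hsum0 : ∑ i ∈ Finset.range K, X^(K+1-1-(i:ℕ)) * F (1-1-(i:ℤ)) = 0 := by
    apply Finset.sum_eq_zero
    intro i hi
    have hiK : i < K := Finset.mem_range.mp hi
    have hz : F (1-1-(i:ℤ)) = 0 := by
      rw [show (1:ℤ)-1-(i:ℤ) = -(i:ℤ) from by ring]
      exact hF0 i (by omega)
    rw [hz, mul_zero]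
  rw [hsum0, zero_add, show K+1-1-K = 0 from by omega, pow_zero, one_mul] at h1
  rw [show (1:ℤ) - ((K+1:ℕ):ℤ) = 1-1-(K:ℤ) from by push_cast; ring]
  exact h1.symm

lemma recP (hk : 2 ≤ k)
    (hrec : ∀ n : ℤ, F n = ∑ i ∈ Finset.range k, X ^ (k - 1 - i) * F (n - 1 - (i : ℤ)))
    (b : ℕ) :
    X^(b+k+1) * F (((b+k+1:ℕ):ℤ) + 1) =
      (X^k+1) * (X^(b+k) * F (((b+k:ℕ):ℤ) + 1)) - X^k * (X^b * F (((b:ℕ):ℤ) + 1)) := by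
  have hkey := keyid hk hrec (((b+k:ℕ):ℤ) + 1)
  rw [show ((b+k:ℕ):ℤ)+1+1 = ((b+k+1:ℕ):ℤ)+1 from by push_cast; ring,
      show ((b+k:ℕ):ℤ)+1-(k:ℤ) = ((b:ℕ):ℤ)+1 from by push_cast; ring] at hkey
  linear_combination (X:Polynomial ℤ)^(b+k) * hkey

lemma recN (hk : 2 ≤ k)
    (hrec : ∀ n : ℤ, F n = ∑ i ∈ Finset.range k, X ^ (k - 1 - i) * F (n - 1 - (i : ℤ)))
    (b : ℕ) :
    F (1 - ((b+k+1:ℕ):ℤ)) = (X^k+1) * F (1 - ((b+1:ℕ):ℤ)) - X * F (1 - ((b:ℕ):ℤ)) := by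
  have hkey := keyid hk hrec (-(b:ℤ))
  rw [show (-(b:ℤ) - (k:ℤ)) = 1 - ((b+k+1:ℕ):ℤ) from by push_cast; ring,
      show (-(b:ℤ)+1) = 1 - ((b:ℕ):ℤ) from by ring,
      show (-(b:ℤ)) = 1 - ((b+1:ℕ):ℤ) from by push_cast; ring] at hkey
  linear_combination hkey



lemma F2base (hk : 2 ≤ k)
    (hrec : ∀ n : ℤ, F n = ∑ i ∈ Finset.range k, X ^ (k - 1 - i) * F (n - 1 - (i : ℤ)))
    (hF1 : F 1 = 1) (hF0 : ∀ m : ℕ, m ≤ k - 2 → F (-(m : ℤ)) = 0) :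
    ∀ s : ℕ, s + 1 ≤ k → F ((s:ℤ)+2) = X^(k-(s+1)) * (X^k+1)^s := by
  intro s
  induction s with
  | zero =>
    intro hs
    have hkey := keyid hk hrec 1
    rw [hF1, Fbase hk hrec hF1 hF0] at hkey
    rw [show ((0:ℕ):ℤ) + 2 = 1 + 1 from by norm_num]
    apply mul_left_cancel₀ (X_ne_zero : (X:Polynomial ℤ) ≠ 0)
    rw [hkey, pow_zero, mul_one]
    have e1 : (X:Polynomial ℤ) * X^(k-(0+1)) = X^k := by rw [← pow_succ']; congr 1; omega
    rw [mul_one, e1]; ring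
  | succ s ih =>
    intro hs
    have hkey := keyid hk hrec ((s:ℤ)+2)
    rw [ih (by omega)] at hkey
    have hzero : F ((s:ℤ)+2 - (k:ℤ)) = 0 := by
      rw [show (s:ℤ)+2-(k:ℤ) = -((k-(s+2) : ℕ) : ℤ) from by omega]
      exact hF0 _ (by omega)
    rw [hzero] at hkey
    rw [show ((s+1:ℕ):ℤ) + 2 = (s:ℤ)+2+1 from by push_cast; ring]
    apply mul_left_cancel₀ (X_ne_zero : (X:Polynomial ℤ) ≠ 0)
    rw [hkey]
    obtain ⟨d, hd⟩ : ∃ d, k = s+2+d := ⟨k-(s+2), by omega⟩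
    rw [show k-(s+1) = d+1 from by omega, show k-(s+1+1) = d from by omega]
    ring

lemma Pne (hk : 2 ≤ k) : ((X:Polynomial ℤ)^k + 1) ≠ 0 := by
  intro h
  have h2 := congrArg (eval 0) h
  simp [zero_pow (show k ≠ 0 by omega)] at h2

lemma copX (hk : 2 ≤ k) : IsCoprime ((X:Polynomial ℤ)^k + 1) (X : Polynomial ℤ) := by
  refine ⟨1, -X^(k-1), ?_⟩
  have hx : (X:Polynomial ℤ)^(k-1) * X = X^k := by rw [← pow_succ]; congr 1; omega
  rw [one_mul, neg_mul, hx]; ring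

lemma extract (hk : 2 ≤ k) (G : Polynomial ℤ) (a ρ c j : ℕ) (hc : c ≠ 0)
    (ε W : Polynomial ℤ) (hε : ε = 1 ∨ ε = -1)
    (h : X^a * G = (X^k+1)^ρ * (ε * (c : Polynomial ℤ) * X^j + (X^k+1) * W)) :
    (X^k+1)^ρ ∣ G ∧ ¬ (X^k+1)^(ρ+1) ∣ G := by
  have hcop : IsCoprime (((X:Polynomial ℤ)^k+1)^ρ) ((X:Polynomial ℤ)^a) := (copX hk).pow
  constructor
  · exact hcop.dvd_of_dvd_mul_left ⟨_, h⟩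
  · intro hd
    have h2 : ((X:Polynomial ℤ)^k+1)^(ρ+1) ∣ X^a * G := Dvd.dvd.mul_left hd _
    rw [h] at h2
    obtain ⟨u, hu⟩ := h2
    have hP0 : ((X:Polynomial ℤ)^k+1)^ρ ≠ 0 := pow_ne_zero _ (Pne hk)
    have h3 : (X:Polynomial ℤ)^k+1 ∣ ε * (c : Polynomial ℤ) * X^j + (X^k+1) * W := by
      refine ⟨u, mul_left_cancel₀ hP0 ?_⟩
      rw [hu]; ring
    have h4 : (X:Polynomial ℤ)^k+1 ∣ ε * (c : Polynomial ℤ) * X^j := by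
      have h5 := h3.sub (dvd_mul_right ((X:Polynomial ℤ)^k+1) W)
      simpa using h5
    have h6 : (X:Polynomial ℤ)^k+1 ∣ (c : Polynomial ℤ) * X^j := by
      rcases hε with rfl | rfl
      · simpa using h4
      · have h4' := h4
        rw [show (-1:Polynomial ℤ) * (c : Polynomial ℤ) * X^j = -((c : Polynomial ℤ) * X^j) from by ring] at h4'
        exact dvd_neg.mp h4'
    have h7 : (X:Polynomial ℤ)^k+1 ∣ (c : Polynomial ℤ) :=
      ((copX hk).pow_right).dvd_of_dvd_mul_right h6
    have h8 := Polynomial.natDegree_le_of_dvd h7 (by exact_mod_cast Nat.cast_ne_zero.mpr hc)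
    rw [Polynomial.natDegree_natCast] at h8
    have h9 : ((X:Polynomial ℤ)^k + 1).natDegree = k := by
      rw [show ((X:Polynomial ℤ)^k + 1) = X^k + C 1 from by simp, natDegree_X_pow_add_C]
    omega



lemma posMain (hk : 2 ≤ k)
    (hrec : ∀ n : ℤ, F n = ∑ i ∈ Finset.range k, X ^ (k - 1 - i) * F (n - 1 - (i : ℤ)))
    (hF1 : F 1 = 1) (hF0 : ∀ m : ℕ, m ≤ k - 2 → F (-(m : ℤ)) = 0) :
    ∀ q : ℕ,
      (∃ W, X^(q*(k+1)) * F (((q*(k+1):ℕ):ℤ) + 1) = (-1)^q * X^(q*k) + (X^k+1) * W) ∧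
      (∀ s : ℕ, s + 1 ≤ k → ∃ W, X^(q*(k+1)+s+1) * F (((q*(k+1)+s+1:ℕ):ℤ) + 1)
          = (X^k+1)^s * (-(-1)^q * (((q+s).choose q : ℕ) : Polynomial ℤ) * X^(q*k) + (X^k+1) * W)) := by
  intro q
  induction q with
  | zero =>
    constructor
    · exact ⟨0, by simp [hF1]⟩
    · intro s hs
      refine ⟨1, ?_⟩
      rw [show (((0*(k+1)+s+1:ℕ)):ℤ) + 1 = (s:ℤ)+2 from by push_cast; ring,
          F2base hk hrec hF1 hF0 s hs]
      rw [Nat.zero_add, Nat.choose_zero_right, Nat.cast_one]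
      obtain ⟨d, hd⟩ : ∃ d, k = s+1+d := ⟨k-(s+1), by omega⟩
      rw [show k-(s+1) = d from by omega]
      subst hd
      ring
  | succ Q IH =>
    obtain ⟨⟨W₂, h0⟩, IHB⟩ := IH
    have hA : ∃ W, X^((Q+1)*(k+1)) * F ((((Q+1)*(k+1):ℕ):ℤ) + 1)
        = (-1)^(Q+1) * X^((Q+1)*k) + (X^k+1) * W := by
      obtain ⟨W₁, h1⟩ := IHB (k-1) (by omega)
      rw [show Q*(k+1)+(k-1)+1 = Q*(k+1)+k from by omega] at h1
      have hrec2 := recP hk hrec (b := Q*(k+1))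
      rw [show Q*(k+1)+k+1 = (Q+1)*(k+1) from by ring] at hrec2
      refine ⟨(X^k+1)^(k-1) * (-(-1)^Q * (((Q+(k-1)).choose Q : ℕ) : Polynomial ℤ) * X^(Q*k)
          + (X^k+1)*W₁) - X^k * W₂, ?_⟩
      rw [hrec2, h1, h0]
      obtain ⟨d, hd⟩ : ∃ d, k = 1+d := ⟨k-1, by omega⟩
      rw [show k-1 = d from by omega]
      ring
    refine ⟨hA, ?_⟩
    intro s
    induction s with
    | zero =>
      intro hs
      obtain ⟨W₁, h1⟩ := hA
      obtain ⟨W₂', h0'⟩ := IHB 0 (by omega)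
      rw [show Q*(k+1)+0+1 = Q*(k+1)+1 from by omega, show Q+0 = Q from by omega,
          Nat.choose_self, Nat.cast_one] at h0'
      have hrec2 := recP hk hrec (b := Q*(k+1)+1)
      rw [show Q*(k+1)+1+k+1 = (Q+1)*(k+1)+0+1 from by ring,
          show Q*(k+1)+1+k = (Q+1)*(k+1) from by ring] at hrec2
      refine ⟨(-1)^(Q+1) * X^((Q+1)*k) + (X^k+1)*W₁ - X^k*W₂', ?_⟩
      rw [hrec2, h1, h0', show (Q+1)+0 = Q+1 from by omega, Nat.choose_self, Nat.cast_one]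
      ring
    | succ s ihs =>
      intro hs
      obtain ⟨W₁, h1⟩ := ihs (by omega)
      obtain ⟨W₂', h0'⟩ := IHB (s+1) (by omega)
      have hrec2 := recP hk hrec (b := Q*(k+1)+s+2)
      rw [show Q*(k+1)+s+2+k+1 = (Q+1)*(k+1)+(s+1)+1 from by ring,
          show Q*(k+1)+s+2+k = (Q+1)*(k+1)+s+1 from by ring] at hrec2
      rw [show Q*(k+1)+(s+1)+1 = Q*(k+1)+s+2 from by ring] at h0'
      refine ⟨W₁ - X^k * W₂', ?_⟩
      rw [hrec2, h1, h0']
      rw [show (Q+1)+(s+1) = (Q+(s+1))+1 from by ring, Nat.choose_succ_succ,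
          show (Q+1)+s = Q+(s+1) from by ring]
      push_cast
      ring



lemma negMain (hk : 2 ≤ k)
    (hrec : ∀ n : ℤ, F n = ∑ i ∈ Finset.range k, X ^ (k - 1 - i) * F (n - 1 - (i : ℤ)))
    (hF1 : F 1 = 1) (hF0 : ∀ m : ℕ, m ≤ k - 2 → F (-(m : ℤ)) = 0) :
    ∀ q : ℕ,
      (∃ W, F (1 - ((q*(k+1):ℕ):ℤ)) = (-1)^q * X^q + (X^k+1) * W) ∧
      (∀ s : ℕ, s + 1 ≤ k →
        (q + s + 1 < k → F (1 - ((q*(k+1)+s+1:ℕ):ℤ)) = 0) ∧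
        (k ≤ q + s + 1 → ∃ W, F (1 - ((q*(k+1)+s+1:ℕ):ℤ)) =
          (X^k+1)^(k-(s+1)) * ((-1)^(q+s+1-k) * ((q.choose (q+s+1-k) : ℕ) : Polynomial ℤ)
            * X^(q+s+1-k) + (X^k+1) * W))) := by
  intro q
  induction q with
  | zero =>
    constructor
    · exact ⟨0, by simp [hF1]⟩
    · intro s hs
      constructor
      · intro hlt
        rw [show (1 - ((0*(k+1)+s+1:ℕ):ℤ)) = -(s:ℤ) from by push_cast; ring]
        exact hF0 s (by omega)
      · intro hge
        refine ⟨0, ?_⟩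
        rw [show (1 - ((0*(k+1)+s+1:ℕ):ℤ)) = 1 - (k:ℤ) from by push_cast; omega,
            Fbase hk hrec hF1 hF0,
            show k-(s+1) = 0 from by omega, show 0+s+1-k = 0 from by omega]
        simp
  | succ Q IH =>
    obtain ⟨⟨W₂, h0⟩, IHB⟩ := IH
    have hA : ∃ W, F (1 - (((Q+1)*(k+1):ℕ):ℤ)) = (-1)^(Q+1) * X^(Q+1) + (X^k+1) * W := by
      have hrecn := recN hk hrec (b := Q*(k+1))
      rw [show Q*(k+1)+k+1 = (Q+1)*(k+1) from by ring] at hrecn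
      exact ⟨F (1 - ((Q*(k+1)+1:ℕ):ℤ)) - X*W₂, by rw [hrecn, h0]; ring⟩
    refine ⟨hA, ?_⟩
    intro s hs
    have hrecn := recN hk hrec (b := Q*(k+1)+s+1)
    rw [show Q*(k+1)+s+1+k+1 = (Q+1)*(k+1)+s+1 from by ring,
        show Q*(k+1)+s+1+1 = Q*(k+1)+(s+1)+1 from by ring] at hrecn
    constructor
    · intro hlt
      have hz0 : F (1 - ((Q*(k+1)+s+1:ℕ):ℤ)) = 0 := (IHB s hs).1 (by omega)
      have hz1 : F (1 - ((Q*(k+1)+(s+1)+1:ℕ):ℤ)) = 0 := (IHB (s+1) (by omega)).1 (by omega)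
      rw [hrecn, hz0, hz1]; ring
    · intro hge
      by_cases hsk : s + 1 = k
      · -- top of block: uses hA and IHB s
        obtain ⟨W₁, h1⟩ := hA
        obtain ⟨W₂', h0'⟩ := (IHB s hs).2 (by omega)
        rw [show k-(s+1) = 0 from by omega, show Q+s+1-k = Q from by omega,
            Nat.choose_self, Nat.cast_one, pow_zero, one_mul] at h0'
        rw [show Q*(k+1)+(s+1)+1 = (Q+1)*(k+1) from by rw [hsk]; ring] at hrecn
        refine ⟨(-1)^(Q+1)*X^(Q+1) + (X^k+1)*W₁ - X*W₂', ?_⟩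
        rw [hrecn, h1, h0',
            show k-(s+1) = 0 from by omega, show (Q+1)+s+1-k = Q+1 from by omega,
            Nat.choose_self, Nat.cast_one, pow_zero, one_mul]
        ring
      · have hs2 : s + 2 ≤ k := by omega
        obtain ⟨E, hEe⟩ : ∃ E, k = s+2+E := ⟨k-(s+2), by omega⟩
        by_cases hQ : k = Q+s+2
        · -- boundary j' = 0
          obtain ⟨W₁, h1⟩ := (IHB (s+1) hs2).2 (by omega)
          have hz0 : F (1 - ((Q*(k+1)+s+1:ℕ):ℤ)) = 0 := (IHB s hs).1 (by omega)
          rw [show Q+(s+1)+1-k = 0 from by omega, Nat.choose_zero_right, Nat.cast_one,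
              show k-(s+1+1) = E from by omega] at h1
          refine ⟨W₁, ?_⟩
          rw [hrecn, h1, hz0,
              show (Q+1)+s+1-k = 0 from by omega, Nat.choose_zero_right, Nat.cast_one,
              show k-(s+1) = E+1 from by omega]
          ring
        · -- main case j' = J+1
          obtain ⟨J, hJe⟩ : ∃ J, Q+s+1 = k+J := ⟨Q+s+1-k, by omega⟩
          obtain ⟨W₁, h1⟩ := (IHB (s+1) hs2).2 (by omega)
          obtain ⟨W₂', h0'⟩ := (IHB s hs).2 (by omega)
          rw [show Q+(s+1)+1-k = J+1 from by omega, show k-(s+1+1) = E from by omega] at h1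
          rw [show Q+s+1-k = J from by omega, show k-(s+1) = E+1 from by omega] at h0'
          refine ⟨W₁ - X*W₂', ?_⟩
          rw [hrecn, h1, h0',
              show (Q+1)+s+1-k = J+1 from by omega, show k-(s+1) = E+1 from by omega,
              Nat.choose_succ_succ]
          push_cast
          ring


end

end FibPolyMultAux

open FibPolyMultAux in
/-- If `F n` is not the zero polynomial, then `(x^k + 1)^ρ` divides `F n`
while `(x^k + 1)^(ρ+1)` does not, where `ρ = ρ_{n,k}`. -/
theorem fib_poly_xk_plus_one_multiplicity (k : ℕ) (hk : 2 ≤ k)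
    (F : ℤ → Polynomial ℤ)
    (hrec : ∀ n : ℤ, F n = ∑ i ∈ Finset.range k, X ^ (k - 1 - i) * F (n - 1 - (i : ℤ)))
    (hF1 : F 1 = 1)
    (hF0 : ∀ m : ℕ, m ≤ k - 2 → F (-(m : ℤ)) = 0)
    (n : ℤ) (ρ : ℕ)
    (hρ : (ρ : ℤ) = if 0 < n then ((n - 2) % ((k : ℤ) + 1)) % (k : ℤ)
                    else (((k : ℤ) * (-n) - 2) % ((k : ℤ) + 1)) % (k : ℤ))
    (hne : F n ≠ 0) :
    (X ^ k + 1) ^ ρ ∣ F n ∧ ¬ (X ^ k + 1) ^ (ρ + 1) ∣ F n := by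
  by_cases hn : 0 < n
  · rw [if_pos hn] at hρ
    obtain ⟨a, ha⟩ : ∃ a : ℕ, n = (a:ℤ) + 1 := ⟨(n-1).toNat, by omega⟩
    subst ha
    obtain ⟨q, r, hrlt, hdm⟩ : ∃ q r, r < k+1 ∧ a = q*(k+1)+r :=
      ⟨a/(k+1), a%(k+1), Nat.mod_lt _ (by omega),
        by rw [mul_comm]; exact (Nat.div_add_mod a (k+1)).symm⟩
    subst hdm
    rcases r with _ | s
    · -- r = 0
      have e1 : (k:ℤ) % ((k:ℤ)+1) = (k:ℤ) := Int.emod_eq_of_lt (by positivity) (by omega)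
      have hρ0 : ρ = 0 := by
        rw [show ((q*(k+1)+0:ℕ):ℤ)+1-2 = (k:ℤ) + ((k:ℤ)+1)*((q:ℤ)-1) from by push_cast; ring,
            Int.add_mul_emod_self_left, e1, Int.emod_self] at hρ
        exact_mod_cast hρ
      obtain ⟨W, hW⟩ := (posMain hk hrec hF1 hF0 q).1
      rw [show q*(k+1)+0 = q*(k+1) from by omega, hρ0]
      refine extract hk _ (q*(k+1)) 0 1 (q*k) one_ne_zero ((-1)^q) W
        (neg_one_pow_eq_or _ q) ?_
      rw [hW, pow_zero, Nat.cast_one]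
      ring
    · -- r = s+1
      have hsk : s + 1 ≤ k := by omega
      have e1 : (s:ℤ) % ((k:ℤ)+1) = (s:ℤ) := Int.emod_eq_of_lt (by positivity) (by omega)
      have e2 : (s:ℤ) % (k:ℤ) = (s:ℤ) := Int.emod_eq_of_lt (by positivity) (by omega)
      have hρs : ρ = s := by
        rw [show ((q*(k+1)+(s+1):ℕ):ℤ)+1-2 = (s:ℤ) + ((k:ℤ)+1)*(q:ℤ) from by push_cast; ring,
            Int.add_mul_emod_self_left, e1, e2] at hρ
        exact_mod_cast hρ
      obtain ⟨W, hW⟩ := (posMain hk hrec hF1 hF0 q).2 s hsk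
      rw [show q*(k+1)+(s+1) = q*(k+1)+s+1 from by ring, hρs]
      have hε : (-(-1:Polynomial ℤ)^q) = 1 ∨ (-(-1:Polynomial ℤ)^q) = -1 := by
        rcases neg_one_pow_eq_or (Polynomial ℤ) q with h | h
        · right; rw [h]
        · left; rw [h]; ring
      refine extract hk _ (q*(k+1)+s+1) s ((q+s).choose q) (q*k)
        (Nat.choose_pos (Nat.le_add_right q s)).ne' (-(-1)^q) W hε hW
  · rw [if_neg hn] at hρ
    push_neg at hn
    obtain ⟨m, hm⟩ : ∃ m : ℕ, n = 1 - (m:ℤ) := ⟨(1-n).toNat, by omega⟩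
    subst hm
    obtain ⟨q, r, hrlt, hdm⟩ : ∃ q r, r < k+1 ∧ m = q*(k+1)+r :=
      ⟨m/(k+1), m%(k+1), Nat.mod_lt _ (by omega),
        by rw [mul_comm]; exact (Nat.div_add_mod m (k+1)).symm⟩
    subst hdm
    rcases r with _ | s
    · -- r = 0
      have e1 : (k:ℤ) % ((k:ℤ)+1) = (k:ℤ) := Int.emod_eq_of_lt (by positivity) (by omega)
      have hρ0 : ρ = 0 := by
        rw [show (k:ℤ) * -(1 - ((q*(k+1)+0:ℕ):ℤ)) - 2
              = (k:ℤ) + ((k:ℤ)+1)*((k:ℤ)*(q:ℤ)-2) from by push_cast; ring,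
            Int.add_mul_emod_self_left, e1, Int.emod_self] at hρ
        exact_mod_cast hρ
      obtain ⟨W, hW⟩ := (negMain hk hrec hF1 hF0 q).1
      rw [show q*(k+1)+0 = q*(k+1) from by omega, hρ0]
      refine extract hk _ 0 0 1 q one_ne_zero ((-1)^q) W (neg_one_pow_eq_or _ q) ?_
      rw [pow_zero, one_mul, hW, pow_zero, Nat.cast_one]
      ring
    · -- r = s+1
      have hsk : s + 1 ≤ k := by omega
      rw [show q*(k+1)+(s+1) = q*(k+1)+s+1 from by ring] at hne hρ ⊢
      by_cases hge : k ≤ q + s + 1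
      case neg =>
        exact absurd ((negMain hk hrec hF1 hF0 q).2 s hsk |>.1 (by omega)) hne
      have e1 : ((k-(s+1):ℕ):ℤ) % ((k:ℤ)+1) = ((k-(s+1):ℕ):ℤ) :=
        Int.emod_eq_of_lt (by positivity) (by omega)
      have e2 : ((k-(s+1):ℕ):ℤ) % (k:ℤ) = ((k-(s+1):ℕ):ℤ) :=
        Int.emod_eq_of_lt (by positivity) (by omega)
      have hρs : ρ = k - (s+1) := by
        rw [show (k:ℤ) * -(1 - ((q*(k+1)+s+1:ℕ):ℤ)) - 2
              = ((k-(s+1):ℕ):ℤ) + ((k:ℤ)+1)*((k:ℤ)*(q:ℤ)+(s:ℤ)-1) from ?_,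
            Int.add_mul_emod_self_left, e1, e2] at hρ
        · exact_mod_cast hρ
        · push_cast [Nat.cast_sub hsk]
          ring
      obtain ⟨W, hW⟩ := (negMain hk hrec hF1 hF0 q).2 s hsk |>.2 hge
      rw [hρs]
      refine extract hk _ 0 (k-(s+1)) (q.choose (q+s+1-k)) (q+s+1-k)
        (Nat.choose_pos (by omega)).ne' ((-1)^(q+s+1-k)) W (neg_one_pow_eq_or _ _) ?_
      rw [pow_zero, one_mul, hW]
end
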